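/- arXiv:1305.1676 — 5 statements merged into one kernel-verified Lean document; each statement's English description precedes it below -/
import Mathlib

section
/- For every fixed integer k ≥ 1, the number of labelled graphs on vertex set {1,…,n} that contain a dominating set of cardinality k is asymptotically (1+o(1)) (1−2^{−k})^{−k} · C(n,k) · (1−2^{−k})^{n} · 2^{n(n−1)/2} as n → ∞. -/
open Filter Topology

/-- Cop-win positions in the Cops and Robbers game with `k` cops, cops to move:
the least set of positions `(c, r)` such that `(c, r)` is a member whenever the cops
can move (each staying or moving along an edge) to some `c'` with `c' i = r` for some `i`,
or to some `c'` such that every robber move from `r` lands in a member position. -/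
inductive CopsWinPos {V : Type*} (G : SimpleGraph V) {k : ℕ} : (Fin k → V) → V → Prop
  | capture (c : Fin k → V) (r : V) (c' : Fin k → V)
      (hmove : ∀ i, c' i = c i ∨ G.Adj (c i) (c' i))
      (hc : ∃ i, c' i = r) : CopsWinPos G c r
  | advance (c : Fin k → V) (r : V) (c' : Fin k → V)
      (hmove : ∀ i, c' i = c i ∨ G.Adj (c i) (c' i))
      (h : ∀ r', r' = r ∨ G.Adj r r' → CopsWinPos G c' r') : CopsWinPos G c r

/-- `G` is `k`-cop-win: some initial cop placement wins against every robber placement. -/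
def IsKCopWin {V : Type*} (G : SimpleGraph V) (k : ℕ) : Prop :=
  ∃ c : Fin k → V, ∀ r : V, (∃ i, c i = r) ∨ CopsWinPos G c r

/-- `G` has a dominating set of cardinality `k`. -/
def HasDomSet {V : Type*} (G : SimpleGraph V) (k : ℕ) : Prop :=
  ∃ S : Finset V, S.card = k ∧ ∀ v ∉ S, ∃ u ∈ S, G.Adj u v

/-- `δ_k(G)`: minimum over `k`-element vertex sets `S` of the number of vertices
not in `S` and not adjacent to any vertex of `S`. -/
noncomputable def deltaK {V : Type*} [Fintype V] (G : SimpleGraph V) (k : ℕ) : ℕ :=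
  sInf {m | ∃ S : Finset V, S.card = k ∧ {w : V | ∀ u ∈ S, w ≠ u ∧ ¬ G.Adj u w}.ncard = m}

/-- `b` is `(k,q)`-dangerous: there is a `k`-set `A` avoiding `b` with `|N^c(A) ∩ N(b)| ≤ 2q`. -/
def Dangerous {V : Type*} [Fintype V] (G : SimpleGraph V) (k q : ℕ) (b : V) : Prop :=
  ∃ A : Finset V, A.card = k ∧ b ∉ A ∧
    {w : V | (∀ u ∈ A, w ≠ u ∧ ¬ G.Adj u w) ∧ G.Adj b w}.ncard ≤ 2 * q


namespace KDomAux
open Finset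

noncomputable def adjB {V : Type*} (G : SimpleGraph V) (u v : V) : Bool :=
  @decide _ (Classical.dec (G.Adj u v))

@[simp] lemma adjB_eq_true {V : Type*} (G : SimpleGraph V) (u v : V) :
    adjB G u v = true ↔ G.Adj u v := by
  simp [adjB]

variable {V : Type*} (p : V → Prop) [DecidablePred p]

def sub (G : SimpleGraph V) (q : V → Prop) : SimpleGraph {v // q v} where
  Adj a b := G.Adj ↑a ↑b
  symm := ⟨fun _ _ h => G.adj_symm h⟩
  loopless := ⟨fun a => G.irrefl⟩

noncomputable def decompFun (G₁ : SimpleGraph {v // p v}) (G₂ : SimpleGraph {v // ¬ p v})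
    (g : {v // ¬ p v} → {v // p v} → Bool) : SimpleGraph V where
  Adj a b :=
    if ha : p a then
      if hb : p b then G₁.Adj ⟨a, ha⟩ ⟨b, hb⟩ else g ⟨b, hb⟩ ⟨a, ha⟩ = true
    else
      if hb : p b then g ⟨a, ha⟩ ⟨b, hb⟩ = true else G₂.Adj ⟨a, ha⟩ ⟨b, hb⟩
  symm := by
    constructor
    intro a b h
    by_cases ha : p a <;> by_cases hb : p b <;> simp_all [G₁.adj_comm, G₂.adj_comm]
  loopless := by
    constructor
    intro a
    by_cases ha : p a <;> simp_all

noncomputable def graphDecomp : SimpleGraph V ≃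
    (SimpleGraph {v // p v} × SimpleGraph {v // ¬ p v} × ({v // ¬ p v} → {v // p v} → Bool)) where
  toFun G := ⟨sub G p, sub G (fun v => ¬ p v), fun v u => adjB G ↑u ↑v⟩
  invFun x := decompFun p x.1 x.2.1 x.2.2
  left_inv G := by
    ext a b
    by_cases ha : p a <;> by_cases hb : p b <;>
      simp [decompFun, sub, ha, hb, G.adj_comm]
  right_inv := by
    rintro ⟨G₁, G₂, g⟩
    refine Prod.ext ?_ (Prod.ext ?_ ?_)
    · ext a b; simp [decompFun, sub, a.2, b.2]
    · ext a b; simp [decompFun, sub, a.2, b.2]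
    · funext v u
      simp [decompFun, adjB, u.2, v.2]

/-- simple reshuffling equiv -/
def prodSub {A B C : Type*} (R : C → Prop) : {x : A × B × C // R x.2.2} ≃ A × B × {c // R c} where
  toFun x := ⟨x.1.1, x.1.2.1, x.1.2.2, x.2⟩
  invFun y := ⟨⟨y.1, y.2.1, y.2.2⟩, y.2.2.2⟩
  left_inv _ := rfl
  right_inv _ := rfl

variable [Finite V]

lemma event_card (Q : ({v // p v} → Bool) → Prop) :
    Nat.card {G : SimpleGraph V // ∀ v : {v // ¬ p v}, Q (fun u : {v // p v} => adjB G ↑u ↑v)} =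
      Nat.card (SimpleGraph {v // p v}) * Nat.card (SimpleGraph {v // ¬ p v}) *
        Nat.card {h : {v // p v} → Bool // Q h} ^ Nat.card {v // ¬ p v} := by
  classical
  cases nonempty_fintype V
  have e1 : {G : SimpleGraph V // ∀ v : {v // ¬ p v}, Q (fun u : {v // p v} => adjB G ↑u ↑v)} ≃
      {x : SimpleGraph {v // p v} × SimpleGraph {v // ¬ p v} ×
        ({v // ¬ p v} → {v // p v} → Bool) // ∀ v, Q (x.2.2 v)} :=
    Equiv.subtypeEquiv (graphDecomp p) (fun G => Iff.rfl)
  have e2 : {x : SimpleGraph {v // p v} × SimpleGraph {v // ¬ p v} ×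
        ({v // ¬ p v} → {v // p v} → Bool) // ∀ v, Q (x.2.2 v)} ≃
      SimpleGraph {v // p v} × SimpleGraph {v // ¬ p v} ×
        {g : {v // ¬ p v} → {v // p v} → Bool // ∀ v, Q (g v)} :=
    prodSub (C := {v // ¬ p v} → {v // p v} → Bool) (fun g => ∀ v, Q (g v))
  have e3 : {g : {v // ¬ p v} → {v // p v} → Bool // ∀ v, Q (g v)} ≃
      ({v // ¬ p v} → {h : {v // p v} → Bool // Q h}) :=
    Equiv.subtypePiEquivPi (p := fun _ h => Q h)
  rw [Nat.card_congr ((e1.trans e2).trans ((Equiv.refl _).prodCongr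
    ((Equiv.refl _).prodCongr e3))), Nat.card_prod, Nat.card_prod, Nat.card_pi]
  simp [Finset.prod_const, Nat.card_eq_fintype_card, mul_assoc]

lemma total_card :
    Nat.card (SimpleGraph V) =
      Nat.card (SimpleGraph {v // p v}) * Nat.card (SimpleGraph {v // ¬ p v}) *
        (2 ^ Nat.card {v // p v}) ^ Nat.card {v // ¬ p v} := by
  classical
  cases nonempty_fintype V
  rw [Nat.card_congr (graphDecomp p), Nat.card_prod, Nat.card_prod, Nat.card_fun,
    Nat.card_fun]
  simp [mul_assoc]


def graphEquiv {V W : Type*} (e : V ≃ W) : SimpleGraph V ≃ SimpleGraph W where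
  toFun G := ⟨fun a b => G.Adj (e.symm a) (e.symm b), ⟨fun a b h => G.adj_symm h⟩,
    ⟨fun a h => G.irrefl h⟩⟩
  invFun G := ⟨fun a b => G.Adj (e a) (e b), ⟨fun a b h => G.adj_symm h⟩, ⟨fun a h => G.irrefl h⟩⟩
  left_inv G := by ext a b; simp
  right_inv G := by ext a b; simp

instance graphSubsingleton {W : Type*} [Subsingleton W] : Subsingleton (SimpleGraph W) :=
  ⟨fun G H => by
    ext a b
    have hab : a = b := Subsingleton.elim a b
    subst hab
    simp⟩

lemma card_graph_subsingleton {W : Type*} [Subsingleton W] : Nat.card (SimpleGraph W) = 1 :=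
  have : Nonempty (SimpleGraph W) := ⟨⊥⟩
  Nat.card_unique

lemma card_graphs_fin : ∀ n : ℕ, Nat.card (SimpleGraph (Fin n)) = 2 ^ n.choose 2 := by
  intro n
  induction n with
  | zero =>
    have : Subsingleton (SimpleGraph (Fin 0)) := graphSubsingleton
    simpa using card_graph_subsingleton (W := Fin 0)
  | succ n ih =>
    classical
    have h0 : Fintype.card {v : Fin (n+1) // ¬ v = 0} = n := by
      rw [Fintype.card_subtype_compl]
      simp
    have h1 : Nat.card {v : Fin (n+1) // v = 0} = 1 := by
      simp [Nat.card_eq_fintype_card]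
    have e : {v : Fin (n+1) // ¬ v = 0} ≃ Fin n := Fintype.equivFinOfCardEq h0
    have h2 : Nat.card {v : Fin (n+1) // ¬ v = 0} = n := by
      rw [Nat.card_eq_fintype_card, h0]
    have := total_card (V := Fin (n+1)) (p := fun v => v = 0)
    have hc : (n+1).choose 2 = n + n.choose 2 := by
      rw [Nat.choose_succ_succ, Nat.choose_one_right]
    rw [this, card_graph_subsingleton, h1, Nat.card_congr (graphEquiv e), ih, h2,
      pow_one, one_mul, ← pow_add, hc, Nat.add_comm]

def missEquiv {Z : Type*} (P : Z → Prop) [DecidablePred P] :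
    {h : Z → Bool // ∀ u, P u → h u = false} ≃ ({u // ¬ P u} → Bool) where
  toFun h i := h.1 i.1
  invFun g := ⟨fun i => if hp : P i then false else g ⟨i, hp⟩, fun i hi => dif_pos hi⟩
  left_inv h := Subtype.ext (funext fun i => by by_cases hp : P i <;> simp [hp, h.2 i])
  right_inv g := funext fun i => by simp [i.2]

lemma card_miss {Z : Type*} [Fintype Z] (P : Z → Prop) [DecidablePred P] :
    Nat.card {h : Z → Bool // ∀ u, P u → h u = false} = 2 ^ Fintype.card {u : Z // ¬ P u} := by
  classical
  rw [Nat.card_congr (missEquiv P), Nat.card_fun]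
  simp [Nat.card_eq_fintype_card]

lemma card_hit {Z : Type*} [Fintype Z] [DecidableEq Z] :
    Nat.card {h : Z → Bool // ∃ u, h u = true} = 2 ^ Fintype.card Z - 1 := by
  classical
  have h1 : Nat.card {h : Z → Bool // ¬ ∀ u, h u = false} = 2 ^ Fintype.card Z - 1 := by
    rw [Nat.card_eq_fintype_card, Fintype.card_subtype_compl]
    have hm : Fintype.card {h : Z → Bool // ∀ u, h u = false} = 1 := by
      rw [← Nat.card_eq_fintype_card]
      have := card_miss (Z := Z) (fun _ => True)
      simp only [forall_true_left] at this
      rw [this]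
      simp
    rw [hm]
    simp [Fintype.card_fun]
  rw [← h1]
  exact Nat.card_congr (Equiv.subtypeEquivRight (fun h => by simp))


lemma card_hit2_le {Z : Type*} [Fintype Z] [DecidableEq Z] (PS PT : Z → Prop)
    [DecidablePred PS] [DecidablePred PT] (hcov : ∀ z, PS z ∨ PT z) :
    Nat.card {h : Z → Bool // (∃ u, PS u ∧ h u = true) ∧ (∃ u, PT u ∧ h u = true)}
      + 2 ^ Fintype.card {u : Z // ¬ PS u} + 2 ^ Fintype.card {u : Z // ¬ PT u}
      ≤ 2 ^ Fintype.card Z + 1 := by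
  classical
  set Q : (Z → Bool) → Prop := fun h => (∃ u, PS u ∧ h u = true) ∧ (∃ u, PT u ∧ h u = true)
    with hQ
  have hcards : Nat.card {h : Z → Bool // Q h} = (univ.filter Q).card := by
    rw [Nat.card_eq_fintype_card, Fintype.card_subtype]
  set F1 : Finset (Z → Bool) := univ.filter (fun h => ∀ u, PS u → h u = false) with hF1
  set F2 : Finset (Z → Bool) := univ.filter (fun h => ∀ u, PT u → h u = false) with hF2
  have hneg : univ.filter (fun h => ¬ Q h) = F1 ∪ F2 := by
    ext h
    simp only [hQ, hF1, hF2, Finset.mem_filter, Finset.mem_union, Finset.mem_univ, true_and,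
      not_and_or, not_exists, not_and, Bool.not_eq_true]
    constructor
    · rintro (h1 | h2)
      · exact Or.inl fun u hu => (h1 u).resolve_left (not_not_intro hu)
      · exact Or.inr fun u hu => (h2 u).resolve_left (not_not_intro hu)
    · rintro (h1 | h2)
      · exact Or.inl fun u => or_iff_not_imp_left.2 fun hu => h1 u (not_not.1 hu)
      · exact Or.inr fun u => or_iff_not_imp_left.2 fun hu => h2 u (not_not.1 hu)
  have hsplit : (univ.filter Q).card + (univ.filter (fun h => ¬ Q h)).card
      = 2 ^ Fintype.card Z := by
    rw [Finset.card_filter_add_card_filter_not]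
    simp [Fintype.card_fun]
  have hF1card : F1.card = 2 ^ Fintype.card {u : Z // ¬ PS u} := by
    rw [hF1, ← Fintype.card_subtype, ← Nat.card_eq_fintype_card]
    exact card_miss PS
  have hF2card : F2.card = 2 ^ Fintype.card {u : Z // ¬ PT u} := by
    rw [hF2, ← Fintype.card_subtype, ← Nat.card_eq_fintype_card]
    exact card_miss PT
  have hinter : (F1 ∩ F2).card ≤ 1 := by
    apply Finset.card_le_one.2
    intro h1 hh1 h2 hh2
    simp only [hF1, hF2, Finset.mem_inter, Finset.mem_filter, Finset.mem_univ, true_and] at hh1 hh2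
    funext z
    rcases hcov z with hz | hz
    · rw [hh1.1 z hz, hh2.1 z hz]
    · rw [hh1.2 z hz, hh2.2 z hz]
  have hunion : F1.card + F2.card ≤ (F1 ∪ F2).card + 1 := by
    have := Finset.card_union_add_card_inter F1 F2
    omega
  rw [hcards, hF1card.symm, hF2card.symm]
  have := hsplit
  rw [hneg] at this
  omega

lemma card_subtype_mem {V : Type*} [Fintype V] [DecidableEq V] (U S : Finset V) (hsub : S ⊆ U) :
    Fintype.card {u : {v : V // v ∈ U} // (u : V) ∈ S} = S.card := by
  rw [← Fintype.card_coe S]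
  exact Fintype.card_congr
    { toFun := fun x => ⟨x.1.1, x.2⟩
      invFun := fun y => ⟨⟨y.1, hsub y.2⟩, y.2⟩
      left_inv := fun x => by ext; rfl
      right_inv := fun y => by ext; rfl }

lemma bonferroni {α β : Type*} [DecidableEq α] [DecidableEq β] (s : Finset α)
    (f : α → Finset β) :
    ∑ i ∈ s, (f i).card ≤ (s.biUnion f).card +
      ∑ i ∈ s, ∑ j ∈ s, (if i ≠ j then ((f i) ∩ (f j)).card else 0) := by
  induction s using Finset.induction_on with
  | empty => simp
  | @insert a s ha ih =>
    rw [Finset.sum_insert ha, Finset.biUnion_insert]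
    have hcap : (f a ∩ s.biUnion f).card ≤ ∑ j ∈ s, (f a ∩ f j).card := by
      have : f a ∩ s.biUnion f = s.biUnion (fun j => f a ∩ f j) := by
        ext x
        simp only [Finset.mem_inter, Finset.mem_biUnion]
        tauto
      rw [this]
      exact Finset.card_biUnion_le
    have hkey : (f a).card + (s.biUnion f).card
        ≤ (f a ∪ s.biUnion f).card + ∑ j ∈ s, (f a ∩ f j).card := by
      have := Finset.card_union_add_card_inter (f a) (s.biUnion f)
      omega
    have hpair : ∑ i ∈ insert a s, ∑ j ∈ insert a s, (if i ≠ j then ((f i) ∩ (f j)).card else 0)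
        ≥ (∑ i ∈ s, ∑ j ∈ s, (if i ≠ j then ((f i) ∩ (f j)).card else 0))
          + ∑ j ∈ s, (f a ∩ f j).card := by
      rw [Finset.sum_insert ha]
      have h1 : ∑ j ∈ insert a s, (if a ≠ j then ((f a) ∩ (f j)).card else 0)
          ≥ ∑ j ∈ s, (f a ∩ f j).card := by
        rw [Finset.sum_insert ha]
        have : ∑ j ∈ s, (if a ≠ j then ((f a) ∩ (f j)).card else 0)
            = ∑ j ∈ s, (f a ∩ f j).card := by
          apply Finset.sum_congr rfl
          intro j hj
          have : a ≠ j := fun h => ha (h ▸ hj)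
          simp [this]
        omega
      have h2 : ∑ i ∈ s, ∑ j ∈ insert a s, (if i ≠ j then ((f i) ∩ (f j)).card else 0)
          ≥ ∑ i ∈ s, ∑ j ∈ s, (if i ≠ j then ((f i) ∩ (f j)).card else 0) := by
        apply Finset.sum_le_sum
        intro i hi
        rw [Finset.sum_insert ha]
        omega
      omega
    calc (f a).card + ∑ i ∈ s, (f i).card
        ≤ (f a).card + ((s.biUnion f).card +
            ∑ i ∈ s, ∑ j ∈ s, (if i ≠ j then ((f i) ∩ (f j)).card else 0)) :=
          Nat.add_le_add_left ih _
      _ ≤ _ := by omega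


lemma cardA (n k : ℕ) (S : Finset (Fin n)) (hS : S.card = k) :
    Nat.card {G : SimpleGraph (Fin n) // ∀ v ∉ S, ∃ u ∈ S, G.Adj u v} * (2 ^ k) ^ (n - k)
      = 2 ^ n.choose 2 * (2 ^ k - 1) ^ (n - k) := by
  classical
  set p : Fin n → Prop := fun v => v ∈ S with hp
  have hub : Nat.card {v : Fin n // ¬ p v} = n - k := by
    rw [Nat.card_eq_fintype_card, Fintype.card_subtype_compl]
    simp [hp, hS]
  have hua : Nat.card {v : Fin n // p v} = k := by
    rw [Nat.card_eq_fintype_card]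
    simpa [hp] using hS
  have hiff : ∀ G : SimpleGraph (Fin n),
      (∀ v ∉ S, ∃ u ∈ S, G.Adj u v) ↔
      (∀ v : {v : Fin n // ¬ p v},
        (fun h : {v : Fin n // p v} → Bool => ∃ u, h u = true)
          (fun u : {v : Fin n // p v} => adjB G ↑u ↑v)) := by
    intro G
    constructor
    · intro h v
      obtain ⟨u, hu, hadj⟩ := h v.1 v.2
      exact ⟨⟨u, hu⟩, by simpa using hadj⟩
    · intro h v hv
      obtain ⟨u, hu⟩ := h ⟨v, hv⟩
      exact ⟨u.1, u.2, by simpa using hu⟩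
  rw [Nat.card_congr (Equiv.subtypeEquivRight hiff)]
  rw [event_card (V := Fin n) p (fun h => ∃ u, h u = true)]
  have hcQ : Nat.card {h : {v : Fin n // p v} → Bool // ∃ u, h u = true} = 2 ^ k - 1 := by
    rw [card_hit, ← Nat.card_eq_fintype_card, hua]
  have htot := total_card (V := Fin n) (p := p)
  rw [card_graphs_fin] at htot
  rw [hcQ, htot, hua, hub]
  ring

lemma cardB_nat (n k : ℕ) (S T U : Finset (Fin n)) (hU : U = S ∪ T) :
    Nat.card {G : SimpleGraph (Fin n) //
        (∀ v ∉ S, ∃ u ∈ S, G.Adj u v) ∧ (∀ v ∉ T, ∃ u ∈ T, G.Adj u v)}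
        * (2 ^ U.card) ^ (n - U.card)
      ≤ 2 ^ n.choose 2 *
        (2 ^ U.card + 1 - (2 ^ (U.card - S.card) + 2 ^ (U.card - T.card))) ^ (n - U.card) := by
  classical
  subst hU
  set U : Finset (Fin n) := S ∪ T with hU
  set p : Fin n → Prop := fun v => v ∈ U with hp
  set Q2 : ({v : Fin n // p v} → Bool) → Prop :=
    fun h => (∃ u : {v : Fin n // p v}, ↑u ∈ S ∧ h u = true) ∧
      (∃ u : {v : Fin n // p v}, ↑u ∈ T ∧ h u = true) with hQ2
  -- inclusion into the relaxed event
  have hmono : Nat.card {G : SimpleGraph (Fin n) //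
        (∀ v ∉ S, ∃ u ∈ S, G.Adj u v) ∧ (∀ v ∉ T, ∃ u ∈ T, G.Adj u v)}
      ≤ Nat.card {G : SimpleGraph (Fin n) //
        ∀ v : {v : Fin n // ¬ p v}, Q2 (fun u : {v : Fin n // p v} => adjB G ↑u ↑v)} := by
    have himp : ∀ G : SimpleGraph (Fin n),
        ((∀ v ∉ S, ∃ u ∈ S, G.Adj u v) ∧ (∀ v ∉ T, ∃ u ∈ T, G.Adj u v)) →
        ∀ v : {v : Fin n // ¬ p v}, Q2 (fun u : {v : Fin n // p v} => adjB G ↑u ↑v) := by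
      rintro G ⟨hSdom, hTdom⟩ v
      have hvS : v.1 ∉ S := fun h => v.2 (Finset.mem_union_left _ h)
      have hvT : v.1 ∉ T := fun h => v.2 (Finset.mem_union_right _ h)
      obtain ⟨u1, hu1, ha1⟩ := hSdom v.1 hvS
      obtain ⟨u2, hu2, ha2⟩ := hTdom v.1 hvT
      exact ⟨⟨⟨u1, Finset.mem_union_left _ hu1⟩, hu1, by simpa using ha1⟩,
        ⟨⟨u2, Finset.mem_union_right _ hu2⟩, hu2, by simpa using ha2⟩⟩
    apply Nat.card_le_card_of_injective (fun x => ⟨x.1, himp x.1 x.2⟩)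
    intro x y hxy
    simp only [Subtype.mk.injEq] at hxy
    exact Subtype.ext hxy
  -- card of relaxed event
  have hevent := event_card (V := Fin n) p Q2
  have hub : Nat.card {v : Fin n // ¬ p v} = n - U.card := by
    rw [Nat.card_eq_fintype_card, Fintype.card_subtype_compl]
    simp [hp]
  have hua : Nat.card {v : Fin n // p v} = U.card := by
    rw [Nat.card_eq_fintype_card]
    simp [hp]
  -- bound on c2
  have hc2 : Nat.card {h : {v : Fin n // p v} → Bool // Q2 h}
      ≤ 2 ^ U.card + 1 - (2 ^ (U.card - S.card) + 2 ^ (U.card - T.card)) := by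
    have h1 : Fintype.card {u : {v : Fin n // p v} // ¬ (u : Fin n) ∈ S}
        = U.card - S.card := by
      rw [Fintype.card_subtype_compl, card_subtype_mem U S Finset.subset_union_left]
      congr 1
      rw [← Nat.card_eq_fintype_card]
      exact hua
    have h2 : Fintype.card {u : {v : Fin n // p v} // ¬ (u : Fin n) ∈ T}
        = U.card - T.card := by
      rw [Fintype.card_subtype_compl, card_subtype_mem U T Finset.subset_union_right]
      congr 1
      rw [← Nat.card_eq_fintype_card]
      exact hua
    have hcov : ∀ z : {v : Fin n // p v}, (z : Fin n) ∈ S ∨ (z : Fin n) ∈ T := by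
      intro z
      have hz2 : (z : Fin n) ∈ S ∪ T := z.2
      exact Finset.mem_union.mp hz2
    have := card_hit2_le (Z := {v : Fin n // p v})
      (fun u => (u : Fin n) ∈ S) (fun u => (u : Fin n) ∈ T) hcov
    rw [h1, h2] at this
    have hz : Fintype.card {v : Fin n // p v} = U.card := by
      rw [← Nat.card_eq_fintype_card]; exact hua
    rw [hz] at this
    have this' : Nat.card {h : {v : Fin n // p v} → Bool // Q2 h}
        + 2 ^ (U.card - S.card) + 2 ^ (U.card - T.card) ≤ 2 ^ U.card + 1 := this
    exact Nat.le_sub_of_add_le (by rw [← add_assoc]; exact this')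
  have htot := total_card (V := Fin n) (p := p)
  rw [card_graphs_fin] at htot
  calc Nat.card {G : SimpleGraph (Fin n) //
        (∀ v ∉ S, ∃ u ∈ S, G.Adj u v) ∧ (∀ v ∉ T, ∃ u ∈ T, G.Adj u v)}
        * (2 ^ U.card) ^ (n - U.card)
      ≤ Nat.card {G : SimpleGraph (Fin n) //
        ∀ v : {v : Fin n // ¬ p v}, Q2 (fun u : {v : Fin n // p v} => adjB G ↑u ↑v)}
        * (2 ^ U.card) ^ (n - U.card) := Nat.mul_le_mul_right _ hmono
    _ = Nat.card (SimpleGraph {v : Fin n // p v}) * Nat.card (SimpleGraph {v : Fin n // ¬ p v})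
        * Nat.card {h : {v : Fin n // p v} → Bool // Q2 h} ^ (n - U.card)
        * (2 ^ U.card) ^ (n - U.card) := by rw [hevent, hub]
    _ ≤ 2 ^ n.choose 2 *
        (2 ^ U.card + 1 - (2 ^ (U.card - S.card) + 2 ^ (U.card - T.card))) ^ (n - U.card) := by
      rw [htot, hua, hub]
      have := Nat.pow_le_pow_left hc2 (n - U.card)
      calc Nat.card (SimpleGraph {v : Fin n // p v}) * Nat.card (SimpleGraph {v // ¬ p v})
          * Nat.card {h : {v : Fin n // p v} → Bool // Q2 h} ^ (n - U.card)
          * (2 ^ U.card) ^ (n - U.card)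
          ≤ Nat.card (SimpleGraph {v : Fin n // p v}) * Nat.card (SimpleGraph {v // ¬ p v})
          * (2 ^ U.card + 1 - (2 ^ (U.card - S.card) + 2 ^ (U.card - T.card))) ^ (n - U.card)
          * (2 ^ U.card) ^ (n - U.card) := by
            exact Nat.mul_le_mul_right _ (Nat.mul_le_mul_left _ this)
        _ = _ := by ring

lemma two_le_pow_real (k : ℕ) (hk : 1 ≤ k) : (2:ℝ) ≤ 2 ^ k := by
  calc (2:ℝ) = 2 ^ 1 := (pow_one 2).symm
  _ ≤ 2 ^ k := pow_le_pow_right₀ (by norm_num) hk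


lemma cardA_real (k n : ℕ) (S : Finset (Fin n)) (hS : S.card = k) [DecidablePred
      (fun G : SimpleGraph (Fin n) => ∀ v ∉ S, ∃ u ∈ S, G.Adj u v)] :
    (((univ : Finset (SimpleGraph (Fin n))).filter
        (fun G : SimpleGraph (Fin n) => ∀ v ∉ S, ∃ u ∈ S, G.Adj u v)).card : ℝ)
      = (1 - ((2:ℝ)^k)⁻¹)^(n-k) * 2^(n.choose 2) := by
  classical
  have hc : ((univ : Finset (SimpleGraph (Fin n))).filter
      (fun G : SimpleGraph (Fin n) => ∀ v ∉ S, ∃ u ∈ S, G.Adj u v)).card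
      = Nat.card {G : SimpleGraph (Fin n) // ∀ v ∉ S, ∃ u ∈ S, G.Adj u v} := by
    rw [Nat.card_eq_fintype_card, Fintype.card_subtype]
  have h := cardA n k S hS
  have h2kpos : (0:ℝ) < 2 ^ k := by positivity
  have hcast : ((2 ^ k - 1 : ℕ) : ℝ) = 2 ^ k - 1 := by
    rw [Nat.cast_sub Nat.one_le_two_pow]
    push_cast
    ring
  have hreal : (((univ : Finset (SimpleGraph (Fin n))).filter
      (fun G : SimpleGraph (Fin n) => ∀ v ∉ S, ∃ u ∈ S, G.Adj u v)).card : ℝ)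
      * ((2:ℝ) ^ k) ^ (n - k) = 2 ^ n.choose 2 * ((2:ℝ) ^ k - 1) ^ (n - k) := by
    rw [hc]
    have h2 := congrArg (fun m : ℕ => (m : ℝ)) h
    simp only [Nat.cast_mul, Nat.cast_pow, Nat.cast_ofNat] at h2
    rw [hcast] at h2
    push_cast at h2 ⊢
    exact h2
  have hone : ((1:ℝ) - ((2:ℝ)^k)⁻¹) * 2^k = 2^k - 1 := by
    field_simp
  have hfactor : ((1:ℝ) - ((2:ℝ)^k)⁻¹) ^ (n-k) * 2^(n.choose 2) * ((2:ℝ) ^ k) ^ (n - k)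
      = 2 ^ n.choose 2 * ((2:ℝ) ^ k - 1) ^ (n - k) := by
    rw [mul_right_comm, ← mul_pow, hone]
    ring
  apply mul_right_cancel₀ (b := ((2:ℝ) ^ k) ^ (n - k)) (by positivity)
  rw [hreal, hfactor]

lemma cardPair_real (k n : ℕ) (hk : 1 ≤ k) (S T : Finset (Fin n)) (hS : S.card = k)
    (hT : T.card = k) (hST : S ≠ T) [DecidableEq (SimpleGraph (Fin n))]
    [DecidablePred (fun G : SimpleGraph (Fin n) => ∀ v ∉ S, ∃ u ∈ S, G.Adj u v)]
    [DecidablePred (fun G : SimpleGraph (Fin n) => ∀ v ∉ T, ∃ u ∈ T, G.Adj u v)] :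
    ((((univ : Finset (SimpleGraph (Fin n))).filter
        (fun G : SimpleGraph (Fin n) => ∀ v ∉ S, ∃ u ∈ S, G.Adj u v)) ∩
      ((univ : Finset (SimpleGraph (Fin n))).filter
        (fun G : SimpleGraph (Fin n) => ∀ v ∉ T, ∃ u ∈ T, G.Adj u v))).card : ℝ)
      ≤ (1 - 3/2 * ((2:ℝ)^k)⁻¹)^(n - 2*k) * 2^(n.choose 2) := by
  classical
  set U : Finset (Fin n) := S ∪ T with hU
  -- m bounds
  have hSU : S ⊆ U := Finset.subset_union_left
  have hTS : ¬ T ⊆ S := by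
    intro h
    exact hST (Finset.eq_of_subset_of_card_le h (by rw [hS, hT])).symm
  obtain ⟨t, htT, htS⟩ := Finset.not_subset.1 hTS
  have hkm : k + 1 ≤ U.card := by
    have hss : S ⊂ U := (Finset.ssubset_iff_of_subset hSU).2
      ⟨t, Finset.mem_union_right _ htT, htS⟩
    have := Finset.card_lt_card hss
    omega
  have hm2k : U.card ≤ 2 * k := by
    have h1 := Finset.card_union_le S T
    rw [← hU] at h1
    omega
  have hkm' : k ≤ U.card := by omega
  set m : ℕ := U.card with hm
  -- the intersection as a Nat.card
  have hc : (((univ : Finset (SimpleGraph (Fin n))).filter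
        (fun G : SimpleGraph (Fin n) => ∀ v ∉ S, ∃ u ∈ S, G.Adj u v)) ∩
      ((univ : Finset (SimpleGraph (Fin n))).filter
        (fun G : SimpleGraph (Fin n) => ∀ v ∉ T, ∃ u ∈ T, G.Adj u v))).card
      = Nat.card {G : SimpleGraph (Fin n) //
          (∀ v ∉ S, ∃ u ∈ S, G.Adj u v) ∧ (∀ v ∉ T, ∃ u ∈ T, G.Adj u v)} := by
    rw [Nat.card_eq_fintype_card, Fintype.card_subtype, Finset.filter_and]
  have hnat := cardB_nat n k S T U rfl
  rw [← hm, hS, hT] at hnat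
  -- cast to ℝ
  have hsub : 2 ^ (m - k) + 2 ^ (m - k) ≤ 2 ^ m + 1 := by
    have h1 : m - k + 1 ≤ m := by omega
    have h2 : 2 ^ (m - k) + 2 ^ (m - k) = 2 ^ (m - k + 1) := by ring
    rw [h2]
    have := Nat.pow_le_pow_right (show 1 ≤ 2 by norm_num) h1
    omega
  have h2kpos : (0:ℝ) < 2 ^ k := by positivity
  have h2mpos : (0:ℝ) < 2 ^ m := by positivity
  have hxreal : ((((univ : Finset (SimpleGraph (Fin n))).filter
        (fun G : SimpleGraph (Fin n) => ∀ v ∉ S, ∃ u ∈ S, G.Adj u v)) ∩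
      ((univ : Finset (SimpleGraph (Fin n))).filter
        (fun G : SimpleGraph (Fin n) => ∀ v ∉ T, ∃ u ∈ T, G.Adj u v))).card : ℝ)
        * ((2:ℝ) ^ m) ^ (n - m)
      ≤ 2 ^ n.choose 2 * ((2:ℝ)^m + 1 - ((2:ℝ)^(m-k) + (2:ℝ)^(m-k))) ^ (n - m) := by
    rw [hc]
    have hle := (Nat.cast_le (α := ℝ)).2 hnat
    push_cast [Nat.cast_sub hsub] at hle ⊢
    exact hle
  -- per-vertex bound
  have hq0 : (0:ℝ) ≤ 1 - 3/2 * ((2:ℝ)^k)⁻¹ := by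
    have h2 := two_le_pow_real k hk
    have : ((2:ℝ)^k)⁻¹ ≤ 1/2 := by
      rw [inv_le_comm₀ h2kpos (by norm_num)]
      simpa using h2
    linarith
  have hq1 : (1:ℝ) - 3/2 * ((2:ℝ)^k)⁻¹ ≤ 1 := by
    have : (0:ℝ) ≤ ((2:ℝ)^k)⁻¹ := by positivity
    linarith
  have hpv : (2:ℝ)^m + 1 - ((2:ℝ)^(m-k) + (2:ℝ)^(m-k))
      ≤ (1 - 3/2 * ((2:ℝ)^k)⁻¹) * 2^m := by
    have hmk : (2:ℝ) ^ (m - k) = 2 ^ m / 2 ^ k := pow_sub₀ 2 (by norm_num) hkm'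
    have h2m2k : 2 * (2:ℝ)^k ≤ 2^m := by
      have h3 : (2:ℝ) ^ (k+1) ≤ 2 ^ m := pow_le_pow_right₀ (by norm_num) hkm
      calc 2 * (2:ℝ)^k = 2^(k+1) := by ring
      _ ≤ 2^m := h3
    rw [hmk]
    have hexp : (2:ℝ)^m / 2^k = 2^m * ((2:ℝ)^k)⁻¹ := by ring
    rw [hexp]
    nlinarith [mul_le_mul_of_nonneg_right h2m2k (inv_pos.mpr h2kpos).le,
      mul_inv_cancel₀ (ne_of_gt h2kpos)]
  -- conclude
  have hnonneg : (0:ℝ) ≤ (2:ℝ)^m + 1 - ((2:ℝ)^(m-k) + (2:ℝ)^(m-k)) := by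
    have hle := (Nat.cast_le (α := ℝ)).2 hsub
    push_cast at hle
    linarith
  have hstep : ((((univ : Finset (SimpleGraph (Fin n))).filter
        (fun G : SimpleGraph (Fin n) => ∀ v ∉ S, ∃ u ∈ S, G.Adj u v)) ∩
      ((univ : Finset (SimpleGraph (Fin n))).filter
        (fun G : SimpleGraph (Fin n) => ∀ v ∉ T, ∃ u ∈ T, G.Adj u v))).card : ℝ)
        * ((2:ℝ) ^ m) ^ (n - m)
      ≤ 2 ^ n.choose 2 * (1 - 3/2 * ((2:ℝ)^k)⁻¹) ^ (n-m) * ((2:ℝ)^m) ^ (n-m) := by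
    calc _ ≤ 2 ^ n.choose 2 * ((2:ℝ)^m + 1 - ((2:ℝ)^(m-k) + (2:ℝ)^(m-k))) ^ (n - m) := hxreal
      _ ≤ 2 ^ n.choose 2 * ((1 - 3/2 * ((2:ℝ)^k)⁻¹) * 2^m) ^ (n-m) := by
          apply mul_le_mul_of_nonneg_left _ (by positivity)
          exact pow_le_pow_left₀ hnonneg hpv _
      _ = 2 ^ n.choose 2 * (1 - 3/2 * ((2:ℝ)^k)⁻¹) ^ (n-m) * ((2:ℝ)^m) ^ (n-m) := by
          rw [mul_pow]; ring
  have hx2 : ((((univ : Finset (SimpleGraph (Fin n))).filter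
        (fun G : SimpleGraph (Fin n) => ∀ v ∉ S, ∃ u ∈ S, G.Adj u v)) ∩
      ((univ : Finset (SimpleGraph (Fin n))).filter
        (fun G : SimpleGraph (Fin n) => ∀ v ∉ T, ∃ u ∈ T, G.Adj u v))).card : ℝ)
      ≤ 2 ^ n.choose 2 * (1 - 3/2 * ((2:ℝ)^k)⁻¹) ^ (n-m) :=
    le_of_mul_le_mul_right hstep (by positivity)
  calc _ ≤ 2 ^ n.choose 2 * (1 - 3/2 * ((2:ℝ)^k)⁻¹) ^ (n-m) := hx2
    _ ≤ 2 ^ n.choose 2 * (1 - 3/2 * ((2:ℝ)^k)⁻¹) ^ (n-2*k) := by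
        apply mul_le_mul_of_nonneg_left _ (by positivity)
        exact pow_le_pow_of_le_one hq0 hq1 (Nat.sub_le_sub_left hm2k n)
    _ = (1 - 3/2 * ((2:ℝ)^k)⁻¹)^(n - 2*k) * 2^(n.choose 2) := by ring


lemma upper (k n : ℕ) :
    (Nat.card {G : SimpleGraph (Fin n) // HasDomSet G k} : ℝ)
      ≤ (n.choose k : ℝ) * ((1 - ((2:ℝ)^k)⁻¹)^(n-k) * 2^(n.choose 2)) := by
  classical
  set Ps : Finset (Finset (Fin n)) := Finset.powersetCard k univ with hPsdef
  set A : Finset (Fin n) → Finset (SimpleGraph (Fin n)) :=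
    fun S => univ.filter (fun G => ∀ v ∉ S, ∃ u ∈ S, G.Adj u v) with hA
  have hD : Nat.card {G : SimpleGraph (Fin n) // HasDomSet G k} = (Ps.biUnion A).card := by
    rw [Nat.card_eq_fintype_card, Fintype.card_subtype]
    congr 1
    ext G
    simp only [hA, hPsdef, Finset.mem_filter, Finset.mem_biUnion, Finset.mem_univ, true_and,
      Finset.mem_powersetCard_univ]
    constructor
    · rintro ⟨S, h1, h2⟩; exact ⟨S, h1, h2⟩
    · rintro ⟨S, h1, h2⟩; exact ⟨S, h1, h2⟩
  have hcardPs : Ps.card = n.choose k := by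
    rw [hPsdef, Finset.card_powersetCard]; simp
  rw [hD]
  calc ((Ps.biUnion A).card : ℝ) ≤ ((∑ S ∈ Ps, (A S).card : ℕ) : ℝ) := by
        exact_mod_cast Finset.card_biUnion_le
    _ = ∑ S ∈ Ps, ((A S).card : ℝ) := by push_cast; rfl
    _ = ∑ S ∈ Ps, ((1 - ((2:ℝ)^k)⁻¹)^(n-k) * 2^(n.choose 2)) := by
        apply Finset.sum_congr rfl
        intro S hS
        exact cardA_real k n S (Finset.mem_powersetCard_univ.1 hS)
    _ = (n.choose k : ℝ) * ((1 - ((2:ℝ)^k)⁻¹)^(n-k) * 2^(n.choose 2)) := by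
        rw [Finset.sum_const, hcardPs, nsmul_eq_mul]

lemma lower (k n : ℕ) (hk : 1 ≤ k) :
    (n.choose k : ℝ) * ((1 - ((2:ℝ)^k)⁻¹)^(n-k) * 2^(n.choose 2))
      ≤ (Nat.card {G : SimpleGraph (Fin n) // HasDomSet G k} : ℝ)
        + (n.choose k : ℝ)^2 * ((1 - 3/2*((2:ℝ)^k)⁻¹)^(n-2*k) * 2^(n.choose 2)) := by
  classical
  set Ps : Finset (Finset (Fin n)) := Finset.powersetCard k univ with hPsdef
  set A : Finset (Fin n) → Finset (SimpleGraph (Fin n)) :=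
    fun S => univ.filter (fun G => ∀ v ∉ S, ∃ u ∈ S, G.Adj u v) with hA
  have hD : Nat.card {G : SimpleGraph (Fin n) // HasDomSet G k} = (Ps.biUnion A).card := by
    rw [Nat.card_eq_fintype_card, Fintype.card_subtype]
    congr 1
    ext G
    simp only [hA, hPsdef, Finset.mem_filter, Finset.mem_biUnion, Finset.mem_univ, true_and,
      Finset.mem_powersetCard_univ]
    constructor
    · rintro ⟨S, h1, h2⟩; exact ⟨S, h1, h2⟩
    · rintro ⟨S, h1, h2⟩; exact ⟨S, h1, h2⟩
  have hcardPs : Ps.card = n.choose k := by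
    rw [hPsdef, Finset.card_powersetCard]; simp
  have hbon := bonferroni Ps A
  have hcast := (Nat.cast_le (α := ℝ)).2 hbon
  push_cast at hcast
  have hsum : ∑ S ∈ Ps, ((A S).card : ℝ)
      = (n.choose k : ℝ) * ((1 - ((2:ℝ)^k)⁻¹)^(n-k) * 2^(n.choose 2)) := by
    rw [Finset.sum_congr rfl (fun S hS => cardA_real k n S (Finset.mem_powersetCard_univ.1 hS)),
      Finset.sum_const, hcardPs, nsmul_eq_mul]
  have hpair : ∑ S ∈ Ps, ∑ T ∈ Ps, (if S ≠ T then (((A S) ∩ (A T)).card : ℝ) else 0)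
      ≤ (n.choose k : ℝ)^2 * ((1 - 3/2*((2:ℝ)^k)⁻¹)^(n-2*k) * 2^(n.choose 2)) := by
    have hterm : ∀ S ∈ Ps, ∀ T ∈ Ps, (if S ≠ T then (((A S) ∩ (A T)).card : ℝ) else 0)
        ≤ (1 - 3/2*((2:ℝ)^k)⁻¹)^(n-2*k) * 2^(n.choose 2) := by
      intro S hS T hT
      by_cases hST : S = T
      · simp only [hST, ne_eq, not_true_eq_false, if_false]
        have h2 := two_le_pow_real k hk
        have hq0 : (0:ℝ) ≤ 1 - 3/2 * ((2:ℝ)^k)⁻¹ := by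
          have : ((2:ℝ)^k)⁻¹ ≤ 1/2 := by
            rw [inv_le_comm₀ (by positivity) (by norm_num)]
            simpa using h2
          linarith
        positivity
      · simp only [ne_eq, hST, not_false_eq_true, if_true]
        exact cardPair_real k n hk S T (Finset.mem_powersetCard_univ.1 hS)
          (Finset.mem_powersetCard_univ.1 hT) hST
    calc ∑ S ∈ Ps, ∑ T ∈ Ps, (if S ≠ T then (((A S) ∩ (A T)).card : ℝ) else 0)
        ≤ ∑ S ∈ Ps, ∑ T ∈ Ps, ((1 - 3/2*((2:ℝ)^k)⁻¹)^(n-2*k) * 2^(n.choose 2)) := by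
          apply Finset.sum_le_sum
          intro S hS
          exact Finset.sum_le_sum (hterm S hS)
      _ = (n.choose k : ℝ)^2 * ((1 - 3/2*((2:ℝ)^k)⁻¹)^(n-2*k) * 2^(n.choose 2)) := by
          rw [Finset.sum_const, Finset.sum_const, hcardPs, nsmul_eq_mul, nsmul_eq_mul]
          ring
  rw [← hsum, hD]
  calc ∑ S ∈ Ps, ((A S).card : ℝ)
      ≤ ((Ps.biUnion A).card : ℝ)
        + ∑ S ∈ Ps, ∑ T ∈ Ps, (if S ≠ T then (((A S) ∩ (A T)).card : ℝ) else 0) := by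
        have heq : ∑ S ∈ Ps, ∑ T ∈ Ps, (if S ≠ T then (((A S) ∩ (A T)).card : ℝ) else 0)
            = ((∑ S ∈ Ps, ∑ T ∈ Ps, (if S ≠ T then ((A S) ∩ (A T)).card else 0) : ℕ) : ℝ) := by
          push_cast
          apply Finset.sum_congr rfl; intro S _
          apply Finset.sum_congr rfl; intro T _
          split <;> simp
        have h2 : ((∑ S ∈ Ps, (A S).card : ℕ) : ℝ) = ∑ S ∈ Ps, ((A S).card : ℝ) := by
          push_cast; rfl
        rw [← h2, heq]
        exact_mod_cast hbon
    _ ≤ _ := by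
        exact add_le_add le_rfl hpair


end KDomAux

/-- The number of labelled graphs on `{1,…,n}` containing a dominating set of cardinality `k`
is `(1+o(1)) (1-2^{-k})^{-k} C(n,k) (1-2^{-k})^n 2^{n(n-1)/2}`. -/
theorem kDom_count_asymptotics (k : ℕ) (hk : 1 ≤ k) :
    Tendsto (fun n : ℕ =>
      (Nat.card {G : SimpleGraph (Fin n) // HasDomSet G k} : ℝ) /
        ((1 - 2 ^ (-(k : ℝ))) ^ (-(k : ℝ)) * (n.choose k : ℝ) *
          (1 - 2 ^ (-(k : ℝ))) ^ (n : ℝ) * 2 ^ (n * (n - 1) / 2)))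
      atTop (𝓝 1) := by
  classical
  have h2kpos : (0:ℝ) < 2 ^ k := by positivity
  have h2k2 : (2:ℝ) ≤ 2 ^ k := KDomAux.two_le_pow_real k hk
  have hinvle : ((2:ℝ)^k)⁻¹ ≤ 1/2 := by
    rw [inv_le_comm₀ h2kpos (by norm_num)]
    simpa using h2k2
  have hinvpos : (0:ℝ) < ((2:ℝ)^k)⁻¹ := by positivity
  set pR : ℝ := 1 - ((2:ℝ) ^ k)⁻¹ with hpR
  set qR : ℝ := 1 - 3/2 * ((2:ℝ) ^ k)⁻¹ with hqR
  have hp0 : 0 < pR := by rw [hpR]; linarith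
  have hp1 : pR ≤ 1 := by rw [hpR]; linarith
  have hq0 : 0 < qR := by rw [hqR]; linarith
  have hqp : qR < pR := by rw [hpR, hqR]; linarith
  have hrpow : (2:ℝ) ^ (-(k:ℝ)) = ((2:ℝ)^k)⁻¹ := by
    rw [Real.rpow_neg (by norm_num), Real.rpow_natCast]
  set r : ℝ := qR / pR with hr
  have hr0 : 0 ≤ r := le_of_lt (div_pos hq0 hp0)
  have hr1 : r < 1 := (div_lt_one hp0).2 hqp
  set Kc : ℝ := pR ^ k / qR ^ (2*k) with hKc
  have hKc0 : 0 < Kc := by positivity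
  have hlim0 : Tendsto (fun n : ℕ => (n:ℝ)^k * r^n) atTop (𝓝 0) :=
    tendsto_pow_const_mul_const_pow_of_lt_one k hr0 hr1
  have hlim : Tendsto (fun n : ℕ => 1 - ((n:ℝ)^k * r^n) * Kc) atTop (𝓝 1) := by
    have h := (hlim0.mul_const Kc).const_sub 1
    simpa using h
  -- denominator identification
  have hden : ∀ n : ℕ, k ≤ n →
      (1 - 2 ^ (-(k : ℝ))) ^ (-(k : ℝ)) * (n.choose k : ℝ) *
          (1 - 2 ^ (-(k : ℝ))) ^ (n : ℝ) * 2 ^ (n * (n - 1) / 2)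
        = (n.choose k : ℝ) * (pR^(n-k) * 2^(n.choose 2)) := by
    intro n hkn
    rw [hrpow, ← hpR, ← Nat.choose_two_right]
    have hab : pR ^ (-(k:ℝ)) * pR ^ (n:ℝ) = pR ^ (n - k) := by
      rw [← Real.rpow_add hp0]
      have hexp : -(k:ℝ) + (n:ℝ) = ((n - k : ℕ) : ℝ) := by
        push_cast [Nat.cast_sub hkn]
        ring
      rw [hexp, Real.rpow_natCast]
    calc pR ^ (-(k:ℝ)) * (n.choose k : ℝ) * pR ^ (n:ℝ) * 2 ^ (n.choose 2)
        = (n.choose k : ℝ) * ((pR ^ (-(k:ℝ)) * pR ^ (n:ℝ)) * 2 ^ (n.choose 2)) := by ring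
      _ = (n.choose k : ℝ) * (pR^(n-k) * 2^(n.choose 2)) := by rw [hab]
  apply tendsto_of_tendsto_of_tendsto_of_le_of_le' hlim tendsto_const_nhds
  · -- lower bound eventually
    filter_upwards [eventually_ge_atTop (2*k+1)] with n hn
    have hkn : k ≤ n := by omega
    have h2kn : 2*k ≤ n := by omega
    have hCpos : (0:ℝ) < (n.choose k : ℝ) := by
      exact_mod_cast Nat.choose_pos hkn
    rw [hden n hkn]
    set D : ℝ := (n.choose k : ℝ) * (pR^(n-k) * 2^(n.choose 2)) with hD
    have hDpos : 0 < D := by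
      rw [hD]; positivity
    have hlow :=KDomAux.lower k n hk
    set N : ℝ := (Nat.card {G : SimpleGraph (Fin n) // HasDomSet G k} : ℝ) with hN
    set PB : ℝ := (n.choose k : ℝ)^2 * (qR^(n-2*k) * 2^(n.choose 2)) with hPB
    have hlow' : D - PB ≤ N := by
      rw [hD, hPB]
      rw [hpR, hqR] at *
      linarith [hlow]
    have herr : PB / D = (n.choose k : ℝ) * (qR^(n-2*k) / pR^(n-k)) := by
      rw [hPB, hD]
      have hne1 : ((n.choose k : ℝ)) ≠ 0 := ne_of_gt hCpos
      have hne2 : pR^(n-k) ≠ 0 := by positivity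
      have hne3 : (2:ℝ)^(n.choose 2) ≠ 0 := by positivity
      field_simp
    have herr2 : (n.choose k : ℝ) * (qR^(n-2*k) / pR^(n-k)) ≤ (n:ℝ)^k * r^n * Kc := by
      have hC : (n.choose k : ℝ) ≤ (n:ℝ)^k := by
        exact_mod_cast Nat.choose_le_pow n k
      have hqq : qR^(n-2*k) / pR^(n-k) = r^n * Kc := by
        rw [pow_sub₀ qR (ne_of_gt hq0) h2kn, pow_sub₀ pR (ne_of_gt hp0) hkn, hr, div_pow, hKc]
        field_simp
      rw [hqq]
      have hpos : 0 ≤ r^n * Kc := by positivity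
      calc (n.choose k : ℝ) * (r^n * Kc) ≤ (n:ℝ)^k * (r^n * Kc) :=
            mul_le_mul_of_nonneg_right hC hpos
        _ = (n:ℝ)^k * r^n * Kc := by ring
    calc 1 - ((n:ℝ)^k * r^n) * Kc
        ≤ 1 - (n.choose k : ℝ) * (qR^(n-2*k) / pR^(n-k)) := by
          have := herr2
          linarith [herr2]
      _ = 1 - PB / D := by rw [herr]
      _ = (D - PB) / D := by field_simp
      _ ≤ N / D := (div_le_div_iff_of_pos_right hDpos).2 hlow'
  · -- upper bound eventually
    filter_upwards [eventually_ge_atTop (2*k+1)] with n hn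
    have hkn : k ≤ n := by omega
    rw [hden n hkn]
    have hCpos : (0:ℝ) < (n.choose k : ℝ) := by
      exact_mod_cast Nat.choose_pos hkn
    have hDpos : (0:ℝ) < (n.choose k : ℝ) * (pR^(n-k) * 2^(n.choose 2)) := by positivity
    rw [div_le_one hDpos]
    have hu :=KDomAux.upper k n
    rw [← hpR] at hu
    exact hu
end

section
/- For all integers n ≥ k ≥ 1, the number of labelled graphs on vertex set {1,…,n} that contain a dominating set of cardinality k is at most C(n,k) · (1−2^{−k})^{n−k} · 2^{n(n−1)/2}. -/
open Filter Topology

open Finset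

variable {n k : ℕ}

def CrossP (S : Finset (Fin n)) (p : Sym2 (Fin n)) : Prop :=
  (∃ a ∈ p, a ∈ S) ∧ (∃ b ∈ p, b ∉ S)

open Classical in
lemma dom_count (S : Finset (Fin n)) (hS : S.card = k) :
    Fintype.card {G : SimpleGraph (Fin n) // ∀ v ∉ S, ∃ u ∈ S, G.Adj u v}
      ≤ (2 ^ k - 1) ^ (n - k) * 2 ^ (n.choose 2 - k * (n - k)) := by
  classical
  have hinj : Fintype.card {G : SimpleGraph (Fin n) // ∀ v ∉ S, ∃ u ∈ S, G.Adj u v}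
      ≤ Fintype.card
        (({v : Fin n // v ∉ S} → {f : {u : Fin n // u ∈ S} → Bool // f ≠ fun _ => false})
          × ({p : Sym2 (Fin n) // ¬p.IsDiag ∧ ¬CrossP S p} → Bool)) := by
    apply Fintype.card_le_of_injective (fun G =>
      (fun v => ⟨fun u => decide (G.1.Adj u.1 v.1), by
          obtain ⟨u, hu, hadj⟩ := G.2 v.1 v.2
          intro h
          have := congrFun h ⟨u, hu⟩
          simp [hadj] at this⟩,
       fun p => decide (p.1 ∈ G.1.edgeSet)))
    rintro ⟨G, hG⟩ ⟨G', hG'⟩ h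
    simp only [Prod.mk.injEq] at h
    obtain ⟨h1, h2⟩ := h
    have key : ∀ u v : Fin n, u ∈ S → v ∉ S → (G.Adj u v ↔ G'.Adj u v) := by
      intro u v hu hv
      have := congrFun h1 ⟨v, hv⟩
      rw [Subtype.ext_iff] at this
      have := congrFun this ⟨u, hu⟩
      simpa using this
    have main : G = G' := by
      ext a b
      by_cases hab : a = b
      · subst hab; simp
      by_cases hc : CrossP S s(a, b)
      · obtain ⟨⟨x, hxp, hxS⟩, ⟨y, hyp, hyS⟩⟩ := hc
        rw [Sym2.mem_iff] at hxp hyp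
        rcases hxp with hxa | hxb <;> rcases hyp with hya | hyb
        · exact absurd (hya ▸ hxa ▸ hxS) (hya ▸ hyS)
        · exact key a b (hxa ▸ hxS) (hyb ▸ hyS)
        · rw [SimpleGraph.adj_comm, G'.adj_comm]
          exact key b a (hxb ▸ hxS) (hya ▸ hyS)
        · exact absurd (hyb ▸ hxb ▸ hxS) (hyb ▸ hyS)
      · have hd : ¬ (s(a, b) : Sym2 (Fin n)).IsDiag := by
          simp [Sym2.mk_isDiag_iff, hab]
        have := congrFun h2 ⟨s(a, b), hd, hc⟩
        simpa [SimpleGraph.mem_edgeSet] using this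
    simpa using main
  refine hinj.trans ?_
  have c1 : Fintype.card {v : Fin n // v ∉ S} = n - k := by
    simpa [hS] using Fintype.card_subtype_compl (fun v : Fin n => v ∈ S)
  have c2 : Fintype.card {f : {u : Fin n // u ∈ S} → Bool // f ≠ fun _ => false}
      = 2 ^ k - 1 := by
    have := Fintype.card_subtype_compl (fun f : {u : Fin n // u ∈ S} → Bool =>
      f = fun _ => false)
    rw [Fintype.card_subtype_eq] at this
    simpa [Fintype.card_fun, hS] using this
  have cM : Fintype.card {p : Sym2 (Fin n) // ¬p.IsDiag ∧ ¬CrossP S p}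
      ≤ n.choose 2 - k * (n - k) := by
    have hcross : k * (n - k) ≤ Fintype.card {p : Sym2 (Fin n) // ¬p.IsDiag ∧ CrossP S p} := by
      have := Fintype.card_le_of_injective
        (fun x : {u : Fin n // u ∈ S} × {v : Fin n // v ∉ S} =>
          (⟨s(x.1.1, x.2.1), by
            constructor
            · simp only [Sym2.mk_isDiag_iff]
              rintro h
              exact x.2.2 (h ▸ x.1.2)
            · exact ⟨⟨x.1.1, by simp, x.1.2⟩, ⟨x.2.1, by simp, x.2.2⟩⟩⟩ :
            {p : Sym2 (Fin n) // ¬p.IsDiag ∧ CrossP S p}))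
        (by
          rintro ⟨⟨u, hu⟩, ⟨v, hv⟩⟩ ⟨⟨u', hu'⟩, ⟨v', hv'⟩⟩ h
          simp only [Subtype.mk.injEq, Sym2.eq_iff] at h
          rcases h with ⟨rfl, rfl⟩ | ⟨rfl, rfl⟩
          · rfl
          · exact absurd hu hv')
      simpa [Fintype.card_prod, Fintype.card_subtype_compl, hS] using this
    have hnd : Fintype.card {p : Sym2 (Fin n) // ¬p.IsDiag} = n.choose 2 := by
      simpa using Sym2.card_subtype_not_diag (α := Fin n)
    have e1 := Fintype.card_congr
      (Equiv.subtypeSubtypeEquivSubtypeInter (fun p : Sym2 (Fin n) => ¬p.IsDiag) (CrossP S))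
    have e2 := Fintype.card_congr
      (Equiv.subtypeSubtypeEquivSubtypeInter (fun p : Sym2 (Fin n) => ¬p.IsDiag)
        (fun p => ¬CrossP S p))
    have e3 := Fintype.card_subtype_compl
      (fun q : {p : Sym2 (Fin n) // ¬p.IsDiag} => CrossP S q.1)
    have e4 := Fintype.card_subtype_le
      (fun q : {p : Sym2 (Fin n) // ¬p.IsDiag} => CrossP S q.1)
    omega
  rw [Fintype.card_prod, Fintype.card_fun, Fintype.card_fun, c1, c2, Fintype.card_bool]
  exact Nat.mul_le_mul_left _ (Nat.pow_le_pow_right (by norm_num) cM)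

/-- Upper bound: the number of labelled graphs on `{1,…,n}` containing a dominating set of
cardinality `k` is at most `C(n,k) (1-2^{-k})^{n-k} 2^{n(n-1)/2}`. -/
theorem kDom_count_upper (n k : ℕ) (hk : 1 ≤ k) (hkn : k ≤ n) :
    (Nat.card {G : SimpleGraph (Fin n) // HasDomSet G k} : ℝ) ≤
      (n.choose k : ℝ) * (1 - 2 ^ (-(k : ℝ))) ^ (n - k) * 2 ^ (n * (n - 1) / 2) := by
  classical
  have hCle : k * (n - k) ≤ n.choose 2 := by
    obtain ⟨m, rfl⟩ : ∃ m, n = k + m := ⟨n - k, by omega⟩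
    rw [Nat.choose_two_right]
    rcases m with _ | m
    · simp
    · have h2 : 2 * (k * (k + (m+1) - k)) ≤ (k + (m+1)) * (k + (m+1) - 1) := by
        have h3 : k + (m+1) - k = m+1 := by omega
        rw [h3]
        have h4 : k + (m+1) - 1 = k + m := by omega
        rw [h4]
        nlinarith
      omega
  have hnat : Nat.card {G : SimpleGraph (Fin n) // HasDomSet G k}
      ≤ n.choose k * ((2 ^ k - 1) ^ (n - k) * 2 ^ (n.choose 2 - k * (n - k))) := by
    rw [Nat.card_eq_fintype_card, Fintype.card_subtype]
    have hsub : (Finset.univ.filter (fun G : SimpleGraph (Fin n) => HasDomSet G k))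
        ⊆ (Finset.univ.powersetCard k).biUnion (fun S =>
            Finset.univ.filter (fun G : SimpleGraph (Fin n) => ∀ v ∉ S, ∃ u ∈ S, G.Adj u v)) := by
      intro G hG
      rw [Finset.mem_filter] at hG
      obtain ⟨S, hScard, hdom⟩ := hG.2
      exact Finset.mem_biUnion.2 ⟨S, Finset.mem_powersetCard_univ.2 hScard,
        Finset.mem_filter.2 ⟨Finset.mem_univ _, hdom⟩⟩
    calc (Finset.univ.filter (fun G : SimpleGraph (Fin n) => HasDomSet G k)).card
        ≤ _ := Finset.card_le_card hsub
      _ ≤ ∑ S ∈ Finset.univ.powersetCard k,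
            (Finset.univ.filter
              (fun G : SimpleGraph (Fin n) => ∀ v ∉ S, ∃ u ∈ S, G.Adj u v)).card :=
          Finset.card_biUnion_le
      _ ≤ ∑ _S ∈ Finset.univ.powersetCard k,
            ((2 ^ k - 1) ^ (n - k) * 2 ^ (n.choose 2 - k * (n - k))) := by
          apply Finset.sum_le_sum
          intro S hSmem
          rw [← Fintype.card_subtype]
          exact dom_count S (Finset.mem_powersetCard_univ.1 hSmem)
      _ = n.choose k * ((2 ^ k - 1) ^ (n - k) * 2 ^ (n.choose 2 - k * (n - k))) := by
          rw [Finset.sum_const, Finset.card_powersetCard, Finset.card_univ, Fintype.card_fin,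
            smul_eq_mul]
  have hcast := Nat.cast_le (α := ℝ) |>.2 hnat
  refine hcast.trans ?_
  push_cast
  have h2k : (1:ℕ) ≤ 2 ^ k := Nat.one_le_two_pow
  have hc1 : ((2 ^ k - 1 : ℕ) : ℝ) = 2 ^ k - 1 := by
    push_cast [h2k]; ring
  rw [hc1]
  have hrw : (1 - 2 ^ (-(k : ℝ))) = ((2:ℝ) ^ k - 1) / 2 ^ k := by
    rw [Real.rpow_neg (by norm_num), Real.rpow_natCast]
    field_simp
  rw [hrw, mul_assoc]
  apply mul_le_mul_of_nonneg_left _ (by positivity)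
  have hC : n * (n - 1) / 2 = k * (n - k) + (n.choose 2 - k * (n - k)) := by
    rw [← Nat.choose_two_right]; omega
  rw [div_pow, ← pow_mul, hC, pow_add]
  apply le_of_eq
  field_simp
end

section
/- Let n ≥ 2k ≥ 2 be integers and let S and T be two distinct k-element subsets of {1,…,n}. Then the number of labelled graphs on vertex set {1,…,n} in which both S and T are dominating sets is at most (1 − (3/2)·2^{−k})^{n−2k} · 2^{n(n−1)/2}. -/
open Filter Topology

lemma simpleGraph_card_le (V : Type*) [Fintype V] [DecidableEq V] :
    Nat.card (SimpleGraph V) ≤ 2 ^ (Fintype.card V).choose 2 := by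
  classical
  have hinj : Function.Injective (fun G : SimpleGraph V =>
      (⟨G.edgeFinset, Finset.mem_powerset.2 (SimpleGraph.edgeFinset_mono le_top)⟩ :
        {s : Finset (Sym2 V) // s ∈ (⊤ : SimpleGraph V).edgeFinset.powerset})) := by
    intro G₁ G₂ h
    simpa [Subtype.ext_iff, SimpleGraph.edgeFinset_inj] using h
  calc Nat.card (SimpleGraph V)
      ≤ Nat.card {s : Finset (Sym2 V) // s ∈ (⊤ : SimpleGraph V).edgeFinset.powerset} :=
        Nat.card_le_card_of_injective _ hinj
    _ = 2 ^ (Fintype.card V).choose 2 := by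
        rw [Nat.card_eq_finsetCard, Finset.card_powerset,
          SimpleGraph.card_edgeFinset_top_eq_card_choose_two]

lemma choose_two_split (a b : ℕ) : (a + b).choose 2 = a.choose 2 + b.choose 2 + a * b := by
  rw [Nat.add_choose_eq]
  rw [Finset.Nat.sum_antidiagonal_eq_sum_range_succ_mk]
  simp [Finset.sum_range_succ, Nat.choose_one_right]
  ring

/-- For two distinct `k`-element subsets `S ≠ T` of `{1,…,n}` with `n ≥ 2k`, the number of
labelled graphs in which both `S` and `T` are dominating sets is at most
`(1 - (3/2) 2^{-k})^{n-2k} 2^{n(n-1)/2}`. -/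
theorem two_dom_sets_count_upper (n k : ℕ) (hk : 1 ≤ k) (hkn : 2 * k ≤ n)
    (S T : Finset (Fin n)) (hS : S.card = k) (hT : T.card = k) (hST : S ≠ T) :
    (Nat.card {G : SimpleGraph (Fin n) //
        (∀ v ∉ S, ∃ u ∈ S, G.Adj u v) ∧ (∀ v ∉ T, ∃ u ∈ T, G.Adj u v)} : ℝ) ≤
      (1 - 3 / 2 * 2 ^ (-(k : ℝ))) ^ (n - 2 * k) * 2 ^ (n * (n - 1) / 2) := by
  classical
  set W : Finset (Fin n) := S ∪ T with hW
  set m : ℕ := W.card with hm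
  have hSW : S ⊆ W := Finset.subset_union_left
  have hTW : T ⊆ W := Finset.subset_union_right
  have hmk : k + 1 ≤ m := by
    by_contra h
    push_neg at h
    have h1 : S = W := Finset.eq_of_subset_of_card_le hSW (by omega)
    have h2 : T = W := Finset.eq_of_subset_of_card_le hTW (by omega)
    exact hST (h1.trans h2.symm)
  have hm2k : m ≤ 2 * k := by
    have h := Finset.card_union_le S T
    rw [← hW] at h
    omega
  have hmn : m ≤ n := by
    have := W.card_le_univ; simpa using this
  set valid : Finset (Finset (Fin n)) :=
    W.powerset.filter (fun N => (N ∩ S).Nonempty ∧ (N ∩ T).Nonempty) with hvalid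
  -- count valid
  have hinvalid : W.powerset.filter (fun N => ¬((N ∩ S).Nonempty ∧ (N ∩ T).Nonempty))
      = (W \ S).powerset ∪ (W \ T).powerset := by
    ext N
    simp only [Finset.mem_filter, Finset.mem_powerset, Finset.mem_union,
      Finset.not_nonempty_iff_eq_empty, not_and_or, Finset.subset_sdiff,
      ← Finset.disjoint_iff_inter_eq_empty]
    tauto
  have hinter : (W \ S).powerset ∩ (W \ T).powerset = {∅} := by
    ext N
    simp only [Finset.mem_inter, Finset.mem_powerset, Finset.mem_singleton]
    constructor
    · rintro ⟨h1, h2⟩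
      rw [Finset.eq_empty_iff_forall_notMem]
      intro x hx
      have hx1 := h1 hx
      have hx2 := h2 hx
      simp only [Finset.mem_sdiff, hW, Finset.mem_union] at hx1 hx2
      tauto
    · rintro rfl
      simp
  have hvc : valid.card + (2 ^ (m - k) + 2 ^ (m - k)) = 2 ^ m + 1 := by
    have h1 := Finset.card_filter_add_card_filter_not (s := W.powerset)
      (p := fun N => (N ∩ S).Nonempty ∧ (N ∩ T).Nonempty)
    rw [hinvalid, ← hvalid] at h1
    rw [Finset.card_powerset, ← hm] at h1
    have h2 := Finset.card_union_add_card_inter (W \ S).powerset (W \ T).powerset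
    rw [hinter] at h2
    have h3 : (W \ S).card = m - k := by rw [Finset.card_sdiff_of_subset hSW, hS]
    have h4 : (W \ T).card = m - k := by rw [Finset.card_sdiff_of_subset hTW, hT]
    rw [Finset.card_singleton, Finset.card_powerset, Finset.card_powerset, h3, h4] at h2
    omega
  set U : Finset (Fin n) := Wᶜ with hUdef
  have hUcard : U.card = n - m := by
    rw [hUdef, Finset.card_compl, Fintype.card_fin]
  -- the injection
  have hle : Nat.card {G : SimpleGraph (Fin n) //
        (∀ v ∉ S, ∃ u ∈ S, G.Adj u v) ∧ (∀ v ∉ T, ∃ u ∈ T, G.Adj u v)} ≤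
      Nat.card ((↥U → ↥valid) × SimpleGraph ↥W × SimpleGraph ↥U) := by
    apply Nat.card_le_card_of_injective (f := fun Gp => ⟨fun v =>
        ⟨Gp.1.neighborFinset ↑v ∩ W, by
          refine Finset.mem_filter.2 ⟨Finset.mem_powerset.2 Finset.inter_subset_right, ?_, ?_⟩
          · have hvS : (↑v : Fin n) ∉ S := fun h =>
              (Finset.mem_compl.1 v.2) (hSW h)
            obtain ⟨u, hu, hadj⟩ := Gp.2.1 ↑v hvS
            exact ⟨u, by
              simp only [Finset.mem_inter, SimpleGraph.mem_neighborFinset]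
              exact ⟨⟨hadj.symm, hSW hu⟩, hu⟩⟩
          · have hvT : (↑v : Fin n) ∉ T := fun h =>
              (Finset.mem_compl.1 v.2) (hTW h)
            obtain ⟨u, hu, hadj⟩ := Gp.2.2 ↑v hvT
            exact ⟨u, by
              simp only [Finset.mem_inter, SimpleGraph.mem_neighborFinset]
              exact ⟨⟨hadj.symm, hTW hu⟩, hu⟩⟩⟩,
        SimpleGraph.comap Subtype.val Gp.1, SimpleGraph.comap Subtype.val Gp.1⟩)
    rintro ⟨G₁, h₁⟩ ⟨G₂, h₂⟩ h
    simp only [Prod.mk.injEq] at h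
    obtain ⟨hf, hg, hh⟩ := h
    apply Subtype.ext
    ext a b
    by_cases haW : a ∈ W <;> by_cases hbW : b ∈ W
    · have : (SimpleGraph.comap (Subtype.val) G₁).Adj ⟨a, haW⟩ ⟨b, hbW⟩ ↔
          (SimpleGraph.comap (Subtype.val) G₂).Adj ⟨a, haW⟩ ⟨b, hbW⟩ := by rw [hg]
      simpa [SimpleGraph.comap_adj] using this
    · have hbU : b ∈ U := Finset.mem_compl.2 hbW
      have h' : (G₁.neighborFinset b ∩ W) = (G₂.neighborFinset b ∩ W) := by
        simpa [Subtype.ext_iff] using congrFun hf ⟨b, hbU⟩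
      have : a ∈ G₁.neighborFinset b ∩ W ↔ a ∈ G₂.neighborFinset b ∩ W := by rw [h']
      simp only [Finset.mem_inter, SimpleGraph.mem_neighborFinset, haW, and_true] at this
      rw [SimpleGraph.adj_comm, this, SimpleGraph.adj_comm]
    · have haU : a ∈ U := Finset.mem_compl.2 haW
      have h' : (G₁.neighborFinset a ∩ W) = (G₂.neighborFinset a ∩ W) := by
        simpa [Subtype.ext_iff] using congrFun hf ⟨a, haU⟩
      have : b ∈ G₁.neighborFinset a ∩ W ↔ b ∈ G₂.neighborFinset a ∩ W := by rw [h']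
      simpa [Finset.mem_inter, SimpleGraph.mem_neighborFinset, hbW] using this
    · have haU : a ∈ U := Finset.mem_compl.2 haW
      have hbU : b ∈ U := Finset.mem_compl.2 hbW
      have : (SimpleGraph.comap (Subtype.val) G₁).Adj ⟨a, haU⟩ ⟨b, hbU⟩ ↔
          (SimpleGraph.comap (Subtype.val) G₂).Adj ⟨a, haU⟩ ⟨b, hbU⟩ := by rw [hh]
      simpa [SimpleGraph.comap_adj] using this
  have hcount : Nat.card {G : SimpleGraph (Fin n) //
        (∀ v ∉ S, ∃ u ∈ S, G.Adj u v) ∧ (∀ v ∉ T, ∃ u ∈ T, G.Adj u v)} ≤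
      valid.card ^ (n - m) * (2 ^ (m.choose 2) * 2 ^ ((n - m).choose 2)) := by
    refine hle.trans ?_
    rw [Nat.card_prod, Nat.card_prod, Nat.card_fun, Nat.card_eq_finsetCard,
      Nat.card_eq_finsetCard, hUcard]
    refine Nat.mul_le_mul le_rfl (Nat.mul_le_mul ?_ ?_)
    · have := simpleGraph_card_le ↥W
      rwa [Fintype.card_coe] at this
    · have := simpleGraph_card_le ↥U
      rwa [Fintype.card_coe, hUcard] at this
  -- now the real-number estimates
  have hrpow : (2 : ℝ) ^ (-(k : ℝ)) = ((2 : ℝ) ^ k)⁻¹ := by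
    rw [Real.rpow_neg (by norm_num), Real.rpow_natCast]
  set ε : ℝ := 3 / 2 * 2 ^ (-(k : ℝ)) with hε
  have h2k : (2 : ℝ) ^ k ≥ 2 := by
    calc (2:ℝ) ^ k ≥ 2 ^ 1 := by
          apply pow_le_pow_right₀ (by norm_num) hk
      _ = 2 := by norm_num
  have hεpos : 0 < ε := by
    rw [hε, hrpow]; positivity
  have hεle : ε ≤ 3 / 4 := by
    have hinv : ((2:ℝ) ^ k)⁻¹ ≤ 2⁻¹ := by
      apply inv_anti₀ (by norm_num) h2k
    rw [hε, hrpow]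
    nlinarith [hinv]
  have hvcR : (valid.card : ℝ) ≤ (1 - ε) * 2 ^ m := by
    have hsplit : (2:ℝ) ^ m = 2 ^ (m - k) * 2 ^ k := by
      rw [← pow_add]; congr 1; omega
    have hx2 : (2:ℝ) ^ (m - k) ≥ 2 := by
      calc (2:ℝ) ^ (m - k) ≥ 2 ^ 1 := by
            apply pow_le_pow_right₀ (by norm_num) (by omega)
        _ = 2 := by norm_num
    have hcast : (valid.card : ℝ) + (2 ^ (m - k) + 2 ^ (m - k)) = 2 ^ m + 1 := by
      exact_mod_cast congrArg (fun x : ℕ => (x : ℝ)) hvc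
    have h2kpos : (0:ℝ) < 2 ^ k := by positivity
    have key : (1 - ε) * 2 ^ m = 2 ^ m - 3 / 2 * 2 ^ (m - k) := by
      rw [hε, hrpow, hsplit]
      field_simp
    rw [key]
    linarith [hcast, hx2]
  have hbase0 : (0:ℝ) ≤ 1 - ε := by linarith
  have hbase1 : 1 - ε ≤ 1 := by linarith
  calc (Nat.card {G : SimpleGraph (Fin n) //
        (∀ v ∉ S, ∃ u ∈ S, G.Adj u v) ∧ (∀ v ∉ T, ∃ u ∈ T, G.Adj u v)} : ℝ)
      ≤ (valid.card : ℝ) ^ (n - m) * (2 ^ (m.choose 2) * 2 ^ ((n - m).choose 2)) := by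
        exact_mod_cast hcount
    _ ≤ ((1 - ε) * 2 ^ m) ^ (n - m) * (2 ^ (m.choose 2) * 2 ^ ((n - m).choose 2)) := by
        apply mul_le_mul_of_nonneg_right
        · exact pow_le_pow_left₀ (by positivity) hvcR _
        · positivity
    _ = (1 - ε) ^ (n - m) * 2 ^ (m * (n - m) + m.choose 2 + (n - m).choose 2) := by
        rw [mul_pow, ← pow_mul,
          show m * (n - m) + m.choose 2 + (n - m).choose 2
            = m * (n - m) + (m.choose 2 + (n - m).choose 2) from by ring,
          pow_add, pow_add]
        ring
    _ = (1 - ε) ^ (n - m) * 2 ^ (n.choose 2) := by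
        congr 2
        have := choose_two_split m (n - m)
        have hnm : m + (n - m) = n := by omega
        rw [hnm] at this
        omega
    _ ≤ (1 - ε) ^ (n - 2 * k) * 2 ^ (n.choose 2) := by
        apply mul_le_mul_of_nonneg_right
        · exact pow_le_pow_of_le_one hbase0 hbase1 (by omega)
        · positivity
    _ = (1 - ε) ^ (n - 2 * k) * 2 ^ (n * (n - 1) / 2) := by
        rw [Nat.choose_two_right]
end

section
/- For all integers n ≥ 2k ≥ 2, the number of labelled graphs on vertex set {1,…,n} that contain a dominating set of cardinality k is at least ( C(n,k) · (1−2^{−k})^{n−k} − n^{2k} · (1 − (3/2)·2^{−k})^{n−2k} ) · 2^{n(n−1)/2}. -/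
open Filter Topology

open Finset
noncomputable section
open scoped Classical

/-- Graphs on `V` correspond to boolean functions on non-diagonal unordered pairs. -/
def graphEquiv (V : Type*) : SimpleGraph V ≃ ({e : Sym2 V // ¬ e.IsDiag} → Bool) where
  toFun G e := decide (e.1 ∈ G.edgeSet)
  invFun f := SimpleGraph.fromEdgeSet {e | ∃ h : ¬ e.IsDiag, f ⟨e, h⟩ = true}
  left_inv G := by
    ext v w
    simp only [SimpleGraph.fromEdgeSet_adj, Set.mem_setOf_eq]
    constructor
    · rintro ⟨⟨h, hf⟩, hne⟩
      simpa using of_decide_eq_true hf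
    · intro h
      refine ⟨⟨fun hd => (G.ne_of_adj h) (by simpa using hd), ?_⟩, G.ne_of_adj h⟩
      · exact decide_eq_true (by simpa using h)
  right_inv f := by
    funext e
    obtain ⟨e, he⟩ := e
    have : e ∈ (SimpleGraph.fromEdgeSet {e | ∃ h : ¬ e.IsDiag, f ⟨e, h⟩ = true}).edgeSet
        ↔ f ⟨e, he⟩ = true := by
      rw [SimpleGraph.edgeSet_fromEdgeSet]
      simp only [Set.mem_diff, Set.mem_setOf_eq]
      constructor
      · rintro ⟨⟨h, hf⟩, -⟩; exact hf
      · intro h; exact ⟨⟨he, h⟩, he⟩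
    rw [Bool.eq_iff_iff]
    simp only [decide_eq_true_eq]
    exact this

lemma graphEquiv_eq_true {V : Type*} (G : SimpleGraph V) (e : {e : Sym2 V // ¬ e.IsDiag}) :
    graphEquiv V G e = true ↔ e.1 ∈ G.edgeSet := by
  simp [graphEquiv]

/-- Generic product formula for counting boolean functions with independent blockwise
constraints, blocks given by fibers of `o`. -/
lemma natCard_blocks {ι V : Type*} [Fintype ι] [Fintype V]
    (o : ι → Option V) (P : ∀ j : Option V, ({i // o i = j} → Bool) → Prop)
    (hnone : ∀ h, P none h) :
    Nat.card {f : ι → Bool // ∀ j, P j (fun i => f i.1)} =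
      (∏ v : V, Nat.card {h : {i // o i = some v} → Bool // P (some v) h}) *
        2 ^ (Nat.card {i // o i = none}) := by
  let E : (ι → Bool) ≃ ∀ j : Option V, ({i // o i = j} → Bool) :=
    { toFun := fun f j i => f i.1
      invFun := fun g i => g (o i) ⟨i, rfl⟩
      left_inv := fun f => rfl
      right_inv := fun g => by
        funext j i
        obtain ⟨i, hi⟩ := i
        subst hi
        rfl }
  have e1 : {f : ι → Bool // ∀ j, P j (fun i => f i.1)} ≃
      ∀ j : Option V, {h : {i // o i = j} → Bool // P j h} :=
    (E.subtypeEquiv (p := fun f => ∀ j, P j (fun i => f i.1))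
      (q := fun g => ∀ j, P j (g j)) (fun f => Iff.rfl)).trans Equiv.subtypePiEquivPi
  rw [Nat.card_congr e1, Nat.card_pi, Fintype.prod_option, mul_comm]
  congr 1
  rw [Nat.card_congr (Equiv.subtypeUnivEquiv hnone), Nat.card_fun]
  simp

/-- counting functions with at least one `true`. -/
lemma natCard_exists_true (α : Type*) [Fintype α] :
    Nat.card {h : α → Bool // ∃ a, h a = true} = 2 ^ (Nat.card α) - 1 := by
  have h1 : {h : α → Bool | ∃ a, h a = true} = Set.univ \ {fun _ => false} := by
    ext h
    simp only [Set.mem_setOf_eq, Set.mem_diff, Set.mem_univ, Set.mem_singleton_iff, true_and]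
    constructor
    · rintro ⟨a, ha⟩ hc; rw [hc] at ha; simp at ha
    · intro hc
      by_contra hno
      push_neg at hno
      exact hc (funext fun a => by simpa using hno a)
  have : Nat.card {h : α → Bool // ∃ a, h a = true} =
      ({h : α → Bool | ∃ a, h a = true}).ncard := Nat.card_coe_set_eq _
  rw [this, h1, Set.ncard_diff (by simp) (Set.toFinite _)]
  simp [Set.ncard_univ, Nat.card_fun]

/-- counting functions vanishing on a given predicate. -/
lemma natCard_vanish {α : Type*} [Fintype α] (p : α → Prop) :
    Nat.card {h : α → Bool // ∀ a, p a → h a = false} = 2 ^ (Nat.card {a // ¬ p a}) := by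
  have e : {h : α → Bool // ∀ a, p a → h a = false} ≃ ({a // ¬ p a} → Bool) :=
    { toFun := fun h a => h.1 a.1
      invFun := fun g => ⟨fun a => if ha : p a then false else g ⟨a, ha⟩,
        fun a ha => by simp [ha]⟩
      left_inv := fun h => by
        ext a
        by_cases ha : p a
        · simp [ha, h.2 a ha]
        · simp [ha]
      right_inv := fun g => by
        funext a
        simp [a.2] }
  rw [Nat.card_congr e, Nat.card_fun]
  simp


abbrev Edges (n : ℕ) := {e : Sym2 (Fin n) // ¬ e.IsDiag}

variable {n : ℕ}

/-- assigns to an edge with exactly one endpoint outside `S` that endpoint. -/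
def owner (S : Finset (Fin n)) : Edges n → Option (Fin n) := fun e =>
  Sym2.lift ⟨fun a b => if a ∈ S ∧ b ∉ S then some b else if b ∈ S ∧ a ∉ S then some a
      else none,
    by intro a b; by_cases ha : a ∈ S <;> by_cases hb : b ∈ S <;> simp [ha, hb]⟩ e.1

lemma owner_eq_some {S : Finset (Fin n)} {u v w : Fin n} (h : ¬ (s(u,v) : Sym2 (Fin n)).IsDiag) :
    owner S ⟨s(u,v), h⟩ = some w ↔ (u ∈ S ∧ v ∉ S ∧ w = v) ∨ (v ∈ S ∧ u ∉ S ∧ w = u) := by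
  simp only [owner, Sym2.lift_mk]
  by_cases hu : u ∈ S <;> by_cases hv : v ∈ S <;> simp [hu, hv, eq_comm]

lemma fiber_isEmpty {S : Finset (Fin n)} {v : Fin n} (hv : v ∈ S) :
    IsEmpty {e : Edges n // owner S e = some v} := by
  constructor
  rintro ⟨⟨e, hd⟩, hf⟩
  induction e using Sym2.ind with
  | _ a b =>
    rw [owner_eq_some] at hf
    rcases hf with ⟨-, hb, rfl⟩ | ⟨-, ha, rfl⟩
    · exact hb hv
    · exact ha hv

lemma fiber_card {S : Finset (Fin n)} {v : Fin n} (hv : v ∉ S) :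
    Nat.card {e : Edges n // owner S e = some v} = S.card := by
  have e : ↥S ≃ {e : Edges n // owner S e = some v} := by
    apply Equiv.ofBijective (f := fun u => ⟨⟨s(u.1, v), by
        simp only [Sym2.mk_isDiag_iff]; rintro rfl; exact hv u.2⟩,
      (owner_eq_some _).mpr (Or.inl ⟨u.2, hv, rfl⟩)⟩)
    constructor
    · rintro ⟨u1, h1⟩ ⟨u2, h2⟩ h
      simp only [Subtype.mk.injEq, Sym2.congr_left] at h
      exact Subtype.ext h
    · rintro ⟨⟨e, hd⟩, hf⟩
      induction e using Sym2.ind with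
      | _ a b =>
        rw [owner_eq_some] at hf
        rcases hf with ⟨ha, hb, rfl⟩ | ⟨hb, ha, rfl⟩
        · exact ⟨⟨a, ha⟩, rfl⟩
        · exact ⟨⟨b, hb⟩, by simp only [Subtype.mk.injEq]; exact Sym2.eq_swap⟩
  rw [← Nat.card_congr e]
  simp [Nat.card_eq_fintype_card]

lemma edges_split (S : Finset (Fin n)) :
    n.choose 2 = Nat.card {e : Edges n // owner S e = none} + (n - S.card) * S.card := by
  have h1 : Nat.card (Edges n) = n.choose 2 := by
    rw [Nat.card_eq_fintype_card, Sym2.card_subtype_not_diag, Fintype.card_fin]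
  have h2 : Nat.card (Edges n) = ∑ j : Option (Fin n), Nat.card {e : Edges n // owner S e = j} := by
    rw [Nat.card_congr (Equiv.sigmaFiberEquiv (owner S)).symm]
    simp [Nat.card_eq_fintype_card, Fintype.card_sigma]
  rw [← h1, h2, Fintype.sum_option]
  congr 1
  have : ∀ v : Fin n, Nat.card {e : Edges n // owner S e = some v}
      = if v ∈ S then 0 else S.card := by
    intro v
    by_cases hv : v ∈ S
    · simp [hv, Nat.card_eq_zero, (fiber_isEmpty hv)]
    · rw [fiber_card hv]; simp [hv]
  rw [Finset.sum_congr rfl (fun v _ => this v), Finset.sum_ite, Finset.sum_const,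
    Finset.sum_const, smul_zero, zero_add, smul_eq_mul]
  congr 1
  have : filter (fun x => x ∉ S) univ = Sᶜ := by ext v; simp
  rw [this, Finset.card_compl S, Fintype.card_fin]

lemma fiber_spec {S : Finset (Fin n)} {v : Fin n} (i : {e : Edges n // owner S e = some v}) :
    ∃ u ∈ S, v ∉ S ∧ i.1.1 = s(u, v) := by
  obtain ⟨⟨e, hd⟩, hf⟩ := i
  induction e using Sym2.ind with
  | _ a b =>
    rw [owner_eq_some] at hf
    rcases hf with ⟨ha, hb, rfl⟩ | ⟨hb, ha, rfl⟩
    · exact ⟨a, ha, hb, rfl⟩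
    · exact ⟨b, hb, ha, Sym2.eq_swap⟩

lemma mem_fiber {S : Finset (Fin n)} {u v : Fin n} (hu : u ∈ S) (hv : v ∉ S)
    (hd : ¬ (s(u,v) : Sym2 (Fin n)).IsDiag) :
    owner S ⟨s(u,v), hd⟩ = some v :=
  (owner_eq_some _).mpr (Or.inl ⟨hu, hv, rfl⟩)

/-- the blockwise condition for domination by `S`. -/
def P1 (S : Finset (Fin n)) :
    ∀ j : Option (Fin n), ({e : Edges n // owner S e = j} → Bool) → Prop
  | none => fun _ => True
  | some v => fun h => v ∈ S ∨ ∃ i, h i = true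

lemma cardA (S : Finset (Fin n)) :
    Nat.card {G : SimpleGraph (Fin n) // ∀ v ∉ S, ∃ u ∈ S, G.Adj u v} =
      (2 ^ S.card - 1) ^ (n - S.card) *
        2 ^ (Nat.card {e : Edges n // owner S e = none}) := by
  have hiff : ∀ G : SimpleGraph (Fin n),
      (∀ v ∉ S, ∃ u ∈ S, G.Adj u v) ↔
        ∀ j, P1 S j (fun i => graphEquiv (Fin n) G i.1) := by
    intro G
    constructor
    · intro hG j
      match j with
      | none => trivial
      | some v =>
        by_cases hv : v ∈ S
        · exact Or.inl hv
        · refine Or.inr ?_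
          obtain ⟨u, hu, hadj⟩ := hG v hv
          refine ⟨⟨⟨s(u,v), by simpa [Sym2.mk_isDiag_iff] using G.ne_of_adj hadj⟩,
            mem_fiber hu hv _⟩, ?_⟩
          exact (graphEquiv_eq_true _ _).mpr (G.mem_edgeSet.mpr hadj)
    · intro hP v hv
      rcases hP (some v) with h | ⟨i, hval⟩
      · exact absurd h hv
      · obtain ⟨u, hu, -, he⟩ := fiber_spec i
        have hadj := (graphEquiv_eq_true _ _).mp hval
        rw [he] at hadj
        exact ⟨u, hu, G.mem_edgeSet.mp hadj⟩
  rw [Nat.card_congr (Equiv.subtypeEquiv (p := fun G => ∀ v ∉ S, ∃ u ∈ S, G.Adj u v)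
      (q := fun f => ∀ j, P1 S j (fun i => f i.1)) (graphEquiv (Fin n)) hiff),
    natCard_blocks (owner S) (P1 S) (fun _ => trivial)]
  congr 1
  have hfac : ∀ v : Fin n,
      Nat.card {h : {e : Edges n // owner S e = some v} → Bool // P1 S (some v) h} =
        if v ∈ S then 1 else 2 ^ S.card - 1 := by
    intro v
    simp only [P1]
    by_cases hv : v ∈ S
    · rw [if_pos hv, Nat.card_congr (Equiv.subtypeUnivEquiv (fun h => Or.inl hv)),
        Nat.card_fun]
      have := fiber_isEmpty (S := S) hv
      simp [Nat.card_eq_zero.mpr (Or.inl this)]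
    · rw [if_neg hv]
      have : ∀ h : {e : Edges n // owner S e = some v} → Bool,
          (v ∈ S ∨ ∃ i, h i = true) ↔ ∃ i, h i = true := by
        intro h
        simp [hv]
      rw [Nat.card_congr (Equiv.subtypeEquiv (q := fun h => ∃ i, h i = true)
          (Equiv.refl _) this),
        natCard_exists_true, fiber_card hv]
  rw [Finset.prod_congr rfl (fun v _ => hfac v), Finset.prod_ite, Finset.prod_const,
    Finset.prod_const, one_pow, one_mul]
  congr 1
  have : filter (fun x => x ∉ S) univ = Sᶜ := by ext v; simp
  rw [this, Finset.card_compl S, Fintype.card_fin]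

/-- the fiber over `some v` is in bijection with `S` when `v ∉ S`. -/
def fiberEquiv {S : Finset (Fin n)} {v : Fin n} (hv : v ∉ S) :
    ↥S ≃ {e : Edges n // owner S e = some v} := by
  apply Equiv.ofBijective (f := fun u => ⟨⟨s(u.1, v), by
      simp only [Sym2.mk_isDiag_iff]; rintro rfl; exact hv u.2⟩,
    mem_fiber u.2 hv _⟩)
  constructor
  · rintro ⟨u1, h1⟩ ⟨u2, h2⟩ h
    simp only [Subtype.mk.injEq, Sym2.congr_left] at h
    exact Subtype.ext h
  · intro i
    obtain ⟨u, hu, -, he⟩ := fiber_spec i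
    exact ⟨⟨u, hu⟩, Subtype.ext (Subtype.ext he.symm)⟩

lemma fiberEquiv_apply {S : Finset (Fin n)} {v : Fin n} (hv : v ∉ S) (u : ↥S) :
    ((fiberEquiv hv u : {e : Edges n // owner S e = some v}) : Edges n).1 = s(u.1, v) := rfl

/-- count of boolean functions hitting both `p` and `q`, when `p ∨ q` covers. -/
lemma count_two {β : Type*} [Fintype β] (p q : β → Prop) (hcov : ∀ b, p b ∨ q b) :
    (Nat.card {g : β → Bool // (∃ b, p b ∧ g b = true) ∧ (∃ b, q b ∧ g b = true)} : ℝ) =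
      2 ^ (Fintype.card β) - 2 ^ (Nat.card {b // ¬ p b}) - 2 ^ (Nat.card {b // ¬ q b}) + 1 := by
  set A : Set (β → Bool) := {g | ∀ b, p b → g b = false} with hA
  set B : Set (β → Bool) := {g | ∀ b, q b → g b = false} with hB
  have hGood : {g : β → Bool | (∃ b, p b ∧ g b = true) ∧ (∃ b, q b ∧ g b = true)} =
      Set.univ \ (A ∪ B) := by
    ext g
    simp only [Set.mem_setOf_eq, Set.mem_diff, Set.mem_univ, Set.mem_union, true_and, hA, hB]
    push_neg
    simp [Bool.not_eq_false]
  have hInter : A ∩ B = {fun _ => false} := by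
    ext g
    simp only [Set.mem_inter_iff, Set.mem_setOf_eq, Set.mem_singleton_iff, hA, hB]
    constructor
    · rintro ⟨h1, h2⟩
      funext b
      rcases hcov b with h | h
      · exact h1 b h
      · exact h2 b h
    · rintro rfl
      exact ⟨fun _ _ => rfl, fun _ _ => rfl⟩
  have hcardA : A.ncard = 2 ^ (Nat.card {b // ¬ p b}) := by
    rw [← Nat.card_coe_set_eq]
    rw [Nat.card_congr (Equiv.setCongr rfl)]
    exact natCard_vanish p
  have hcardB : B.ncard = 2 ^ (Nat.card {b // ¬ q b}) := by
    rw [← Nat.card_coe_set_eq]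
    rw [Nat.card_congr (Equiv.setCongr rfl)]
    exact natCard_vanish q
  have hUnivCard : (Set.univ : Set (β → Bool)).ncard = 2 ^ (Fintype.card β) := by
    rw [Set.ncard_univ, Nat.card_fun]
    simp [Nat.card_eq_fintype_card]
  have hUI : (A ∪ B).ncard + 1 = A.ncard + B.ncard := by
    rw [← Set.ncard_union_add_ncard_inter A B (Set.toFinite _) (Set.toFinite _), hInter,
      Set.ncard_singleton]
  have hUle : (A ∪ B).ncard ≤ 2 ^ (Fintype.card β) := by
    rw [← hUnivCard]
    exact Set.ncard_le_ncard (Set.subset_univ _) (Set.toFinite _)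
  have hmain : Nat.card {g : β → Bool // (∃ b, p b ∧ g b = true) ∧ (∃ b, q b ∧ g b = true)} =
      2 ^ (Fintype.card β) - (A ∪ B).ncard := by
    have h0 : Nat.card {g : β → Bool // (∃ b, p b ∧ g b = true) ∧ (∃ b, q b ∧ g b = true)} =
        ({g : β → Bool | (∃ b, p b ∧ g b = true) ∧ (∃ b, q b ∧ g b = true)}).ncard :=
      Nat.card_coe_set_eq _
    rw [h0, hGood, Set.ncard_diff (Set.subset_univ _) (Set.toFinite _), hUnivCard]
  rw [hmain]
  push_cast [hUle]
  have := congrArg (Nat.cast : ℕ → ℝ) hUI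
  push_cast at this
  rw [hcardA, hcardB] at this
  push_cast at this
  linarith

/-- relaxed blockwise condition for simultaneous domination by `S` and `T`. -/
def P2 (S T : Finset (Fin n)) :
    ∀ j : Option (Fin n), ({e : Edges n // owner (S ∪ T) e = j} → Bool) → Prop
  | none => fun _ => True
  | some v => fun h => v ∈ S ∪ T ∨
      ((∃ i, (∃ u ∈ S, i.1.1 = s(u, v)) ∧ h i = true) ∧
       (∃ i, (∃ u ∈ T, i.1.1 = s(u, v)) ∧ h i = true))

lemma relax {S T : Finset (Fin n)} (G : SimpleGraph (Fin n))
    (hS : ∀ v ∉ S, ∃ u ∈ S, G.Adj u v) (hT : ∀ v ∉ T, ∃ u ∈ T, G.Adj u v) :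
    ∀ j, P2 S T j (fun i => graphEquiv (Fin n) G i.1) := by
  intro j
  match j with
  | none => trivial
  | some v =>
    by_cases hv : v ∈ S ∪ T
    · exact Or.inl hv
    · rw [Finset.mem_union] at hv
      push_neg at hv
      refine Or.inr ⟨?_, ?_⟩
      · obtain ⟨u, hu, hadj⟩ := hS v hv.1
        refine ⟨⟨⟨s(u,v), by simpa [Sym2.mk_isDiag_iff] using G.ne_of_adj hadj⟩,
          mem_fiber (Finset.mem_union_left _ hu) (by simp [hv.1, hv.2]) _⟩,
          ⟨u, hu, rfl⟩, (graphEquiv_eq_true _ _).mpr (G.mem_edgeSet.mpr hadj)⟩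
      · obtain ⟨u, hu, hadj⟩ := hT v hv.2
        refine ⟨⟨⟨s(u,v), by simpa [Sym2.mk_isDiag_iff] using G.ne_of_adj hadj⟩,
          mem_fiber (Finset.mem_union_right _ hu) (by simp [hv.1, hv.2]) _⟩,
          ⟨u, hu, rfl⟩, (graphEquiv_eq_true _ _).mpr (G.mem_edgeSet.mpr hadj)⟩

lemma pair_factor_bound {S T : Finset (Fin n)} {v : Fin n} (hv : v ∉ S ∪ T)
    (k : ℕ) (hk : 1 ≤ k) (hS : S.card = k) (hT : T.card = k) (hne : S ≠ T) :
    (Nat.card {h : {e : Edges n // owner (S ∪ T) e = some v} → Bool // P2 S T (some v) h} : ℝ)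
      ≤ 2 ^ (S ∪ T).card * (1 - 3 / 2 * ((2:ℝ) ^ k)⁻¹) := by
  set U := S ∪ T with hU
  have hSU : S ⊆ U := Finset.subset_union_left
  have hTU : T ⊆ U := Finset.subset_union_right
  have hkU : k ≤ U.card := hS ▸ Finset.card_le_card hSU
  have hkU' : k + 1 ≤ U.card := by
    by_contra hcon
    push_neg at hcon
    have hTS : T ⊆ S := by
      intro t ht
      by_contra hts
      have : S.card + 1 ≤ U.card := by
        have : insert t S ⊆ U := Finset.insert_subset (hTU ht) hSU
        calc S.card + 1 = (insert t S).card := (Finset.card_insert_of_notMem hts).symm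
          _ ≤ U.card := Finset.card_le_card this
      omega
    exact hne (Finset.eq_of_subset_of_card_le hTS (by omega)).symm
  -- transport to functions on U
  let E : ↥U ≃ {e : Edges n // owner U e = some v} := fiberEquiv hv
  have key : Nat.card {h : {e : Edges n // owner U e = some v} → Bool // P2 S T (some v) h}
      = Nat.card {g : ↥U → Bool //
          (∃ w : ↥U, w.1 ∈ S ∧ g w = true) ∧ (∃ w : ↥U, w.1 ∈ T ∧ g w = true)} := by
    apply Nat.card_congr
    refine Equiv.subtypeEquiv (Equiv.arrowCongr E.symm (Equiv.refl Bool)) ?_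
    intro h
    simp only [P2, hv, false_or]
    have htrans : ∀ (W : Finset (Fin n)), W ⊆ U →
        ((∃ i, (∃ u ∈ W, i.1.1 = s(u, v)) ∧ h i = true) ↔
          (∃ w : ↥U, w.1 ∈ W ∧ (Equiv.arrowCongr E.symm (Equiv.refl Bool)) h w = true)) := by
      intro W hWU
      constructor
      · rintro ⟨i, ⟨u, hu, he⟩, hval⟩
        refine ⟨E.symm i, ?_, ?_⟩
        · have : ((E (E.symm i) : {e : Edges n // owner U e = some v}) : Edges n).1
              = s((E.symm i).1, v) := fiberEquiv_apply hv _
          rw [E.apply_symm_apply] at this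
          rw [this] at he
          rw [Sym2.congr_left] at he
          rwa [← he] at hu
        · simp only [Equiv.arrowCongr_apply, Equiv.refl_symm, Equiv.coe_refl, Function.comp_apply,
            Equiv.symm_symm, id_eq]
          rwa [E.apply_symm_apply]
      · rintro ⟨w, hw, hval⟩
        refine ⟨E w, ⟨w.1, hw, (fiberEquiv_apply hv w)⟩, ?_⟩
        simpa using hval
    rw [htrans S hSU, htrans T hTU]
    exact or_iff_right hv
  clear_value E
  clear E
  rw [key, count_two (fun w : ↥U => w.1 ∈ S) (fun w : ↥U => w.1 ∈ T)
    (fun w => by rcases Finset.mem_union.mp w.2 with h | h; exacts [Or.inl h, Or.inr h])]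
  have hcs : Nat.card {w : ↥U // ¬ w.1 ∈ S} = U.card - k := by
    have e : {w : ↥U // ¬ w.1 ∈ S} ≃ ↥(U \ S) :=
      { toFun := fun w => ⟨w.1.1, Finset.mem_sdiff.mpr ⟨w.1.2, w.2⟩⟩
        invFun := fun x => ⟨⟨x.1, (Finset.mem_sdiff.mp x.2).1⟩, (Finset.mem_sdiff.mp x.2).2⟩
        left_inv := fun w => rfl
        right_inv := fun x => rfl }
    rw [Nat.card_congr e, Nat.card_eq_fintype_card, Fintype.card_coe,
      Finset.card_sdiff_of_subset hSU, hS]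
  have hct : Nat.card {w : ↥U // ¬ w.1 ∈ T} = U.card - k := by
    have e : {w : ↥U // ¬ w.1 ∈ T} ≃ ↥(U \ T) :=
      { toFun := fun w => ⟨w.1.1, Finset.mem_sdiff.mpr ⟨w.1.2, w.2⟩⟩
        invFun := fun x => ⟨⟨x.1, (Finset.mem_sdiff.mp x.2).1⟩, (Finset.mem_sdiff.mp x.2).2⟩
        left_inv := fun w => rfl
        right_inv := fun x => rfl }
    rw [Nat.card_congr e, Nat.card_eq_fintype_card, Fintype.card_coe,
      Finset.card_sdiff_of_subset hTU, hT]
  rw [hcs, hct, Fintype.card_coe]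
  have hpow : (2:ℝ) ^ (U.card - k) * 2 ^ k = 2 ^ U.card := by
    rw [← pow_add, Nat.sub_add_cancel hkU]
  have hpow2 : (2:ℝ) ≤ 2 ^ (U.card - k) := by
    calc (2:ℝ) = 2 ^ 1 := (pow_one 2).symm
      _ ≤ 2 ^ (U.card - k) := pow_le_pow_right₀ one_le_two (Nat.le_sub_of_add_le (by linarith))
  have h2k : (0:ℝ) < 2 ^ k := by positivity
  have hinv : (2:ℝ) ^ U.card * ((2:ℝ) ^ k)⁻¹ = 2 ^ (U.card - k) := by
    rw [← hpow]
    field_simp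
  have hexpand : (2:ℝ) ^ U.card * (1 - 3 / 2 * ((2:ℝ) ^ k)⁻¹)
      = 2 ^ U.card - 3 / 2 * (2 ^ U.card * ((2:ℝ) ^ k)⁻¹) := by ring
  rw [hexpand, hinv]
  linarith [hpow2]

lemma beta_nonneg {k : ℕ} (hk : 1 ≤ k) :
    (0:ℝ) ≤ 1 - 3 / 2 * ((2:ℝ) ^ k)⁻¹ ∧ 1 - 3 / 2 * ((2:ℝ) ^ k)⁻¹ ≤ 1 := by
  have h1 : (2:ℝ) ≤ 2 ^ k := by
    calc (2:ℝ) = 2 ^ 1 := (pow_one 2).symm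
      _ ≤ 2 ^ k := pow_le_pow_right₀ one_le_two hk
  have h2 : (0:ℝ) < 2 ^ k := by positivity
  have h3 : ((2:ℝ) ^ k)⁻¹ ≤ 2⁻¹ := by
    apply inv_anti₀ (by norm_num) h1
  have h4 : (0:ℝ) < ((2:ℝ) ^ k)⁻¹ := by positivity
  constructor <;> nlinarith

lemma cardR (k : ℕ) (hk : 1 ≤ k) (S T : Finset (Fin n))
    (hS : S.card = k) (hT : T.card = k) (hne : S ≠ T) :
    (Nat.card {G : SimpleGraph (Fin n) //
        ∀ j, P2 S T j (fun i => graphEquiv (Fin n) G i.1)} : ℝ)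
      ≤ (1 - 3 / 2 * ((2:ℝ) ^ k)⁻¹) ^ (n - 2 * k) * 2 ^ (n.choose 2) := by
  set β : ℝ := 1 - 3 / 2 * ((2:ℝ) ^ k)⁻¹ with hβ
  obtain ⟨hβ0, hβ1⟩ := beta_nonneg hk
  have hcongr : Nat.card {G : SimpleGraph (Fin n) //
        ∀ j, P2 S T j (fun i => graphEquiv (Fin n) G i.1)} =
      Nat.card {f : Edges n → Bool // ∀ j, P2 S T j (fun i => f i.1)} :=
    Nat.card_congr (Equiv.subtypeEquiv
      (p := fun G => ∀ j, P2 S T j (fun i => graphEquiv (Fin n) G i.1))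
      (q := fun f => ∀ j, P2 S T j (fun i => f i.1)) (graphEquiv (Fin n)) (fun G => Iff.rfl))
  rw [hcongr, natCard_blocks (owner (S ∪ T)) (P2 S T) (fun _ => trivial)]
  set u := (S ∪ T).card with hu
  have hu2k : u ≤ 2 * k := by
    calc u ≤ S.card + T.card := Finset.card_union_le _ _
      _ = 2 * k := by rw [hS, hT]; ring
  have hprod : (∏ v : Fin n,
      Nat.card {h : {e : Edges n // owner (S ∪ T) e = some v} → Bool // P2 S T (some v) h} : ℝ)
      ≤ (2 ^ u * β) ^ (n - u) := by
    have hbd : ∀ v : Fin n, (Nat.card {h : {e : Edges n // owner (S ∪ T) e = some v} → Bool //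
        P2 S T (some v) h} : ℝ) ≤ if v ∈ S ∪ T then 1 else 2 ^ u * β := by
      intro v
      by_cases hv : v ∈ S ∪ T
      · rw [if_pos hv]
        have hall : ∀ h : {e : Edges n // owner (S ∪ T) e = some v} → Bool,
            P2 S T (some v) h := fun h => Or.inl hv
        rw [Nat.card_congr (Equiv.subtypeUnivEquiv hall), Nat.card_fun]
        have := fiber_isEmpty (S := S ∪ T) hv
        simp [Nat.card_eq_zero.mpr (Or.inl this)]
      · rw [if_neg hv]
        exact pair_factor_bound hv k hk hS hT hne
    push_cast
    calc (∏ v : Fin n, (Nat.card {h : {e : Edges n // owner (S ∪ T) e = some v} → Bool //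
          P2 S T (some v) h} : ℝ))
        ≤ ∏ v : Fin n, (if v ∈ S ∪ T then 1 else 2 ^ u * β) := by
          apply Finset.prod_le_prod (fun v _ => by positivity) (fun v _ => hbd v)
      _ = (2 ^ u * β) ^ (n - u) := by
          rw [Finset.prod_ite, Finset.prod_const, Finset.prod_const, one_pow, one_mul]
          congr 1
          have : filter (fun x => x ∉ S ∪ T) univ = (S ∪ T)ᶜ := by ext v; simp
          rw [this, Finset.card_compl, Fintype.card_fin]
  have hsplit := edges_split (S ∪ T) (n := n)
  set m₂ := Nat.card {e : Edges n // owner (S ∪ T) e = none} with hm₂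
  have hfinal : ((2:ℝ) ^ u * β) ^ (n - u) * 2 ^ m₂ = β ^ (n - u) * 2 ^ (n.choose 2) := by
    rw [mul_pow, ← pow_mul, mul_comm ((2:ℝ) ^ (u * (n - u))) _, mul_assoc, ← pow_add]
    congr 2
    rw [hsplit]
    ring
  have h2m : (0:ℝ) ≤ 2 ^ m₂ := by positivity
  push_cast
  calc (∏ v : Fin n, (Nat.card {h : {e : Edges n // owner (S ∪ T) e = some v} → Bool //
        P2 S T (some v) h} : ℝ)) * 2 ^ m₂
      ≤ (2 ^ u * β) ^ (n - u) * 2 ^ m₂ := by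
        apply mul_le_mul_of_nonneg_right _ h2m
        exact_mod_cast hprod
    _ = β ^ (n - u) * 2 ^ (n.choose 2) := hfinal
    _ ≤ β ^ (n - 2 * k) * 2 ^ (n.choose 2) := by
        apply mul_le_mul_of_nonneg_right _ (by positivity)
        exact pow_le_pow_of_le_one hβ0 hβ1 (Nat.sub_le_sub_left hu2k n)

lemma bonferroni {β γ : Type*} [DecidableEq β] [DecidableEq γ] (s : Finset β)
    (A : β → Finset γ) :
    (∑ i ∈ s, ((A i).card : ℝ)) -
        ∑ i ∈ s, ∑ j ∈ s, (if i = j then (0:ℝ) else ((A i ∩ A j).card : ℝ))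
      ≤ ((s.biUnion A).card : ℝ) := by
  induction s using Finset.induction_on with
  | empty => simp
  | insert a s' ha ih =>
    rw [Finset.biUnion_insert]
    have hB : ((A a ∪ s'.biUnion A).card : ℝ)
        = (A a).card + ((s'.biUnion A).card : ℝ) - ((A a ∩ s'.biUnion A).card : ℝ) := by
      have := Finset.card_union_add_card_inter (A a) (s'.biUnion A)
      have := congrArg (Nat.cast : ℕ → ℝ) this
      push_cast at this
      linarith
    have hI : ((A a ∩ s'.biUnion A).card : ℝ) ≤ ∑ j ∈ s', ((A a ∩ A j).card : ℝ) := by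
      have heq : A a ∩ s'.biUnion A = s'.biUnion (fun j => A a ∩ A j) := by
        ext x
        simp [Finset.mem_biUnion]
        tauto
      rw [heq]
      exact_mod_cast Nat.cast_le.mpr (Finset.card_biUnion_le)
    have hsplit : ∑ i ∈ insert a s', ∑ j ∈ insert a s',
        (if i = j then (0:ℝ) else ((A i ∩ A j).card : ℝ))
        = (∑ j ∈ s', ((A a ∩ A j).card : ℝ)) + (∑ i ∈ s', ((A i ∩ A a).card : ℝ)) +
          ∑ i ∈ s', ∑ j ∈ s', (if i = j then (0:ℝ) else ((A i ∩ A j).card : ℝ)) := by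
      rw [Finset.sum_insert ha, Finset.sum_insert ha]
      have h1 : ∀ j ∈ s', (if a = j then (0:ℝ) else ((A a ∩ A j).card : ℝ))
          = ((A a ∩ A j).card : ℝ) := by
        intro j hj
        rw [if_neg (fun h => ha (by rwa [h]))]
      have h2 : ∀ i ∈ s', ∑ j ∈ insert a s',
          (if i = j then (0:ℝ) else ((A i ∩ A j).card : ℝ))
          = ((A i ∩ A a).card : ℝ) +
            ∑ j ∈ s', (if i = j then (0:ℝ) else ((A i ∩ A j).card : ℝ)) := by
        intro i hi
        rw [Finset.sum_insert ha, if_neg (fun h => ha (by rwa [← h]))]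
      rw [if_pos rfl, Finset.sum_congr rfl h1, Finset.sum_congr rfl h2,
        Finset.sum_add_distrib]
      ring
    rw [hsplit, Finset.sum_insert ha]
    have hpos : (0:ℝ) ≤ ∑ i ∈ s', ((A i ∩ A a).card : ℝ) :=
      Finset.sum_nonneg (fun i _ => by positivity)
    rw [hB] at *
    linarith [hI, ih]

lemma cardA_real (k : ℕ) (hkn : k ≤ n) (S : Finset (Fin n)) (hS : S.card = k) :
    (Nat.card {G : SimpleGraph (Fin n) // ∀ v ∉ S, ∃ u ∈ S, G.Adj u v} : ℝ) =
      (1 - ((2:ℝ) ^ k)⁻¹) ^ (n - k) * 2 ^ (n.choose 2) := by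
  rw [cardA S, hS]
  have hsplit := edges_split S (n := n)
  rw [hS] at hsplit
  have h21 : (1:ℕ) ≤ 2 ^ k := Nat.one_le_two_pow
  rw [Nat.cast_mul, Nat.cast_pow, Nat.cast_pow, Nat.cast_sub h21]
  push_cast
  have hfs : ((2:ℝ) ^ k - 1) = 2 ^ k * (1 - ((2:ℝ) ^ k)⁻¹) := by
    have : (0:ℝ) < 2 ^ k := by positivity
    field_simp
  rw [hfs, mul_pow, ← pow_mul, mul_comm ((2:ℝ) ^ (k * (n - k))) _, mul_assoc, ← pow_add]
  congr 2
  rw [hsplit]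
  ring

theorem kDom_count_lower' (n k : ℕ) (hk : 1 ≤ k) (hkn : 2 * k ≤ n) :
    ((n.choose k : ℝ) * (1 - ((2:ℝ) ^ k)⁻¹) ^ (n - k) -
        (n : ℝ) ^ (2 * k) * (1 - 3 / 2 * ((2:ℝ) ^ k)⁻¹) ^ (n - 2 * k)) *
        2 ^ (n.choose 2) ≤
      (Nat.card {G : SimpleGraph (Fin n) // HasDomSet G k} : ℝ) := by
  have hkn' : k ≤ n := by omega
  set K := Finset.powersetCard k (univ : Finset (Fin n)) with hK
  set A : Finset (Fin n) → Finset (SimpleGraph (Fin n)) :=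
    fun S => univ.filter (fun G => ∀ v ∉ S, ∃ u ∈ S, G.Adj u v) with hA
  have hKcard : K.card = n.choose k := by
    rw [hK, Finset.card_powersetCard, Finset.card_univ, Fintype.card_fin]
  -- value of |A S|
  have hAcard : ∀ S ∈ K, ((A S).card : ℝ) =
      (1 - ((2:ℝ) ^ k)⁻¹) ^ (n - k) * 2 ^ (n.choose 2) := by
    intro S hS
    rw [hK, Finset.mem_powersetCard_univ] at hS
    have h1 : (A S).card = Nat.card {G : SimpleGraph (Fin n) // ∀ v ∉ S, ∃ u ∈ S, G.Adj u v} := by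
      rw [Nat.card_eq_fintype_card, Fintype.card_subtype]
    rw [h1, cardA_real k hkn' S hS]
  -- bound on |A S ∩ A T|
  have hpair : ∀ S ∈ K, ∀ T ∈ K, S ≠ T → ((A S ∩ A T).card : ℝ) ≤
      (1 - 3 / 2 * ((2:ℝ) ^ k)⁻¹) ^ (n - 2 * k) * 2 ^ (n.choose 2) := by
    intro S hS T hT hne
    rw [hK, Finset.mem_powersetCard_univ] at hS hT
    have hsub : A S ∩ A T ⊆
        univ.filter (fun G => ∀ j, P2 S T j (fun i => graphEquiv (Fin n) G i.1)) := by
      intro G hG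
      rw [Finset.mem_inter, hA, Finset.mem_filter, Finset.mem_filter] at hG
      rw [Finset.mem_filter]
      exact ⟨Finset.mem_univ _, relax G hG.1.2 hG.2.2⟩
    calc ((A S ∩ A T).card : ℝ) ≤
        ((univ.filter (fun G => ∀ j, P2 S T j (fun i => graphEquiv (Fin n) G i.1))).card : ℝ) := by
          exact_mod_cast Finset.card_le_card hsub
      _ = (Nat.card {G : SimpleGraph (Fin n) //
            ∀ j, P2 S T j (fun i => graphEquiv (Fin n) G i.1)} : ℝ) := by
          rw [Nat.card_eq_fintype_card, Fintype.card_subtype]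
      _ ≤ _ := cardR k hk S T hS hT hne
  -- the union is contained in the dominating-set graphs
  have hsub : K.biUnion A ⊆ univ.filter (fun G : SimpleGraph (Fin n) => HasDomSet G k) := by
    intro G hG
    rw [Finset.mem_biUnion] at hG
    obtain ⟨S, hS, hGS⟩ := hG
    rw [hK, Finset.mem_powersetCard_univ] at hS
    rw [hA, Finset.mem_filter] at hGS
    rw [Finset.mem_filter]
    exact ⟨Finset.mem_univ _, S, hS, hGS.2⟩
  have hRHS : ((univ.filter (fun G : SimpleGraph (Fin n) => HasDomSet G k)).card : ℝ) =
      (Nat.card {G : SimpleGraph (Fin n) // HasDomSet G k} : ℝ) := by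
    rw [Nat.card_eq_fintype_card, Fintype.card_subtype]
  -- sum values
  have hsum : ∑ S ∈ K, ((A S).card : ℝ) =
      (n.choose k : ℝ) * ((1 - ((2:ℝ) ^ k)⁻¹) ^ (n - k) * 2 ^ (n.choose 2)) := by
    rw [Finset.sum_congr rfl hAcard, Finset.sum_const, hKcard, nsmul_eq_mul]
  have hβ := beta_nonneg (k := k) hk
  have hc2 : (0:ℝ) ≤ (1 - 3 / 2 * ((2:ℝ) ^ k)⁻¹) ^ (n - 2 * k) * 2 ^ (n.choose 2) := by
    apply mul_nonneg (pow_nonneg hβ.1 _) (by positivity)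
  have hdd : ∑ S ∈ K, ∑ T ∈ K, (if S = T then (0:ℝ) else ((A S ∩ A T).card : ℝ)) ≤
      (n : ℝ) ^ (2 * k) * ((1 - 3 / 2 * ((2:ℝ) ^ k)⁻¹) ^ (n - 2 * k) * 2 ^ (n.choose 2)) := by
    have step : ∑ S ∈ K, ∑ T ∈ K, (if S = T then (0:ℝ) else ((A S ∩ A T).card : ℝ)) ≤
        ∑ S ∈ K, ∑ T ∈ K,
          ((1 - 3 / 2 * ((2:ℝ) ^ k)⁻¹) ^ (n - 2 * k) * 2 ^ (n.choose 2)) := by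
      apply Finset.sum_le_sum
      intro S hS
      apply Finset.sum_le_sum
      intro T hT
      by_cases h : S = T
      · rw [if_pos h]; exact hc2
      · rw [if_neg h]; exact hpair S hS T hT h
    have hval : ∑ S ∈ K, ∑ T ∈ K,
        ((1 - 3 / 2 * ((2:ℝ) ^ k)⁻¹) ^ (n - 2 * k) * 2 ^ (n.choose 2)) =
        (K.card : ℝ) * (K.card : ℝ) *
          ((1 - 3 / 2 * ((2:ℝ) ^ k)⁻¹) ^ (n - 2 * k) * 2 ^ (n.choose 2)) := by
      rw [Finset.sum_const, Finset.sum_const, nsmul_eq_mul, nsmul_eq_mul]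
      ring
    have hck : (K.card : ℝ) * (K.card : ℝ) ≤ (n : ℝ) ^ (2 * k) := by
      rw [hKcard]
      have h1 : (n.choose k : ℝ) ≤ (n : ℝ) ^ k := by exact_mod_cast Nat.choose_le_pow n k
      have h2 : (0:ℝ) ≤ (n.choose k : ℝ) := by positivity
      calc (n.choose k : ℝ) * (n.choose k : ℝ) ≤ (n:ℝ) ^ k * (n:ℝ) ^ k := by nlinarith
        _ = (n:ℝ) ^ (2 * k) := by rw [← pow_add]; congr 1; ring
    calc _ ≤ _ := step
      _ = _ := hval
      _ ≤ _ := by nlinarith [hc2]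
  have hbon := bonferroni K A
  have hunion : ((K.biUnion A).card : ℝ) ≤
      (Nat.card {G : SimpleGraph (Fin n) // HasDomSet G k} : ℝ) := by
    rw [← hRHS]
    exact_mod_cast Finset.card_le_card hsub
  rw [sub_mul]
  have expand1 : (n.choose k : ℝ) * (1 - ((2:ℝ) ^ k)⁻¹) ^ (n - k) * 2 ^ (n.choose 2) =
      (n.choose k : ℝ) * ((1 - ((2:ℝ) ^ k)⁻¹) ^ (n - k) * 2 ^ (n.choose 2)) := by ring
  have expand2 : (n : ℝ) ^ (2 * k) * (1 - 3 / 2 * ((2:ℝ) ^ k)⁻¹) ^ (n - 2 * k) *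
      2 ^ (n.choose 2) = (n : ℝ) ^ (2 * k) *
      ((1 - 3 / 2 * ((2:ℝ) ^ k)⁻¹) ^ (n - 2 * k) * 2 ^ (n.choose 2)) := by ring
  rw [expand1, expand2]
  linarith [hbon, hdd, hsum, hunion]

end

/-- Lower bound: for `n ≥ 2k`, the number of labelled graphs on `{1,…,n}` containing a
dominating set of cardinality `k` is at least
`(C(n,k) (1-2^{-k})^{n-k} - n^{2k} (1-(3/2)2^{-k})^{n-2k}) 2^{n(n-1)/2}`. -/
theorem kDom_count_lower (n k : ℕ) (hk : 1 ≤ k) (hkn : 2 * k ≤ n) :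
    ((n.choose k : ℝ) * (1 - 2 ^ (-(k : ℝ))) ^ (n - k) -
        (n : ℝ) ^ (2 * k) * (1 - 3 / 2 * 2 ^ (-(k : ℝ))) ^ (n - 2 * k)) *
        2 ^ (n * (n - 1) / 2) ≤
      (Nat.card {G : SimpleGraph (Fin n) // HasDomSet G k} : ℝ) := by
  have hq : (2:ℝ) ^ (-(k : ℝ)) = ((2:ℝ) ^ k)⁻¹ := by
    rw [Real.rpow_neg (by norm_num), Real.rpow_natCast]
  rw [hq, ← Nat.choose_two_right]
  exact kDom_count_lower' n k hk hkn
end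

section
/- For every fixed integer k ≥ 1 there exist real constants ξ > 0 and ε > 0 such that for all sufficiently large n, the number of labelled graphs G on vertex set {1,…,n} that are k-cop-win and satisfy 1 ≤ δ_k(G) ≤ ξn is at most 2^{(log₂(1−2^{−k}) − ε) n} · 2^{n(n−1)/2}. -/
open Filter Topology

namespace CopCount

open Finset

variable {n k : ℕ}

/-- non-neighbourhood (incl. non-membership) of a finite set, as a Finset. -/
noncomputable def ncF (G : SimpleGraph (Fin n)) (A : Finset (Fin n)) : Finset (Fin n) :=
  haveI : DecidableRel G.Adj := Classical.decRel _
  univ.filter fun w => ∀ u ∈ A, w ≠ u ∧ ¬ G.Adj u w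

lemma mem_ncF {G : SimpleGraph (Fin n)} {A : Finset (Fin n)} {w : Fin n} :
    w ∈ ncF G A ↔ ∀ u ∈ A, w ≠ u ∧ ¬ G.Adj u w := by
  classical
  simp [ncF]

lemma ncF_anti {G : SimpleGraph (Fin n)} {A B : Finset (Fin n)} (h : A ⊆ B) :
    ncF G B ⊆ ncF G A := fun w hw => mem_ncF.2 fun u hu => mem_ncF.1 hw u (h hu)

lemma coe_ncF (G : SimpleGraph (Fin n)) (A : Finset (Fin n)) :
    {w : Fin n | ∀ u ∈ A, w ≠ u ∧ ¬ G.Adj u w} = (ncF G A : Set (Fin n)) := by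
  ext w; simp [mem_ncF]

lemma deltaK_witness (G : SimpleGraph (Fin n)) (h : 1 ≤ deltaK G k) :
    ∃ S : Finset (Fin n), S.card = k ∧ (ncF G S).card = deltaK G k := by
  have hne : {m | ∃ S : Finset (Fin n), S.card = k ∧
      {w : Fin n | ∀ u ∈ S, w ≠ u ∧ ¬ G.Adj u w}.ncard = m}.Nonempty := by
    by_contra hemp
    rw [Set.not_nonempty_iff_eq_empty] at hemp
    have : deltaK G k = 0 := by rw [deltaK, hemp, Nat.sInf_empty]
    omega
  obtain ⟨S, hS, hcard⟩ := Nat.sInf_mem hne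
  refine ⟨S, hS, ?_⟩
  rw [coe_ncF, Set.ncard_coe_finset] at hcard
  exact hcard

lemma deltaK_le_ncF_card (G : SimpleGraph (Fin n)) {P : Finset (Fin n)} (hP : P.card = k) :
    deltaK G k ≤ (ncF G P).card := by
  apply Nat.sInf_le
  exact ⟨P, hP, by rw [coe_ncF, Set.ncard_coe_finset]⟩

/-- The counting event: all `w` outside `T = S ∪ U ∪ B ∪ {b,u'}` are dominated by `S`
and are not an "escape" for the configuration `(B, b, u')`. -/
def Ev (G : SimpleGraph (Fin n)) (S U B : Finset (Fin n)) (b u' : Fin n) : Prop :=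
  ∀ w : Fin n, w ∉ S ∪ U ∪ B ∪ {b, u'} →
    (∃ s ∈ S, G.Adj s w) ∧ ¬(G.Adj b w ∧ G.Adj u' w ∧ w ∈ ncF G B)

section Game

variable (G : SimpleGraph (Fin n))

/-- Robber invariant relative to the optimal set `S` with `U = ncF G S`. -/
def Inv (U : Finset (Fin n)) (c : Fin k → Fin n) (r : Fin n) : Prop :=
  (∀ i, r ≠ c i ∧ ¬ G.Adj (c i) r) ∧
    ((∃ u ∈ U, (∀ i, c i ≠ u) ∧ (u = r ∨ G.Adj r u)) ∨ (∀ u ∈ U, ∃ i, c i = u))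

theorem exists_witness (hwin : IsKCopWin G k) (hδ : 1 ≤ deltaK G k) :
    ∃ (S U B : Finset (Fin n)) (b u' : Fin n),
      S.card = k ∧ U = ncF G S ∧ U.card = deltaK G k ∧ B.card ≤ k ∧ (S \ B).Nonempty ∧
      b ∉ B ∧ u' ∉ B ∧ Ev G S U B b u' := by
  obtain ⟨S, hSk, hScard⟩ := deltaK_witness G hδ
  set U : Finset (Fin n) := ncF G S with hU
  have hUne : U.Nonempty := by
    rw [← card_pos, hScard]; omega
  by_contra H
  push_neg at H
  -- escape lemma
  have esc : ∀ B : Finset (Fin n), ∀ b u' : Fin n, B.card ≤ k → (S \ B).Nonempty →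
      b ∉ B → u' ∉ B →
      ∃ w, w ∉ S ∪ U ∪ B ∪ {b, u'} ∧ G.Adj b w ∧ G.Adj u' w ∧ w ∈ ncF G B := by
    intro B b u' h1 h2 h3 h4
    have hnev := H S U B b u' hSk rfl hScard h1 h2 h3 h4
    rw [Ev] at hnev
    push_neg at hnev
    obtain ⟨w, hwT, hw⟩ := hnev
    have hwS : w ∉ S := fun hws => hwT (by simp [hws])
    have hwU : w ∉ U := fun hwu => hwT (by simp [hwu])
    have hX : ∃ s ∈ S, G.Adj s w := by
      by_contra hX
      push_neg at hX
      apply hwU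
      rw [hU, mem_ncF]
      intro u hu
      exact ⟨fun heq => hwS (heq ▸ hu), hX u hu⟩
    have hY := hw hX
    exact ⟨w, hwT, hY⟩
  -- basic facts
  have hUS : ∀ u ∈ U, u ∉ S ∧ ∀ s ∈ S, ¬ G.Adj s u := by
    intro u hu
    rw [hU, mem_ncF] at hu
    exact ⟨fun hus => (hu u hus).1 rfl, fun s hs => (hu s hs).2⟩
  have hSB : ∀ B : Finset (Fin n), B.card ≤ k → B ≠ S → (S \ B).Nonempty := by
    intro B hBk hBS
    rw [Finset.sdiff_nonempty]
    intro hsub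
    exact hBS (Finset.eq_of_subset_of_card_le hsub (by omega)).symm
  -- no trap: from an invariant position the robber can respond to any cop move
  have notrap : ∀ (c c' : Fin k → Fin n) (r : Fin n),
      (∀ i, c' i = c i ∨ G.Adj (c i) (c' i)) → Inv G U c r →
      ∃ r', (r' = r ∨ G.Adj r r') ∧ Inv G U c' r' := by
    intro c c' r hmove hinv
    classical
    set B : Finset (Fin n) := Finset.univ.image c' with hB
    have hBk : B.card ≤ k := by
      calc B.card ≤ Finset.univ.card := Finset.card_image_le
      _ = k := by simp
    have hmemB : ∀ i, c' i ∈ B := fun i => Finset.mem_image_of_mem c' (Finset.mem_univ i)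
    have hrB : r ∉ B := by
      intro hr
      rw [hB, Finset.mem_image] at hr
      obtain ⟨i, _, hi⟩ := hr
      rcases hmove i with h | h
      · exact (hinv.1 i).1 (by rw [← hi, h])
      · exact (hinv.1 i).2 (by rwa [hi] at h)
    by_cases hBS : B = S
    · -- cops (as a set) are exactly S
      rcases hinv.2 with ⟨u, huU, hucf, hur⟩ | hUc
      · refine ⟨u, hur, ?_, Or.inl ⟨u, huU, ?_, Or.inl rfl⟩⟩
        · intro i
          have hc'S : c' i ∈ S := hBS ▸ hmemB i
          have h2 := hUS u huU
          exact ⟨fun he => h2.1 (by rw [he]; exact hc'S), fun ha => h2.2 _ hc'S ha⟩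
        · intro i
          have hc'S : c' i ∈ S := hBS ▸ hmemB i
          exact fun hci => (hUS u huU).1 (by rw [← hci]; exact hc'S)
      · -- cops were standing on all of U, but now are all inside S: impossible
        exfalso
        obtain ⟨u₀, hu₀⟩ := hUne
        obtain ⟨i, hi⟩ := hUc u₀ hu₀
        have hc'S : c' i ∈ S := hBS ▸ hmemB i
        rcases hmove i with h | h
        · exact (hUS u₀ hu₀).1 (by rw [← hi, ← h]; exact hc'S)
        · rw [hi] at h
          exact (hUS u₀ hu₀).2 _ hc'S ((G.adj_comm _ _).mp h)
    · have hSBne : (S \ B).Nonempty := hSB B hBk hBS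
      by_cases hUB : ∀ u ∈ U, u ∈ B
      · -- cops cover U
        obtain ⟨w, _, hadj, _, hwnc⟩ := esc B r r hBk hSBne hrB hrB
        refine ⟨w, Or.inr hadj, ?_, Or.inr ?_⟩
        · intro i
          have := mem_ncF.1 hwnc (c' i) (hmemB i)
          exact this
        · intro u hu
          have : u ∈ B := hUB u hu
          rw [hB, Finset.mem_image] at this
          obtain ⟨i, _, hi⟩ := this
          exact ⟨i, hi⟩
      · push_neg at hUB
        obtain ⟨u₁, hu₁U, hu₁B⟩ := hUB
        obtain ⟨w, _, hadjr, hadju, hwnc⟩ := esc B r u₁ hBk hSBne hrB hu₁B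
        refine ⟨w, Or.inr hadjr, fun i => mem_ncF.1 hwnc (c' i) (hmemB i),
          Or.inl ⟨u₁, hu₁U, ?_, Or.inr ((G.adj_comm _ _).mp hadju)⟩⟩
        intro i hi
        exact hu₁B (hi ▸ hmemB i)
  -- positions satisfying the invariant are not cop-win
  have noWin : ∀ (c : Fin k → Fin n) (r : Fin n), CopsWinPos G c r → ¬ Inv G U c r := by
    intro c r hpos
    induction hpos with
    | capture c r c' hmove hc =>
      intro hinv
      obtain ⟨i, hi⟩ := hc
      rcases hmove i with h | h
      · exact (hinv.1 i).1 (by rw [← hi, h])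
      · exact (hinv.1 i).2 (by rwa [hi] at h)
    | advance c r c' hmove h ih =>
      intro hinv
      obtain ⟨r', hr', hinv'⟩ := notrap c c' r hmove hinv
      exact ih r' hr' hinv'
  -- initial placement: the robber can answer any initial cop placement
  have init : ∀ c₀ : Fin k → Fin n, ∃ r, Inv G U c₀ r := by
    intro c₀
    classical
    set B₀ : Finset (Fin n) := Finset.univ.image c₀ with hB₀
    have hB₀k : B₀.card ≤ k := by
      calc B₀.card ≤ Finset.univ.card := Finset.card_image_le
      _ = k := by simp
    have hmemB₀ : ∀ i, c₀ i ∈ B₀ := fun i => Finset.mem_image_of_mem c₀ (Finset.mem_univ i)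
    by_cases h1 : ∃ u ∈ U, u ∈ ncF G B₀
    · obtain ⟨u, huU, hunc⟩ := h1
      refine ⟨u, fun i => ?_, Or.inl ⟨u, huU, fun i => ?_, Or.inl rfl⟩⟩
      · have := mem_ncF.1 hunc (c₀ i) (hmemB₀ i)
        exact ⟨this.1, this.2⟩
      · exact fun he => (mem_ncF.1 hunc (c₀ i) (hmemB₀ i)).1 he.symm
    · push_neg at h1
      by_cases hUB₀ : ∀ u ∈ U, u ∈ B₀
      · -- pad B₀ to a k-set and use minimality
        have hkn : k ≤ Fintype.card (Fin n) := by
          rw [Fintype.card_fin]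
          calc k = S.card := hSk.symm
          _ ≤ _ := by simpa using Finset.card_le_univ S
        obtain ⟨P, hBP, hPcard⟩ := Finset.exists_superset_card_eq hB₀k hkn
        have hPnc : (ncF G P).Nonempty := by
          rw [← card_pos]
          have := deltaK_le_ncF_card (k := k) G hPcard
          omega
        obtain ⟨r, hr⟩ := hPnc
        have hrB₀ : r ∈ ncF G B₀ := ncF_anti hBP hr
        refine ⟨r, fun i => mem_ncF.1 hrB₀ (c₀ i) (hmemB₀ i), Or.inr ?_⟩
        intro u hu
        have : u ∈ B₀ := hUB₀ u hu
        rw [hB₀, Finset.mem_image] at this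
        obtain ⟨i, _, hi⟩ := this
        exact ⟨i, hi⟩
      · push_neg at hUB₀
        obtain ⟨u₁, hu₁U, hu₁B₀⟩ := hUB₀
        have hB₀S : B₀ ≠ S := by
          intro he
          exact h1 u₁ hu₁U (by rw [he]; exact hU ▸ hu₁U)
        obtain ⟨w, _, hadj, _, hwnc⟩ := esc B₀ u₁ u₁ hB₀k (hSB B₀ hB₀k hB₀S) hu₁B₀ hu₁B₀
        refine ⟨w, fun i => mem_ncF.1 hwnc (c₀ i) (hmemB₀ i),
          Or.inl ⟨u₁, hu₁U, fun i hi => hu₁B₀ (hi ▸ hmemB₀ i), Or.inr ((G.adj_comm _ _).mp hadj)⟩⟩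
  -- contradiction with cop-win
  obtain ⟨c₀, hc₀⟩ := hwin
  obtain ⟨r, hr⟩ := init c₀
  rcases hc₀ r with ⟨i, hi⟩ | hpos
  · exact (hr.1 i).1 hi.symm
  · exact noWin c₀ r hpos hr

end Game


section Counting

/-- full event for a witness tuple -/
def Qpred (k Q : ℕ) (S U B : Finset (Fin n)) (b u' : Fin n) (G : SimpleGraph (Fin n)) : Prop :=
  S.card = k ∧ U.card ≤ Q ∧ B.card ≤ k ∧ (S \ B).Nonempty ∧ b ∉ B ∧ u' ∉ B ∧ Ev G S U B b u'

lemma card_subtype_mem {T P : Finset (Fin n)} (hPT : P ⊆ T) :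
    Nat.card {t : {x // x ∈ T} // t.1 ∈ P} = P.card := by
  classical
  have e : {t : {x // x ∈ T} // t.1 ∈ P} ≃ {x // x ∈ P} :=
    { toFun := fun a => ⟨a.1.1, a.2⟩
      invFun := fun x => ⟨⟨x.1, hPT x.2⟩, x.2⟩
      left_inv := fun a => rfl
      right_inv := fun x => rfl }
  rw [Nat.card_congr e, Nat.card_eq_fintype_card, Fintype.card_coe]

lemma card_subtype_not_mem {T P : Finset (Fin n)} (hPT : P ⊆ T) :
    Nat.card {t : {x // x ∈ T} // t.1 ∉ P} = T.card - P.card := by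
  classical
  haveI : Fintype {t : {x // x ∈ T} // t.1 ∈ P} := Fintype.ofFinite _
  haveI : Fintype {t : {x // x ∈ T} // ¬ t.1 ∈ P} := Fintype.ofFinite _
  rw [Nat.card_eq_fintype_card, Fintype.card_subtype_compl]
  rw [← Nat.card_eq_fintype_card, ← Nat.card_eq_fintype_card, card_subtype_mem hPT,
    Nat.card_eq_fintype_card, Fintype.card_coe]

lemma card_prop_fun (X : Type*) [Finite X] : Nat.card (X → Prop) = 2 ^ Nat.card X := by
  rw [Nat.card_fun, Nat.card_eq_fintype_card, Fintype.card_prop]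

/-- Number of allowed adjacency patterns from an outside vertex to `T`. -/
lemma pattern_card_le {k : ℕ} (T S B : Finset (Fin n)) (b u' : Fin n)
    (hST : S ⊆ T) (hBT : B ⊆ T) (hbT : b ∈ T) (huT : u' ∈ T)
    (hSk : S.card = k) (hBk : B.card ≤ k) (hSBne : (S \ B).Nonempty)
    (hbB : b ∉ B) (huB : u' ∉ B) :
    (Nat.card {h : {x // x ∈ T} → Prop //
        (∃ t, t.1 ∈ S ∧ h t) ∧ ¬(h ⟨b, hbT⟩ ∧ h ⟨u', huT⟩ ∧ ∀ t, t.1 ∈ B → ¬ h t)} : ℝ) ≤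
      (1 - 9 / (8 * 2 ^ k)) * 2 ^ T.card := by
  classical
  obtain ⟨s₀, hs₀⟩ := hSBne
  have hs₀S : s₀ ∈ S := (Finset.mem_sdiff.1 hs₀).1
  have hs₀B : s₀ ∉ B := (Finset.mem_sdiff.1 hs₀).2
  set Xp : ({x // x ∈ T} → Prop) → Prop := fun h => ∃ t, t.1 ∈ S ∧ h t with hXp
  set Yp : ({x // x ∈ T} → Prop) → Prop :=
    fun h => h ⟨b, hbT⟩ ∧ h ⟨u', huT⟩ ∧ ∀ t, t.1 ∈ B → ¬ h t with hYp
  have hkT : k ≤ T.card := hSk ▸ Finset.card_le_card hST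
  -- card of all patterns avoiding S
  have cardNX : Nat.card {h : {x // x ∈ T} → Prop // ¬ Xp h} = 2 ^ (T.card - k) := by
    have e1 : {h : {x // x ∈ T} → Prop // ¬ Xp h} ≃ ({t : {x // x ∈ T} // t.1 ∉ S} → Prop) :=
      { toFun := fun H s => H.1 s.1
        invFun := fun g => ⟨fun t => ∃ hs : t.1 ∉ S, g ⟨t, hs⟩, by
          rintro ⟨t, htS, hs, -⟩; exact hs htS⟩
        left_inv := by
          rintro ⟨h, hh⟩
          apply Subtype.ext
          funext t
          apply propext
          constructor
          · rintro ⟨hs, hg⟩; exact hg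
          · intro ht
            by_cases hs : t.1 ∈ S
            · exact absurd ⟨t, hs, ht⟩ hh
            · exact ⟨hs, ht⟩
        right_inv := by
          intro g
          funext s
          apply propext
          constructor
          · rintro ⟨hs, hg⟩
            rwa [Subtype.coe_eta] at hg
          · intro hg
            exact ⟨s.2, by rwa [Subtype.coe_eta]⟩ }
    rw [Nat.card_congr e1, card_prop_fun, card_subtype_not_mem hST, hSk]
  have cardTot : Nat.card ({x // x ∈ T} → Prop) = 2 ^ T.card := by
    rw [card_prop_fun, Nat.card_eq_fintype_card, Fintype.card_coe]
  have cardX : Nat.card {h : {x // x ∈ T} → Prop // Xp h} = 2 ^ T.card - 2 ^ (T.card - k) := by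
    haveI : Fintype {h : {x // x ∈ T} → Prop // Xp h} := Fintype.ofFinite _
    haveI : Fintype {h : {x // x ∈ T} → Prop // ¬ Xp h} := Fintype.ofFinite _
    haveI : Fintype ({x // x ∈ T} → Prop) := Fintype.ofFinite _
    have hc := Fintype.card_subtype_compl Xp
    rw [← Nat.card_eq_fintype_card, ← Nat.card_eq_fintype_card, ← Nat.card_eq_fintype_card] at hc
    rw [cardNX, cardTot] at hc
    have hle : Nat.card {h : {x // x ∈ T} → Prop // Xp h} ≤ 2 ^ T.card := by
      have := Nat.card_le_card_of_injective
        (fun H : {h : {x // x ∈ T} → Prop // Xp h} => H.1) (fun a b hab => Subtype.ext hab)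
      rwa [cardTot] at this
    omega
  -- lower bound for doubly-bad patterns
  set E : Finset (Fin n) := insert b (insert u' (insert s₀ B)) with hE
  have hbE : b ∈ E := Finset.mem_insert_self _ _
  have huE : u' ∈ E := by simp [hE]
  have hs₀E : s₀ ∈ E := by simp [hE]
  have hBE : ∀ x ∈ B, x ∈ E := by intro x hx; simp [hE, hx]
  have hET : E ⊆ T := by
    intro x hx
    simp only [hE, Finset.mem_insert] at hx
    rcases hx with rfl | rfl | rfl | hx
    · exact hbT
    · exact huT
    · exact hST hs₀S
    · exact hBT hx
  have hEk : E.card ≤ k + 3 := by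
    calc E.card ≤ (insert u' (insert s₀ B)).card + 1 := Finset.card_insert_le _ _
    _ ≤ (insert s₀ B).card + 1 + 1 := by
        have := Finset.card_insert_le u' (insert s₀ B); omega
    _ ≤ B.card + 1 + 1 + 1 := by
        have := Finset.card_insert_le s₀ B; omega
    _ ≤ k + 3 := by omega
  have hET' : E.card ≤ T.card := Finset.card_le_card hET
  have cardXY : 2 ^ (T.card - E.card) ≤
      Nat.card {h : {x // x ∈ T} → Prop // Xp h ∧ Yp h} := by
    have hinj : Function.Injective
        (fun g : ({t : {x // x ∈ T} // t.1 ∉ E} → Prop) =>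
          (⟨fun t => if hEt : t.1 ∈ E then ((t.1 ∉ B) : Prop) else g ⟨t, hEt⟩, by
            constructor
            · exact ⟨⟨s₀, hST hs₀S⟩, hs₀S, by simp only [dif_pos hs₀E]; exact hs₀B⟩
            · refine ⟨by simp only [dif_pos hbE]; exact hbB,
                by simp only [dif_pos huE]; exact huB, ?_⟩
              intro t htB
              simp only [dif_pos (hBE _ htB)]
              exact fun hc => hc htB⟩ :
            {h : {x // x ∈ T} → Prop // Xp h ∧ Yp h})) := by
      intro g₁ g₂ heq
      funext s
      have h2 := congrFun (congrArg Subtype.val heq) s.1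
      simpa only [dif_neg s.2] using h2
    have := Nat.card_le_card_of_injective _ hinj
    rwa [card_prop_fun, card_subtype_not_mem hET] at this
  -- disjointness
  have cardSum : Nat.card {h : {x // x ∈ T} → Prop // Xp h ∧ ¬ Yp h} +
      Nat.card {h : {x // x ∈ T} → Prop // Xp h ∧ Yp h} ≤
      Nat.card {h : {x // x ∈ T} → Prop // Xp h} := by
    rw [← Nat.card_sum]
    apply Nat.card_le_card_of_injective
      (Sum.elim (fun a => ⟨a.1, a.2.1⟩) (fun a => ⟨a.1, a.2.1⟩))
    rintro (a₁ | a₁) (a₂ | a₂) hab <;>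
      simp only [Sum.elim_inl, Sum.elim_inr, Subtype.mk.injEq] at hab
    · simp only [Sum.inl.injEq]; exact Subtype.ext hab
    · exact absurd (hab ▸ a₂.2.2) a₁.2.2
    · exact absurd (hab.symm ▸ a₁.2.2) a₂.2.2
    · simp only [Sum.inr.injEq]; exact Subtype.ext hab
  -- real arithmetic
  have h2k : (0:ℝ) < 2 ^ k := by positivity
  have hpowk : ((2:ℝ) ^ (T.card - k)) * 2 ^ k = 2 ^ T.card := by
    rw [← pow_add]; congr 1; omega
  have hpowE : ((2:ℝ) ^ (T.card - E.card)) * 2 ^ E.card = 2 ^ T.card := by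
    rw [← pow_add]; congr 1; omega
  have hpowEk : ((2:ℝ) ^ E.card) ≤ 2 ^ (k + 3) := by
    apply pow_le_pow_right₀ (by norm_num) hEk
  have key : (Nat.card {h : {x // x ∈ T} → Prop // Xp h ∧ ¬ Yp h} : ℝ) ≤
      2 ^ T.card - 2 ^ (T.card - k) - 2 ^ (T.card - E.card) := by
    have h1 : (Nat.card {h : {x // x ∈ T} → Prop // Xp h ∧ ¬ Yp h} : ℝ) +
        2 ^ (T.card - E.card) ≤ (2:ℝ) ^ T.card - 2 ^ (T.card - k) := by
      have hXle : (2:ℕ) ^ (T.card - k) ≤ 2 ^ T.card := Nat.pow_le_pow_right (by norm_num) (by omega)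
      have := cardSum
      rw [cardX] at this
      have hcast : (Nat.card {h : {x // x ∈ T} → Prop // Xp h ∧ ¬ Yp h} : ℝ) +
          (Nat.card {h : {x // x ∈ T} → Prop // Xp h ∧ Yp h} : ℝ) ≤
          (2:ℝ) ^ T.card - 2 ^ (T.card - k) := by
        have := this
        push_cast [Nat.cast_sub hXle] at *
        exact_mod_cast by exact_mod_cast this
      have hXY : ((2:ℕ) ^ (T.card - E.card) : ℝ) ≤
          (Nat.card {h : {x // x ∈ T} → Prop // Xp h ∧ Yp h} : ℝ) := by exact_mod_cast cardXY
      push_cast at hXY ⊢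
      linarith
    linarith
  have hfin : (2:ℝ) ^ T.card - 2 ^ (T.card - k) - 2 ^ (T.card - E.card) ≤
      (1 - 9 / (8 * 2 ^ k)) * 2 ^ T.card := by
    have e1 : ((2:ℝ) ^ (T.card - k)) = 2 ^ T.card / 2 ^ k := by
      field_simp [← hpowk]
      exact hpowk
    have e2 : ((2:ℝ) ^ (T.card - E.card)) ≥ 2 ^ T.card / 2 ^ (k + 3) := by
      rw [ge_iff_le, div_le_iff₀ (by positivity)]
      calc (2:ℝ) ^ T.card = 2 ^ (T.card - E.card) * 2 ^ E.card := hpowE.symm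
      _ ≤ 2 ^ (T.card - E.card) * 2 ^ (k+3) := by
          apply mul_le_mul_of_nonneg_left hpowEk (by positivity)
    have hT : (0:ℝ) ≤ 2 ^ T.card := by positivity
    have : (1 - 9 / (8 * 2 ^ k)) * 2 ^ T.card
        = 2 ^ T.card - 2 ^ T.card / 2 ^ k - 2 ^ T.card / (2 ^ (k+3) : ℝ) := by
      rw [pow_add]
      field_simp
      ring
    rw [e1, this]
    linarith
  exact le_trans key hfin


lemma card_EP : Nat.card {p : Fin n × Fin n // p.1 < p.2} = n * (n - 1) / 2 := by
  classical
  have e : {p : Fin n × Fin n // p.1 < p.2} ≃ Σ i : Fin n, Fin i.1 :=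
    { toFun := fun p => ⟨p.1.2, ⟨p.1.1.1, p.2⟩⟩
      invFun := fun s => ⟨(⟨s.2.1, s.2.2.trans s.1.2⟩, s.1), s.2.2⟩
      left_inv := fun p => rfl
      right_inv := fun s => rfl }
  rw [Nat.card_congr e, Nat.card_eq_fintype_card, Fintype.card_sigma]
  have h1 : ∀ i : Fin n, Fintype.card (Fin i.1) = i.1 := fun i => Fintype.card_fin _
  rw [Finset.sum_congr rfl (fun i _ => h1 i), Fin.sum_univ_eq_sum_range (fun i => i) n]
  have := Finset.sum_range_id_mul_two n
  omega

lemma cross_card (T : Finset (Fin n)) :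
    T.card * (n - T.card) ≤
      Nat.card {p : {q : Fin n × Fin n // q.1 < q.2} // ¬(p.1.1 ∈ T ↔ p.1.2 ∈ T)} := by
  classical
  have hinj : Function.Injective
      (fun aw : {x // x ∈ T} × {x // x ∈ Tᶜ} =>
        (if h : aw.1.1 < aw.2.1 then
          (⟨⟨(aw.1.1, aw.2.1), h⟩, by
            have hw : aw.2.1 ∉ T := Finset.mem_compl.1 aw.2.2
            simp only [not_iff]
            simp [aw.1.2, hw]⟩ :
            {p : {q : Fin n × Fin n // q.1 < q.2} // ¬(p.1.1 ∈ T ↔ p.1.2 ∈ T)})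
        else
          ⟨⟨(aw.2.1, aw.1.1), by
            have hne : aw.1.1 ≠ aw.2.1 := fun hcon =>
              (Finset.mem_compl.1 aw.2.2) (hcon ▸ aw.1.2)
            exact lt_of_le_of_ne (not_lt.1 h) (Ne.symm hne)⟩, by
            have hw : aw.2.1 ∉ T := Finset.mem_compl.1 aw.2.2
            simp only [not_iff]
            simp [aw.1.2, hw]⟩)) := by
    intro x y heq
    have hx := x.1.2
    have hy := y.1.2
    have hxc := Finset.mem_compl.1 x.2.2
    have hyc := Finset.mem_compl.1 y.2.2
    by_cases h1 : x.1.1 < x.2.1 <;> by_cases h2 : y.1.1 < y.2.1 <;>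
      simp only [dif_pos, dif_neg, h1, h2, dite_true, dite_false, Subtype.mk.injEq,
        Prod.mk.injEq] at heq
    · obtain ⟨ha, hb⟩ := heq
      exact Prod.ext (Subtype.ext ha) (Subtype.ext hb)
    · exact absurd (heq.1 ▸ hx) hyc
    · exact absurd (heq.2 ▸ hx) hyc
    · obtain ⟨ha, hb⟩ := heq
      exact Prod.ext (Subtype.ext hb) (Subtype.ext ha)
  have := Nat.card_le_card_of_injective _ hinj
  rw [Nat.card_prod, Nat.card_eq_finsetCard, Nat.card_eq_finsetCard, Finset.card_compl,
    Fintype.card_fin] at this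
  exact this

lemma card_graphs_le {k : ℕ} (hk : 1 ≤ k) (Q : ℕ) (S U B : Finset (Fin n)) (b u' : Fin n) :
    (Nat.card {G : SimpleGraph (Fin n) // Qpred k Q S U B b u' G} : ℝ) ≤
      (1 - 9 / (8 * 2 ^ k)) ^ (n - (S ∪ U ∪ B ∪ {b, u'}).card) * 2 ^ (n * (n - 1) / 2) := by
  classical
  have hβpos : (0:ℝ) < 1 - 9 / (8 * 2 ^ k) := by
    have h2 : (2:ℝ) ≤ 2 ^ k := by
      calc (2:ℝ) = 2 ^ 1 := (pow_one 2).symm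
      _ ≤ 2 ^ k := pow_le_pow_right₀ (by norm_num) hk
    have : 9 / (8 * 2 ^ k) ≤ 9 / (16:ℝ) := by
      apply div_le_div_of_nonneg_left (by norm_num) (by norm_num)
      linarith
    linarith
  rcases isEmpty_or_nonempty {G : SimpleGraph (Fin n) // Qpred k Q S U B b u' G} with he | hne
  · rw [Nat.card_of_isEmpty, Nat.cast_zero]
    exact mul_nonneg (pow_nonneg hβpos.le _) (by positivity)
  set T : Finset (Fin n) := S ∪ U ∪ B ∪ {b, u'} with hT
  obtain ⟨⟨G₀, hG₀⟩⟩ := hne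
  obtain ⟨hSk, hUQ, hBk, hSBne, hbB, huB, -⟩ := hG₀
  have hST : S ⊆ T := by intro x hx; simp [hT, hx]
  have hUT : U ⊆ T := by intro x hx; simp [hT, hx]
  have hBT : B ⊆ T := by intro x hx; simp [hT, hx]
  have hbT : b ∈ T := by simp [hT]
  have huT : u' ∈ T := by simp [hT]
  have htn : T.card ≤ n := by
    calc T.card ≤ Fintype.card (Fin n) := by simpa using Finset.card_le_univ T
    _ = n := Fintype.card_fin n
  -- the injection into pattern data
  set Ap : ({x // x ∈ T} → Prop) → Prop := fun h =>
    (∃ t, t.1 ∈ S ∧ h t) ∧ ¬(h ⟨b, hbT⟩ ∧ h ⟨u', huT⟩ ∧ ∀ t, t.1 ∈ B → ¬ h t) with hAp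
  have hinj : Function.Injective
      (fun Gh : {G : SimpleGraph (Fin n) // Qpred k Q S U B b u' G} =>
        ((fun w : {x // x ∈ Tᶜ} =>
          (⟨fun t => Gh.1.Adj w.1 t.1, by
            have hwT : w.1 ∉ T := Finset.mem_compl.1 w.2
            obtain ⟨hX, hY⟩ := Gh.2.2.2.2.2.2.2 w.1 hwT
            constructor
            · obtain ⟨s, hs, hadj⟩ := hX
              exact ⟨⟨s, hST hs⟩, hs, hadj.symm⟩
            · rintro ⟨h1, h2, h3⟩
              apply hY
              refine ⟨h1.symm, h2.symm, mem_ncF.2 fun u hu => ⟨?_, ?_⟩⟩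
              · intro hcon; exact hwT (hcon ▸ hBT hu)
              · intro hadj; exact h3 ⟨u, hBT hu⟩ hu hadj.symm⟩ :
            {h : {x // x ∈ T} → Prop // Ap h})),
        (fun p : {p : {q : Fin n × Fin n // q.1 < q.2} // (p.1.1 ∈ T ↔ p.1.2 ∈ T)} =>
          Gh.1.Adj p.1.1.1 p.1.1.2))) := by
    intro G₁ G₂ heq
    have h1 := congrArg Prod.fst heq
    have h2 := congrArg Prod.snd heq
    simp only at h1 h2
    apply Subtype.ext
    have main : ∀ x y : Fin n, (G₁.1.Adj x y ↔ G₂.1.Adj x y) := by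
      intro x y
      by_cases hxy : x = y
      · subst hxy
        simp
      have hiff : ∀ (p : Fin n × Fin n) (hp : p.1 < p.2), (p.1 ∈ T ↔ p.2 ∈ T) →
          (G₁.1.Adj p.1 p.2 ↔ G₂.1.Adj p.1 p.2) := by
        intro p hp hmem
        exact iff_of_eq (congrFun h2 ⟨⟨p, hp⟩, hmem⟩)
      have hcross : ∀ x y : Fin n, x ∉ T → y ∈ T → (G₁.1.Adj x y ↔ G₂.1.Adj x y) := by
        intro x y hx hy
        have := congrArg Subtype.val (congrFun h1 ⟨x, Finset.mem_compl.2 hx⟩)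
        exact iff_of_eq (congrFun this ⟨y, hy⟩)
      by_cases hxT : x ∈ T <;> by_cases hyT : y ∈ T
      · rcases lt_or_gt_of_ne hxy with hlt | hgt
        · exact hiff (x, y) hlt (by simp [hxT, hyT])
        · rw [G₁.1.adj_comm, G₂.1.adj_comm]
          exact hiff (y, x) hgt (by simp [hxT, hyT])
      · rw [G₁.1.adj_comm, G₂.1.adj_comm]
        exact hcross y x hyT hxT
      · exact hcross x y hxT hyT
      · rcases lt_or_gt_of_ne hxy with hlt | hgt
        · exact hiff (x, y) hlt (by simp [hxT, hyT])
        · rw [G₁.1.adj_comm, G₂.1.adj_comm]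
          exact hiff (y, x) hgt (by simp [hxT, hyT])
    exact SimpleGraph.ext (funext fun x => funext fun y => propext (main x y))
  have hcard := Nat.card_le_card_of_injective _ hinj
  rw [Nat.card_prod, Nat.card_fun, card_prop_fun, Nat.card_eq_finsetCard, Finset.card_compl,
    Fintype.card_fin] at hcard
  -- bound the same-side pair count
  have hsame : Nat.card {p : {q : Fin n × Fin n // q.1 < q.2} // (p.1.1 ∈ T ↔ p.1.2 ∈ T)}
      ≤ n * (n - 1) / 2 - T.card * (n - T.card) := by
    haveI : Fintype {p : {q : Fin n × Fin n // q.1 < q.2} // (p.1.1 ∈ T ↔ p.1.2 ∈ T)} :=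
      Fintype.ofFinite _
    haveI : Fintype {p : {q : Fin n × Fin n // q.1 < q.2} // ¬(p.1.1 ∈ T ↔ p.1.2 ∈ T)} :=
      Fintype.ofFinite _
    haveI : Fintype {q : Fin n × Fin n // q.1 < q.2} := Fintype.ofFinite _
    have hc := Fintype.card_subtype_compl (fun p : {q : Fin n × Fin n // q.1 < q.2} =>
      (p.1.1 ∈ T ↔ p.1.2 ∈ T))
    rw [← Nat.card_eq_fintype_card, ← Nat.card_eq_fintype_card, ← Nat.card_eq_fintype_card,
      card_EP] at hc
    have hcr := cross_card T
    have hle : Nat.card {p : {q : Fin n × Fin n // q.1 < q.2} // ¬(p.1.1 ∈ T ↔ p.1.2 ∈ T)}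
        ≤ n * (n-1) / 2 := by
      have := Nat.card_le_card_of_injective
        (fun p : {p : {q : Fin n × Fin n // q.1 < q.2} // ¬(p.1.1 ∈ T ↔ p.1.2 ∈ T)} => p.1)
        (fun a b hab => Subtype.ext hab)
      rwa [card_EP] at this
    have hc2 : Nat.card {p : {q : Fin n × Fin n // q.1 < q.2} // ¬(p.1.1 ∈ T ↔ p.1.2 ∈ T)} =
        n * (n - 1) / 2 -
        Nat.card {p : {q : Fin n × Fin n // q.1 < q.2} // (p.1.1 ∈ T ↔ p.1.2 ∈ T)} := hc
    have hle2 : Nat.card {p : {q : Fin n × Fin n // q.1 < q.2} // (p.1.1 ∈ T ↔ p.1.2 ∈ T)}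
        ≤ n * (n-1) / 2 := by
      have := Nat.card_le_card_of_injective
        (fun p : {p : {q : Fin n × Fin n // q.1 < q.2} // (p.1.1 ∈ T ↔ p.1.2 ∈ T)} => p.1)
        (fun a b hab => Subtype.ext hab)
      rwa [card_EP] at this
    generalize hM : T.card * (n - T.card) = M at hcr ⊢
    generalize hN : n * (n - 1) / 2 = N at hc2 hle hle2 ⊢
    omega
  have hcrle : T.card * (n - T.card) ≤ n * (n - 1) / 2 := by
    have hcr := cross_card T
    have hle : Nat.card {p : {q : Fin n × Fin n // q.1 < q.2} // ¬(p.1.1 ∈ T ↔ p.1.2 ∈ T)}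
        ≤ n * (n-1) / 2 := by
      have := Nat.card_le_card_of_injective
        (fun p : {p : {q : Fin n × Fin n // q.1 < q.2} // ¬(p.1.1 ∈ T ↔ p.1.2 ∈ T)} => p.1)
        (fun a b hab => Subtype.ext hab)
      rwa [card_EP] at this
    omega
  -- assemble over ℝ
  have hApat := pattern_card_le (k := k) T S B b u' hST hBT hbT huT hSk hBk hSBne hbB huB
  have hA0 : (0:ℝ) ≤ Nat.card {h : {x // x ∈ T} → Prop // Ap h} := by positivity
  calc (Nat.card {G : SimpleGraph (Fin n) // Qpred k Q S U B b u' G} : ℝ)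
      ≤ (Nat.card {h : {x // x ∈ T} → Prop // Ap h} : ℝ) ^ (n - T.card) *
        2 ^ (Nat.card {p : {q : Fin n × Fin n // q.1 < q.2} // (p.1.1 ∈ T ↔ p.1.2 ∈ T)}) := by
        exact_mod_cast hcard
    _ ≤ ((1 - 9 / (8 * 2 ^ k)) * 2 ^ T.card) ^ (n - T.card) *
        2 ^ (n * (n - 1) / 2 - T.card * (n - T.card)) := by
        apply mul_le_mul
        · exact pow_le_pow_left₀ hA0 hApat _
        · exact pow_le_pow_right₀ (by norm_num) hsame
        · positivity
        · positivity
    _ = (1 - 9 / (8 * 2 ^ k)) ^ (n - T.card) *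
        ((2 ^ T.card) ^ (n - T.card) * 2 ^ (n * (n - 1) / 2 - T.card * (n - T.card))) := by
        rw [mul_pow]; ring
    _ = (1 - 9 / (8 * 2 ^ k)) ^ (n - T.card) * 2 ^ (n * (n - 1) / 2) := by
        congr 1
        rw [← pow_mul, ← pow_add]
        congr 1
        exact Nat.add_sub_cancel' hcrle


lemma master_count {k : ℕ} (hk : 1 ≤ k) (Q : ℕ) :
    (Nat.card {G : SimpleGraph (Fin n) //
        IsKCopWin G k ∧ 1 ≤ deltaK G k ∧ deltaK G k ≤ Q} : ℝ) ≤
      (n.choose k : ℝ) * (∑ q ∈ Finset.range (Q+1), (n.choose q : ℝ)) *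
        (∑ j ∈ Finset.range (k+1), (n.choose j : ℝ)) * n * n *
        ((1 - 9 / (8 * 2 ^ k)) ^ (n - (2*k + 2 + Q)) * 2 ^ (n * (n - 1) / 2)) := by
  classical
  have hβpos : (0:ℝ) < 1 - 9 / (8 * 2 ^ k) := by
    have h2 : (2:ℝ) ≤ 2 ^ k := by
      calc (2:ℝ) = 2 ^ 1 := (pow_one 2).symm
      _ ≤ 2 ^ k := pow_le_pow_right₀ (by norm_num) hk
    have : 9 / (8 * 2 ^ k) ≤ 9 / (16:ℝ) := by
      apply div_le_div_of_nonneg_left (by norm_num) (by norm_num)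
      linarith
    linarith
  have hβle1 : (1 - 9 / (8 * 2 ^ k) : ℝ) ≤ 1 := by
    have : (0:ℝ) ≤ 9 / (8 * 2 ^ k) := by positivity
    linarith
  -- union bound over witnesses
  have hsub : (Finset.univ.filter (fun G : SimpleGraph (Fin n) =>
      IsKCopWin G k ∧ 1 ≤ deltaK G k ∧ deltaK G k ≤ Q)) ⊆
      (Finset.univ : Finset ((Finset (Fin n) × Finset (Fin n) × Finset (Fin n) ×
        Fin n × Fin n))).biUnion (fun w => Finset.univ.filter
          (fun G : SimpleGraph (Fin n) => Qpred k Q w.1 w.2.1 w.2.2.1 w.2.2.2.1 w.2.2.2.2 G)) := by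
    intro G hG
    rw [Finset.mem_filter] at hG
    obtain ⟨-, hwin, hδ, hδQ⟩ := hG
    obtain ⟨S, U, B, b, u', hSk, hU, hUcard, hBk, hSBne, hbB, huB, hEv⟩ :=
      exists_witness G hwin hδ
    rw [Finset.mem_biUnion]
    have hUQ : U.card ≤ Q := by omega
    exact ⟨(S, U, B, b, u'), Finset.mem_univ _, Finset.mem_filter.2 ⟨Finset.mem_univ _,
      hSk, hUQ, hBk, hSBne, hbB, huB, hEv⟩⟩
  have hcard0 : Nat.card {G : SimpleGraph (Fin n) //
      IsKCopWin G k ∧ 1 ≤ deltaK G k ∧ deltaK G k ≤ Q} =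
      (Finset.univ.filter (fun G : SimpleGraph (Fin n) =>
        IsKCopWin G k ∧ 1 ≤ deltaK G k ∧ deltaK G k ≤ Q)).card := by
    rw [Nat.card_eq_fintype_card, Fintype.card_subtype]
  have hterm : ∀ w : Finset (Fin n) × Finset (Fin n) × Finset (Fin n) × Fin n × Fin n,
      (Finset.univ.filter (fun G : SimpleGraph (Fin n) =>
        Qpred k Q w.1 w.2.1 w.2.2.1 w.2.2.2.1 w.2.2.2.2 G)).card =
      Nat.card {G : SimpleGraph (Fin n) // Qpred k Q w.1 w.2.1 w.2.2.1 w.2.2.2.1 w.2.2.2.2 G} := by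
    intro w
    rw [Nat.card_eq_fintype_card, Fintype.card_subtype]
  -- the set of valid witnesses
  set W : Finset (Finset (Fin n) × Finset (Fin n) × Finset (Fin n) × Fin n × Fin n) :=
    Finset.univ.filter (fun w => w.1.card = k ∧ w.2.1.card ≤ Q ∧ w.2.2.1.card ≤ k) with hW
  have hzero : ∀ w ∉ W, Nat.card {G : SimpleGraph (Fin n) //
      Qpred k Q w.1 w.2.1 w.2.2.1 w.2.2.2.1 w.2.2.2.2 G} = 0 := by
    intro w hw
    have : IsEmpty {G : SimpleGraph (Fin n) //
        Qpred k Q w.1 w.2.1 w.2.2.1 w.2.2.2.1 w.2.2.2.2 G} := by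
      constructor
      rintro ⟨G, hSk, hUQ, hBk, -⟩
      exact hw (Finset.mem_filter.2 ⟨Finset.mem_univ _, hSk, hUQ, hBk⟩)
    rw [Nat.card_of_isEmpty]
  -- per-witness uniform bound
  have hmax : ∀ w ∈ W, (Nat.card {G : SimpleGraph (Fin n) //
      Qpred k Q w.1 w.2.1 w.2.2.1 w.2.2.2.1 w.2.2.2.2 G} : ℝ) ≤
      (1 - 9 / (8 * 2 ^ k)) ^ (n - (2*k + 2 + Q)) * 2 ^ (n * (n - 1) / 2) := by
    intro w hw
    rw [hW, Finset.mem_filter] at hw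
    obtain ⟨-, hSk, hUQ, hBk⟩ := hw
    refine le_trans (card_graphs_le hk Q w.1 w.2.1 w.2.2.1 w.2.2.2.1 w.2.2.2.2) ?_
    apply mul_le_mul_of_nonneg_right _ (by positivity)
    apply pow_le_pow_of_le_one hβpos.le hβle1
    apply Nat.sub_le_sub_left
    calc (w.1 ∪ w.2.1 ∪ w.2.2.1 ∪ {w.2.2.2.1, w.2.2.2.2}).card
        ≤ (w.1 ∪ w.2.1 ∪ w.2.2.1).card + ({w.2.2.2.1, w.2.2.2.2} : Finset (Fin n)).card :=
          Finset.card_union_le _ _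
      _ ≤ (w.1 ∪ w.2.1).card + w.2.2.1.card + 2 := by
          have h1 := Finset.card_union_le (w.1 ∪ w.2.1) w.2.2.1
          have h2 : ({w.2.2.2.1, w.2.2.2.2} : Finset (Fin n)).card ≤ 2 := by
            have := Finset.card_insert_le w.2.2.2.1 ({w.2.2.2.2} : Finset (Fin n))
            simpa using this
          omega
      _ ≤ w.1.card + w.2.1.card + w.2.2.1.card + 2 := by
          have := Finset.card_union_le w.1 w.2.1
          omega
      _ ≤ 2*k + 2 + Q := by omega
  -- count of valid witnesses
  have hWcard : (W.card : ℝ) ≤ (n.choose k : ℝ) * (∑ q ∈ Finset.range (Q+1), (n.choose q : ℝ)) *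
      (∑ j ∈ Finset.range (k+1), (n.choose j : ℝ)) * n * n := by
    have hWsub : W ⊆ (Finset.univ.filter (fun s : Finset (Fin n) => s.card = k)) ×ˢ
        ((Finset.univ.filter (fun s : Finset (Fin n) => s.card ≤ Q)) ×ˢ
          ((Finset.univ.filter (fun s : Finset (Fin n) => s.card ≤ k)) ×ˢ
            ((Finset.univ : Finset (Fin n)) ×ˢ (Finset.univ : Finset (Fin n))))) := by
      intro w hw
      rw [hW, Finset.mem_filter] at hw
      obtain ⟨-, h1, h2, h3⟩ := hw
      simp only [Finset.mem_product, Finset.mem_filter, Finset.mem_univ, true_and, and_true]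
      exact ⟨h1, h2, h3⟩
    have h1 : (Finset.univ.filter (fun s : Finset (Fin n) => s.card = k)).card = n.choose k := by
      rw [← Fintype.card_subtype, Fintype.card_finset_len, Fintype.card_fin]
    have h2 : (Finset.univ.filter (fun s : Finset (Fin n) => s.card ≤ Q)).card ≤
        ∑ q ∈ Finset.range (Q+1), n.choose q := by
      have hsub2 : (Finset.univ.filter (fun s : Finset (Fin n) => s.card ≤ Q)) ⊆
          (Finset.range (Q+1)).biUnion (fun q =>
            Finset.univ.filter (fun s : Finset (Fin n) => s.card = q)) := by
        intro s hs
        rw [Finset.mem_filter] at hs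
        rw [Finset.mem_biUnion]
        exact ⟨s.card, Finset.mem_range.2 (by omega), Finset.mem_filter.2 ⟨Finset.mem_univ _, rfl⟩⟩
      refine le_trans (Finset.card_le_card hsub2) (le_trans Finset.card_biUnion_le ?_)
      apply Finset.sum_le_sum
      intro q _
      rw [← Fintype.card_subtype, Fintype.card_finset_len, Fintype.card_fin]
    have h3 : (Finset.univ.filter (fun s : Finset (Fin n) => s.card ≤ k)).card ≤
        ∑ j ∈ Finset.range (k+1), n.choose j := by
      have hsub3 : (Finset.univ.filter (fun s : Finset (Fin n) => s.card ≤ k)) ⊆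
          (Finset.range (k+1)).biUnion (fun q =>
            Finset.univ.filter (fun s : Finset (Fin n) => s.card = q)) := by
        intro s hs
        rw [Finset.mem_filter] at hs
        rw [Finset.mem_biUnion]
        exact ⟨s.card, Finset.mem_range.2 (by omega), Finset.mem_filter.2 ⟨Finset.mem_univ _, rfl⟩⟩
      refine le_trans (Finset.card_le_card hsub3) (le_trans Finset.card_biUnion_le ?_)
      apply Finset.sum_le_sum
      intro q _
      rw [← Fintype.card_subtype, Fintype.card_finset_len, Fintype.card_fin]
    have hcardle := Finset.card_le_card hWsub
    rw [Finset.card_product, Finset.card_product, Finset.card_product, Finset.card_product,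
      h1, Finset.card_univ, Fintype.card_fin] at hcardle
    have hfinal : W.card ≤ n.choose k * (∑ q ∈ Finset.range (Q+1), n.choose q) *
        (∑ j ∈ Finset.range (k+1), n.choose j) * n * n := by
      calc W.card ≤ n.choose k *
          ((Finset.univ.filter (fun s : Finset (Fin n) => s.card ≤ Q)).card *
            ((Finset.univ.filter (fun s : Finset (Fin n) => s.card ≤ k)).card * (n * n))) :=
          hcardle
        _ ≤ n.choose k * ((∑ q ∈ Finset.range (Q+1), n.choose q) *
            ((∑ j ∈ Finset.range (k+1), n.choose j) * (n * n))) := by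
          apply Nat.mul_le_mul_left
          exact Nat.mul_le_mul h2 (Nat.mul_le_mul_right _ h3)
        _ = n.choose k * (∑ q ∈ Finset.range (Q+1), n.choose q) *
            (∑ j ∈ Finset.range (k+1), n.choose j) * n * n := by ring
    exact_mod_cast hfinal
  -- assemble
  have hsum1 : (Finset.univ.filter (fun G : SimpleGraph (Fin n) =>
      IsKCopWin G k ∧ 1 ≤ deltaK G k ∧ deltaK G k ≤ Q)).card ≤
      ∑ w ∈ (Finset.univ : Finset ((Finset (Fin n) × Finset (Fin n) × Finset (Fin n) ×
        Fin n × Fin n))), Nat.card {G : SimpleGraph (Fin n) //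
          Qpred k Q w.1 w.2.1 w.2.2.1 w.2.2.2.1 w.2.2.2.2 G} := by
    refine le_trans (Finset.card_le_card hsub) (le_trans Finset.card_biUnion_le ?_)
    apply Finset.sum_le_sum
    intro w _
    rw [hterm]
  have hsum2 : ∑ w ∈ (Finset.univ : Finset ((Finset (Fin n) × Finset (Fin n) × Finset (Fin n) ×
        Fin n × Fin n))), Nat.card {G : SimpleGraph (Fin n) //
          Qpred k Q w.1 w.2.1 w.2.2.1 w.2.2.2.1 w.2.2.2.2 G} =
      ∑ w ∈ W, Nat.card {G : SimpleGraph (Fin n) //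
          Qpred k Q w.1 w.2.1 w.2.2.1 w.2.2.2.1 w.2.2.2.2 G} :=
    (Finset.sum_subset (Finset.subset_univ W) (fun x _ hx => hzero x hx)).symm
  rw [hcard0]
  calc ((Finset.univ.filter (fun G : SimpleGraph (Fin n) =>
      IsKCopWin G k ∧ 1 ≤ deltaK G k ∧ deltaK G k ≤ Q)).card : ℝ)
      ≤ ∑ w ∈ W, (Nat.card {G : SimpleGraph (Fin n) //
          Qpred k Q w.1 w.2.1 w.2.2.1 w.2.2.2.1 w.2.2.2.2 G} : ℝ) := by
        rw [← Nat.cast_sum]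
        exact_mod_cast le_trans hsum1 (le_of_eq hsum2)
    _ ≤ ∑ _w ∈ W, ((1 - 9 / (8 * 2 ^ k)) ^ (n - (2*k + 2 + Q)) * 2 ^ (n * (n - 1) / 2)) :=
        Finset.sum_le_sum hmax
    _ = (W.card : ℝ) * ((1 - 9 / (8 * 2 ^ k)) ^ (n - (2*k + 2 + Q)) * 2 ^ (n * (n - 1) / 2)) := by
        rw [Finset.sum_const, nsmul_eq_mul]
    _ ≤ (n.choose k : ℝ) * (∑ q ∈ Finset.range (Q+1), (n.choose q : ℝ)) *
        (∑ j ∈ Finset.range (k+1), (n.choose j : ℝ)) * n * n *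
        ((1 - 9 / (8 * 2 ^ k)) ^ (n - (2*k + 2 + Q)) * 2 ^ (n * (n - 1) / 2)) := by
        apply mul_le_mul_of_nonneg_right _ (by positivity)
        refine le_trans hWcard (le_of_eq ?_)
        push_cast
        ring

end Counting

section Analysis

open Real

lemma sum_choose_le (n Q m : ℕ) (hm : 1 ≤ m) (hQn : Q ≤ n) :
    (∑ q ∈ Finset.range (Q+1), (n.choose q : ℝ)) ≤ (1 + (m:ℝ)⁻¹) ^ n * (m:ℝ) ^ Q := by
  set x : ℝ := (m:ℝ)⁻¹ with hx
  have hm0 : (0:ℝ) < m := by exact_mod_cast hm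
  have hx0 : 0 < x := by positivity
  have hx1 : x ≤ 1 := by
    rw [hx, inv_le_one_iff₀]
    right
    exact_mod_cast hm
  have key : (∑ q ∈ Finset.range (Q+1), (n.choose q : ℝ)) * x ^ Q ≤ (x + 1) ^ n := by
    rw [Finset.sum_mul]
    calc ∑ q ∈ Finset.range (Q+1), (n.choose q : ℝ) * x ^ Q
        ≤ ∑ q ∈ Finset.range (Q+1), (n.choose q : ℝ) * x ^ q := by
          apply Finset.sum_le_sum
          intro q hq
          apply mul_le_mul_of_nonneg_left _ (by positivity)
          exact pow_le_pow_of_le_one hx0.le hx1 (by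
            have := Finset.mem_range.1 hq; omega)
      _ ≤ ∑ q ∈ Finset.range (n+1), (n.choose q : ℝ) * x ^ q := by
          apply Finset.sum_le_sum_of_subset_of_nonneg
          · exact Finset.range_subset_range.2 (by omega)
          · intro q _ _
            positivity
      _ = (x + 1) ^ n := by
          rw [add_pow]
          apply Finset.sum_congr rfl
          intro q _
          rw [one_pow, mul_one]
          ring
  have hxm : x ^ Q * (m:ℝ) ^ Q = 1 := by
    rw [← mul_pow, hx, inv_mul_cancel₀ (ne_of_gt hm0), one_pow]
  calc (∑ q ∈ Finset.range (Q+1), (n.choose q : ℝ))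
      = (∑ q ∈ Finset.range (Q+1), (n.choose q : ℝ)) * (x ^ Q * (m:ℝ) ^ Q) := by
        rw [hxm, mul_one]
    _ = ((∑ q ∈ Finset.range (Q+1), (n.choose q : ℝ)) * x ^ Q) * (m:ℝ) ^ Q := by ring
    _ ≤ (x + 1) ^ n * (m:ℝ) ^ Q := by
        apply mul_le_mul_of_nonneg_right key (by positivity)
    _ = (1 + x) ^ n * (m:ℝ) ^ Q := by rw [add_comm]

lemma exists_good_j (g : ℝ) (hg : 0 < g) : ∃ j : ℕ, 1 ≤ j ∧ ((j:ℝ) + 4) / 2 ^ j ≤ g / 2 := by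
  obtain ⟨M₀, hM₀⟩ := exists_nat_ge (8 / g)
  set M : ℕ := max M₀ 2 with hM
  have hM2 : 2 ≤ M := le_max_right _ _
  have hMg : 8 / g ≤ M := le_trans hM₀ (by exact_mod_cast le_max_left _ _)
  refine ⟨4 * M, by omega, ?_⟩
  have hnat : M * (4 * M + 4) ≤ 2 ^ (4 * M) := by
    have h1 : M < 2 ^ M := Nat.lt_two_pow_self
    have h2 : M * M ≤ 2 ^ M * 2 ^ M := Nat.mul_le_mul h1.le h1.le
    have h8 : 8 ≤ 2 ^ (2 * M) := by
      calc (8:ℕ) ≤ 2 ^ 4 := by norm_num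
      _ ≤ 2 ^ (2 * M) := Nat.pow_le_pow_right (by norm_num) (by omega)
    calc M * (4 * M + 4) ≤ 8 * (M * M) := by nlinarith
    _ ≤ 8 * 2 ^ (2 * M) := by
        have : M * M ≤ 2 ^ (2 * M) := by
          calc M * M ≤ 2 ^ M * 2 ^ M := h2
          _ = 2 ^ (2 * M) := by rw [← pow_add]; ring_nf
        omega
    _ ≤ 2 ^ (2 * M) * 2 ^ (2 * M) := Nat.mul_le_mul h8 le_rfl
    _ = 2 ^ (4 * M) := by rw [← pow_add]; ring_nf
  have hM0' : (0:ℝ) < M := by positivity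
  have h2j : (0:ℝ) < 2 ^ (4 * M) := by positivity
  have hstep : ((4 * M : ℕ):ℝ) + 4 ≤ 2 ^ (4 * M) / M := by
    rw [le_div_iff₀ hM0']
    push_cast
    have := hnat
    have hc : ((M * (4 * M + 4) : ℕ) : ℝ) ≤ ((2 ^ (4 * M) : ℕ) : ℝ) := by exact_mod_cast this
    push_cast at hc
    nlinarith
  have h1M : (1:ℝ) / M ≤ g / 2 := by
    rw [div_le_div_iff₀ hM0' (by norm_num)]
    have : 8 ≤ g * M := by
      rw [div_le_iff₀ hg] at hMg
      linarith [hMg]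
    nlinarith
  calc (((4 * M : ℕ):ℝ) + 4) / 2 ^ (4 * M) ≤ (2 ^ (4 * M) / M) / 2 ^ (4 * M) := by
        gcongr
    _ = 1 / M := by field_simp
    _ ≤ g / 2 := h1M

lemma eventually_poly_le (C : ℝ) (d : ℕ) (ε : ℝ) (hε : 0 < ε) :
    ∀ᶠ n : ℕ in Filter.atTop, C * (n:ℝ) ^ d ≤ (2:ℝ) ^ (ε * n) := by
  set c : ℝ := ε * Real.log 2 with hc
  have hc0 : 0 < c := by
    apply mul_pos hε
    exact Real.log_pos (by norm_num)
  set C' : ℝ := max C 1 with hC'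
  have hC'0 : (0:ℝ) < C' := lt_of_lt_of_le one_pos (le_max_right _ _)
  have htend : Filter.Tendsto (fun nn : ℕ => (c * nn) ^ d * Real.exp (-(c * nn)))
      Filter.atTop (nhds 0) := by
    apply (Real.tendsto_pow_mul_exp_neg_atTop_nhds_zero d).comp
    exact Filter.Tendsto.const_mul_atTop hc0 tendsto_natCast_atTop_atTop
  have hev := htend.eventually_lt_const (show (0:ℝ) < c ^ d / C' by positivity)
  filter_upwards [hev] with nn hnn
  have hnn' : (c * nn) ^ d * Real.exp (-(c * nn)) < c ^ d / C' := hnn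
  have hexp : (0:ℝ) < Real.exp (c * nn) := Real.exp_pos _
  have hcd : (0:ℝ) < c ^ d := by positivity
  have key : C' * (nn:ℝ) ^ d ≤ Real.exp (c * nn) := by
    rw [mul_pow] at hnn'
    rw [Real.exp_neg] at hnn'
    have hnn2 : c ^ d * ((nn:ℝ) ^ d * (Real.exp (c * nn))⁻¹) < c ^ d / C' := by
      calc c ^ d * ((nn:ℝ) ^ d * (Real.exp (c * nn))⁻¹)
          = c ^ d * (nn:ℝ) ^ d * (Real.exp (c * nn))⁻¹ := by ring
        _ < c ^ d / C' := hnn'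
    have hnn3 : (nn:ℝ) ^ d * (Real.exp (c * nn))⁻¹ < 1 / C' := by
      have := (mul_lt_mul_iff_right₀ hcd).1 (by
        calc c ^ d * ((nn:ℝ) ^ d * (Real.exp (c * nn))⁻¹) < c ^ d / C' := hnn2
        _ = c ^ d * (1 / C') := by ring)
      exact this
    rw [mul_inv_lt_iff₀ hexp, one_div, inv_mul_eq_div] at hnn3
    rw [div_eq_mul_inv] at hnn3
    have hCinv : C' * C'⁻¹ = 1 := mul_inv_cancel₀ (ne_of_gt hC'0)
    nlinarith [hnn3, hexp, hC'0, hCinv]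
  calc C * (nn:ℝ) ^ d ≤ C' * (nn:ℝ) ^ d := by
        apply mul_le_mul_of_nonneg_right (le_max_left _ _) (by positivity)
    _ ≤ Real.exp (c * nn) := key
    _ = (2:ℝ) ^ (ε * nn) := by
        rw [Real.rpow_def_of_pos (by norm_num)]
        congr 1
        rw [hc]
        ring

end Analysis
end CopCount

open CopCount

/-- Theorem (a): there are `ξ, ε > 0` such that for all large `n`, the number of labelled
`k`-cop-win graphs on `{1,…,n}` with `1 ≤ δ_k ≤ ξn` is at most
`2^{(log₂(1-2^{-k}) - ε) n} · 2^{n(n-1)/2}`. -/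

theorem kCopWin_small_deltaK_count (k : ℕ) (hk : 1 ≤ k) :
    ∃ ξ ε : ℝ, 0 < ξ ∧ 0 < ε ∧
      ∀ᶠ n : ℕ in atTop,
        (Nat.card {G : SimpleGraph (Fin n) //
            IsKCopWin G k ∧ 1 ≤ deltaK G k ∧ (deltaK G k : ℝ) ≤ ξ * n} : ℝ) ≤
          2 ^ ((Real.logb 2 (1 - 2 ^ (-(k : ℝ))) - ε) * n) * 2 ^ (n * (n - 1) / 2) := by
  classical
  have h2k1 : (2:ℝ) ≤ 2 ^ k := by
    calc (2:ℝ) = 2 ^ 1 := (pow_one 2).symm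
    _ ≤ 2 ^ k := pow_le_pow_right₀ (by norm_num) hk
  have h2kpos : (0:ℝ) < 2 ^ k := by positivity
  set α : ℝ := 1 - ((2:ℝ) ^ k)⁻¹ with hα
  set β : ℝ := 1 - 9 / (8 * 2 ^ k) with hβ
  have hβ14 : (1/4 : ℝ) ≤ β := by
    rw [hβ]
    have : 9 / (8 * 2 ^ k) ≤ 9 / (16:ℝ) := by
      apply div_le_div_of_nonneg_left (by norm_num) (by norm_num)
      linarith
    linarith
  have hβpos : (0:ℝ) < β := lt_of_lt_of_le (by norm_num) hβ14
  have hβlt1 : β < 1 := by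
    rw [hβ]
    have : (0:ℝ) < 9 / (8 * 2 ^ k) := by positivity
    linarith
  have hαβ : β < α := by
    have h1 : ((2:ℝ) ^ k)⁻¹ < 9 / (8 * 2 ^ k) := by
      rw [inv_eq_one_div, div_lt_div_iff₀ h2kpos (by positivity)]
      nlinarith [h2kpos]
    rw [hβ, hα]
    linarith
  have hαpos : (0:ℝ) < α := lt_trans hβpos hαβ
  set L : ℝ := Real.logb 2 α with hL
  set g : ℝ := L - Real.logb 2 β with hgdef
  have hgpos : 0 < g := by
    rw [hgdef, hL, sub_pos]
    exact Real.logb_lt_logb (by norm_num) hβpos hαβ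
  obtain ⟨j, hj1, hjg⟩ := exists_good_j g hgpos
  set m : ℕ := 2 ^ j with hm
  have hm1 : 1 ≤ m := Nat.one_le_two_pow
  have hm2 : 2 ≤ m := by
    rw [hm]
    calc 2 = 2 ^ 1 := (pow_one 2).symm
    _ ≤ 2 ^ j := Nat.pow_le_pow_right (by norm_num) hj1
  have hmR : ((m:ℕ):ℝ) = 2 ^ j := by
    rw [hm]; push_cast; ring
  have hmRpos : (0:ℝ) < m := by positivity
  set ξ : ℝ := ((m:ℕ):ℝ)⁻¹ with hξ
  have hξpos : 0 < ξ := by positivity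
  set ε : ℝ := g / 4 with hε
  have hεpos : 0 < ε := by positivity
  refine ⟨ξ, ε, hξpos, hεpos, ?_⟩
  -- the base of the exponential bound
  have hmβpos : (0:ℝ) < (m:ℝ) / β := by positivity
  have hmβ1 : (1:ℝ) ≤ (m:ℝ) / β := by
    rw [le_div_iff₀ hβpos, one_mul]
    calc β ≤ 1 := hβlt1.le
    _ ≤ (m:ℝ) := by exact_mod_cast hm1
  set Z : ℝ := (1 + ξ) * (((m:ℝ) / β) ^ ξ) * β with hZdef
  have hrppos : (0:ℝ) < ((m:ℝ) / β) ^ ξ := Real.rpow_pos_of_pos hmβpos ξ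
  have hZpos : 0 < Z := by
    rw [hZdef]
    have : (0:ℝ) < 1 + ξ := by positivity
    positivity
  have hlog2 : (1/2 : ℝ) < Real.log 2 := by
    have := Real.log_two_gt_d9
    linarith
  have hlog2pos : (0:ℝ) < Real.log 2 := by linarith
  have hlogZ : Real.logb 2 Z ≤ L - 2 * ε := by
    have e1 : Real.logb 2 Z = Real.logb 2 (1 + ξ) + Real.logb 2 (((m:ℝ) / β) ^ ξ)
        + Real.logb 2 β := by
      rw [hZdef, Real.logb_mul (by positivity) (ne_of_gt hβpos),
        Real.logb_mul (by positivity) (ne_of_gt hrppos)]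
    have e2 : Real.logb 2 (((m:ℝ) / β) ^ ξ) = ξ * Real.logb 2 ((m:ℝ) / β) := by
      rw [Real.logb, Real.logb, Real.log_rpow hmβpos]
      ring
    have e3 : Real.logb 2 ((m:ℝ) / β) = (j:ℝ) - Real.logb 2 β := by
      rw [Real.logb_div (ne_of_gt hmRpos) (ne_of_gt hβpos)]
      congr 1
      rw [hmR, Real.logb_pow, Real.logb_self_eq_one (by norm_num)]
      ring
    have e4 : Real.logb 2 (1 + ξ) ≤ 2 * ξ := by
      rw [Real.logb, div_le_iff₀ hlog2pos]
      have h5 : Real.log (1 + ξ) ≤ ξ := by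
        have := Real.log_le_sub_one_of_pos (show (0:ℝ) < 1 + ξ by positivity)
        linarith
      nlinarith [hξpos]
    have e5 : - Real.logb 2 β ≤ 2 := by
      have h6 : Real.logb 2 (1/4 : ℝ) ≤ Real.logb 2 β :=
        Real.logb_le_logb_of_le (by norm_num) (by norm_num) hβ14
      have h7 : Real.logb 2 (1/4 : ℝ) = -2 := by
        have h14 : (2:ℝ) ^ (-2 : ℝ) = 1/4 := by
          have h4 : (2:ℝ) ^ ((2:ℕ):ℝ) = 4 := by
            rw [Real.rpow_natCast]; norm_num
          rw [show (-2:ℝ) = -((2:ℕ):ℝ) by norm_num, Real.rpow_neg (by norm_num), h4]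
          norm_num
        rw [← h14, Real.logb_rpow (by norm_num) (by norm_num)]
      linarith
    have e6 : ξ * ((j:ℝ) + 4) ≤ g / 2 := by
      have : ξ * ((j:ℝ) + 4) = ((j:ℝ) + 4) / 2 ^ j := by
        rw [hξ, hmR]
        ring
      rw [this]
      exact hjg
    calc Real.logb 2 Z = Real.logb 2 (1 + ξ) + ξ * ((j:ℝ) - Real.logb 2 β)
        + Real.logb 2 β := by rw [e1, e2, e3]
      _ ≤ 2 * ξ + ξ * ((j:ℝ) + 2) + Real.logb 2 β := by
          have : ξ * ((j:ℝ) - Real.logb 2 β) ≤ ξ * ((j:ℝ) + 2) := by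
            apply mul_le_mul_of_nonneg_left _ hξpos.le
            linarith
          linarith
      _ = ξ * ((j:ℝ) + 4) + Real.logb 2 β := by ring
      _ ≤ g / 2 + Real.logb 2 β := by linarith
      _ = L - g / 2 := by rw [hgdef]; ring
      _ = L - 2 * ε := by rw [hε]; ring
  have hZle : Z ≤ (2:ℝ) ^ (L - 2*ε) := by
    calc Z = (2:ℝ) ^ Real.logb 2 Z :=
          (Real.rpow_logb (by norm_num) (by norm_num) hZpos).symm
      _ ≤ (2:ℝ) ^ (L - 2*ε) := Real.rpow_le_rpow_of_exponent_le (by norm_num) hlogZ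
  -- eventual statements
  set C₂ : ℝ := ((k:ℝ) + 1) * (β ^ (2*k+2))⁻¹ with hC₂
  have hC₂pos : 0 < C₂ := by positivity
  have hev1 := eventually_poly_le C₂ (2*k+2) ε hεpos
  have hev2 : ∀ᶠ n : ℕ in atTop, 2*k + 2 + n / m ≤ n := by
    rw [Filter.eventually_atTop]
    refine ⟨4*k + 8, fun n hn => ?_⟩
    have h1 : n / m ≤ n / 2 := Nat.div_le_div_left hm2 (by norm_num)
    omega
  have hev3 : ∀ᶠ n : ℕ in atTop, 1 ≤ n := Filter.eventually_atTop.2 ⟨1, fun n h => h⟩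
  filter_upwards [hev1, hev2, hev3] with n hpoly hQn hn1
  set Q : ℕ := n / m with hQ
  -- pass to the integer threshold set
  have hsub : Nat.card {G : SimpleGraph (Fin n) //
      IsKCopWin G k ∧ 1 ≤ deltaK G k ∧ (deltaK G k : ℝ) ≤ ξ * n} ≤
      Nat.card {G : SimpleGraph (Fin n) //
        IsKCopWin G k ∧ 1 ≤ deltaK G k ∧ deltaK G k ≤ Q} := by
    have hmap : ∀ Gh : {G : SimpleGraph (Fin n) //
        IsKCopWin G k ∧ 1 ≤ deltaK G k ∧ (deltaK G k : ℝ) ≤ ξ * n},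
        deltaK Gh.1 k ≤ Q := by
      intro Gh
      have hle : (deltaK Gh.1 k : ℝ) ≤ (n:ℝ) / (m:ℕ) := by
        calc (deltaK Gh.1 k : ℝ) ≤ ξ * n := Gh.2.2.2
        _ = (n:ℝ) / (m:ℕ) := by rw [hξ]; ring
      have h2 := Nat.le_floor hle
      rwa [Nat.floor_div_natCast, Nat.floor_natCast] at h2
    apply Nat.card_le_card_of_injective
      (fun Gh => ⟨Gh.1, Gh.2.1, Gh.2.2.1, hmap Gh⟩)
    intro a b hab
    exact Subtype.ext (by simpa using congrArg Subtype.val hab)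
  have hmaster := master_count (n := n) hk Q
  -- bound the pieces of the master estimate
  have hn1R : (1:ℝ) ≤ n := by exact_mod_cast hn1
  have hnpos : (0:ℝ) < n := by linarith
  have hchoosek : ((n.choose k : ℕ) : ℝ) ≤ (n:ℝ) ^ k := by
    exact_mod_cast Nat.choose_le_pow n k
  have hSu : (∑ q ∈ Finset.range (Q+1), (n.choose q : ℝ)) ≤ (1 + ξ) ^ n * (m:ℝ) ^ Q := by
    rw [hξ]
    exact sum_choose_le n Q m hm1 (Nat.div_le_self n m)
  have hSb : (∑ j' ∈ Finset.range (k+1), (n.choose j' : ℝ)) ≤ ((k:ℝ) + 1) * (n:ℝ) ^ k := by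
    calc (∑ j' ∈ Finset.range (k+1), (n.choose j' : ℝ))
        ≤ ∑ j' ∈ Finset.range (k+1), (n:ℝ) ^ k := by
          apply Finset.sum_le_sum
          intro q hq
          have h1 : (n.choose q : ℝ) ≤ (n:ℝ) ^ q := by exact_mod_cast Nat.choose_le_pow n q
          have h2 : (n:ℝ) ^ q ≤ (n:ℝ) ^ k := by
            apply pow_le_pow_right₀ hn1R
            have := Finset.mem_range.1 hq; omega
          linarith
      _ = ((k:ℝ) + 1) * (n:ℝ) ^ k := by
          rw [Finset.sum_const, Finset.card_range, nsmul_eq_mul]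
          push_cast; ring
  have hβsplit : (β : ℝ) ^ (n - (2*k + 2 + Q)) =
      β ^ n * (β ^ (2*k+2))⁻¹ * (β ^ Q)⁻¹ := by
    rw [pow_sub₀ β (ne_of_gt hβpos) hQn]
    rw [pow_add]
    rw [mul_inv]
    ring
  have hmQβ : (m:ℝ) ^ Q * (β ^ Q)⁻¹ ≤ (((m:ℝ) / β) ^ ξ) ^ n := by
    have h1 : (m:ℝ) ^ Q * (β ^ Q)⁻¹ = ((m:ℝ) / β) ^ Q := by
      rw [div_pow]; ring
    have h2 : ((m:ℝ) / β) ^ Q = ((m:ℝ) / β) ^ ((Q:ℕ):ℝ) := (Real.rpow_natCast _ Q).symm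
    have h3 : ((m:ℝ) / β) ^ ((Q:ℕ):ℝ) ≤ ((m:ℝ) / β) ^ (ξ * n) := by
      apply Real.rpow_le_rpow_of_exponent_le hmβ1
      have h4 : ((Q:ℕ):ℝ) ≤ (n:ℝ) / (m:ℕ) := by
        rw [hQ]
        exact Nat.cast_div_le
      rw [hξ]
      calc ((Q:ℕ):ℝ) ≤ (n:ℝ) / (m:ℕ) := h4
      _ = ((m:ℕ):ℝ)⁻¹ * n := by ring
    have h5 : ((m:ℝ) / β) ^ (ξ * n) = (((m:ℝ) / β) ^ ξ) ^ n := by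
      rw [Real.rpow_mul hmβpos.le, Real.rpow_natCast]
    rw [h1, h2]
    rw [h5] at h3
    exact h3
  have hNnonneg : (0:ℝ) ≤ 2 ^ (n * (n-1) / 2) := by positivity
  -- assemble
  have hchain : (Nat.card {G : SimpleGraph (Fin n) //
      IsKCopWin G k ∧ 1 ≤ deltaK G k ∧ deltaK G k ≤ Q} : ℝ) ≤
      C₂ * (n:ℝ) ^ (2*k+2) * Z ^ n * 2 ^ (n * (n-1) / 2) := by
    refine le_trans hmaster ?_
    rw [hβsplit]
    have hstep : ((n.choose k : ℕ) : ℝ) * (∑ q ∈ Finset.range (Q+1), (n.choose q : ℝ)) *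
        (∑ j' ∈ Finset.range (k+1), (n.choose j' : ℝ)) * n * n *
        ((β ^ n * (β ^ (2*k+2))⁻¹ * (β ^ Q)⁻¹) * 2 ^ (n * (n-1) / 2)) ≤
        ((n:ℝ) ^ k) * ((1 + ξ) ^ n * (m:ℝ) ^ Q) * (((k:ℝ) + 1) * (n:ℝ) ^ k) * n * n *
        ((β ^ n * (β ^ (2*k+2))⁻¹ * (β ^ Q)⁻¹) * 2 ^ (n * (n-1) / 2)) := by
      have hfac : (0:ℝ) ≤ (β ^ n * (β ^ (2*k+2))⁻¹ * (β ^ Q)⁻¹) * 2 ^ (n * (n-1) / 2) := by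
        positivity
      apply mul_le_mul_of_nonneg_right _ hfac
      have c1 : (0:ℝ) ≤ ∑ q ∈ Finset.range (Q+1), (n.choose q : ℝ) := by positivity
      have c2 : (0:ℝ) ≤ ∑ j' ∈ Finset.range (k+1), (n.choose j' : ℝ) := by positivity
      apply mul_le_mul_of_nonneg_right _ hnpos.le
      apply mul_le_mul_of_nonneg_right _ hnpos.le
      apply mul_le_mul
      · apply mul_le_mul hchoosek hSu c1 (by positivity)
      · exact hSb
      · exact c2
      · positivity
    refine le_trans hstep ?_
    have hrw : ((n:ℝ) ^ k) * ((1 + ξ) ^ n * (m:ℝ) ^ Q) * (((k:ℝ) + 1) * (n:ℝ) ^ k) * n * n *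
        ((β ^ n * (β ^ (2*k+2))⁻¹ * (β ^ Q)⁻¹) * 2 ^ (n * (n-1) / 2)) =
        C₂ * (n:ℝ) ^ (2*k+2) * ((1 + ξ) ^ n * ((m:ℝ) ^ Q * (β ^ Q)⁻¹) * β ^ n) *
          2 ^ (n * (n-1) / 2) := by
      rw [hC₂]
      ring
    rw [hrw]
    have hmono : (1 + ξ) ^ n * ((m:ℝ) ^ Q * (β ^ Q)⁻¹) * β ^ n ≤
        (1 + ξ) ^ n * ((((m:ℝ) / β) ^ ξ) ^ n) * β ^ n := by
      apply mul_le_mul_of_nonneg_right _ (by positivity)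
      apply mul_le_mul_of_nonneg_left hmQβ (by positivity)
    have hZn : (1 + ξ) ^ n * ((((m:ℝ) / β) ^ ξ) ^ n) * β ^ n = Z ^ n := by
      rw [hZdef, mul_pow, mul_pow]
    calc C₂ * (n:ℝ) ^ (2*k+2) * ((1 + ξ) ^ n * ((m:ℝ) ^ Q * (β ^ Q)⁻¹) * β ^ n) *
          2 ^ (n * (n-1) / 2)
        ≤ C₂ * (n:ℝ) ^ (2*k+2) * ((1 + ξ) ^ n * ((((m:ℝ) / β) ^ ξ) ^ n) * β ^ n) *
          2 ^ (n * (n-1) / 2) := by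
          apply mul_le_mul_of_nonneg_right _ hNnonneg
          apply mul_le_mul_of_nonneg_left hmono (by positivity)
      _ = C₂ * (n:ℝ) ^ (2*k+2) * Z ^ n * 2 ^ (n * (n-1) / 2) := by rw [hZn]
  -- final combination
  have hZnle : Z ^ n ≤ ((2:ℝ) ^ (L - 2*ε)) ^ n := pow_le_pow_left₀ hZpos.le hZle n
  have h2L : (0:ℝ) < (2:ℝ) ^ (L - 2*ε) := Real.rpow_pos_of_pos (by norm_num) _
  have hαmatch : (1 : ℝ) - 2 ^ (-(k : ℝ)) = α := by
    rw [hα]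
    congr 1
    rw [Real.rpow_neg (by norm_num), Real.rpow_natCast]
  calc (Nat.card {G : SimpleGraph (Fin n) //
      IsKCopWin G k ∧ 1 ≤ deltaK G k ∧ (deltaK G k : ℝ) ≤ ξ * n} : ℝ)
      ≤ (Nat.card {G : SimpleGraph (Fin n) //
        IsKCopWin G k ∧ 1 ≤ deltaK G k ∧ deltaK G k ≤ Q} : ℝ) := by exact_mod_cast hsub
    _ ≤ C₂ * (n:ℝ) ^ (2*k+2) * Z ^ n * 2 ^ (n * (n-1) / 2) := hchain
    _ ≤ (2:ℝ) ^ (ε * n) * ((2:ℝ) ^ (L - 2*ε)) ^ n * 2 ^ (n * (n-1) / 2) := by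
        apply mul_le_mul_of_nonneg_right _ hNnonneg
        apply mul_le_mul hpoly hZnle (by positivity) (by positivity)
    _ = (2:ℝ) ^ ((Real.logb 2 (1 - 2 ^ (-(k : ℝ))) - ε) * n) * 2 ^ (n * (n-1) / 2) := by
        congr 1
        rw [← Real.rpow_natCast ((2:ℝ) ^ (L - 2*ε)) n, ← Real.rpow_mul (by norm_num),
          ← Real.rpow_add (by norm_num)]
        congr 1
        rw [hαmatch, ← hL]
        ring
end
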